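/- arXiv:0805.0447 — 10 statements merged into one kernel-verified Lean document; each statement's English description precedes it below -/
import Mathlib

section
/- For independent nonnegative random variables X_1,...,X_n with finite means, if M_i denotes the expected value of the maximum of n independent copies of X_i, then E[max(X_1,...,X_n)] ≥ (M_1 + ... + M_n)/n. -/
open MeasureTheory ProbabilityTheory Set
open scoped ENNReal NNReal

/-- AM-GM: `n * ∏ bᵢ ≤ ∑ bᵢ ^ n` for nonnegative reals. -/
lemma amgm_pow {n : ℕ} (hn : 0 < n) (b : Fin n → ℝ) (h0 : ∀ i, 0 ≤ b i) :
    (n : ℝ) * ∏ i, b i ≤ ∑ i, b i ^ n := by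
  have hn' : (n : ℝ) ≠ 0 := Nat.cast_ne_zero.2 hn.ne'
  have hw : ∀ i ∈ (Finset.univ : Finset (Fin n)), (0:ℝ) ≤ (n:ℝ)⁻¹ := fun _ _ => by positivity
  have hw' : ∑ _i : Fin n, (n:ℝ)⁻¹ = 1 := by
    simp only [Finset.sum_const, Finset.card_univ, Fintype.card_fin, nsmul_eq_mul]
    exact mul_inv_cancel₀ hn'
  have hz : ∀ i ∈ (Finset.univ : Finset (Fin n)), (0:ℝ) ≤ b i ^ n := fun i _ => pow_nonneg (h0 i) n
  have key := Real.geom_mean_le_arith_mean_weighted Finset.univ (fun _ => (n:ℝ)⁻¹)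
    (fun i => b i ^ n) hw hw' hz
  have hprod : ∏ i, (b i ^ n) ^ ((n:ℝ)⁻¹) = ∏ i, b i := by
    refine Finset.prod_congr rfl fun i _ => ?_
    rw [← Real.rpow_natCast (b i) n, ← Real.rpow_mul (h0 i),
      mul_inv_cancel₀ hn', Real.rpow_one]
  rw [hprod] at key
  calc (n:ℝ) * ∏ i, b i ≤ (n:ℝ) * ∑ i, (n:ℝ)⁻¹ * b i ^ n :=
        mul_le_mul_of_nonneg_left key (by positivity)
    _ = ∑ i, b i ^ n := by
        rw [← Finset.mul_sum, ← mul_assoc, mul_inv_cancel₀ hn', one_mul]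

lemma key_real {n : ℕ} (hn : 0 < n) (b : Fin n → ℝ) (h0 : ∀ i, 0 ≤ b i)
    (h1 : ∀ i, b i ≤ 1) :
    ∑ i, (1 - b i ^ n) ≤ (n : ℝ) * (1 - ∏ i, b i) := by
  have h1' : ∑ i, (1 - b i ^ n) = (n : ℝ) - ∑ i, b i ^ n := by
    rw [Finset.sum_sub_distrib]
    simp [Finset.sum_const, Finset.card_univ]
  have h2' : (n : ℝ) * (1 - ∏ i, b i) = (n : ℝ) - (n : ℝ) * ∏ i, b i := by ring
  rw [h1', h2']
  exact sub_le_sub_left (amgm_pow hn b h0) _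

lemma key_ennreal {n : ℕ} (hn : 0 < n) (a : Fin n → ℝ≥0∞) (h1 : ∀ i, a i ≤ 1) :
    ∑ i, (1 - a i ^ n) ≤ (n : ℝ≥0∞) * (1 - ∏ i, a i) := by
  have hfin : ∀ i, a i ≠ ∞ := fun i => (lt_of_le_of_lt (h1 i) ENNReal.one_lt_top).ne
  have hpow1 : ∀ i, a i ^ n ≤ 1 := fun i => pow_le_one' (h1 i) n
  have hprod1 : ∏ i, a i ≤ 1 :=
    Finset.prod_le_one (fun i _ => zero_le) (fun i _ => h1 i)
  have hLfin : (∑ i, (1 - a i ^ n)) ≠ ∞ := by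
    rw [← lt_top_iff_ne_top, ENNReal.sum_lt_top]
    exact fun i _ => lt_of_le_of_lt (tsub_le_self.trans le_rfl) ENNReal.one_lt_top
  have hRfin : (n : ℝ≥0∞) * (1 - ∏ i, a i) ≠ ∞ :=
    ENNReal.mul_ne_top (ENNReal.natCast_ne_top n)
      (lt_of_le_of_lt tsub_le_self ENNReal.one_lt_top).ne
  rw [← ENNReal.toReal_le_toReal hLfin hRfin]
  have hb0 : ∀ i, 0 ≤ (a i).toReal := fun i => ENNReal.toReal_nonneg
  have hb1 : ∀ i, (a i).toReal ≤ 1 := fun i => by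
    simpa using ENNReal.toReal_mono ENNReal.one_ne_top (h1 i)
  have hL : (∑ i, (1 - a i ^ n)).toReal = ∑ i, (1 - (a i).toReal ^ n) := by
    rw [ENNReal.toReal_sum (fun i _ =>
      (lt_of_le_of_lt tsub_le_self ENNReal.one_lt_top).ne)]
    refine Finset.sum_congr rfl fun i _ => ?_
    rw [ENNReal.toReal_sub_of_le (hpow1 i) ENNReal.one_ne_top, ENNReal.toReal_one,
      ENNReal.toReal_pow]
  have hR : ((n : ℝ≥0∞) * (1 - ∏ i, a i)).toReal
      = (n : ℝ) * (1 - ∏ i, (a i).toReal) := by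
    rw [ENNReal.toReal_mul, ENNReal.toReal_natCast,
      ENNReal.toReal_sub_of_le hprod1 ENNReal.one_ne_top, ENNReal.toReal_one,
      ENNReal.toReal_prod]
  rw [hL, hR]
  exact key_real hn _ hb0 hb1

theorem stmt_0 {Ω : Type*} [MeasurableSpace Ω] (P : Measure Ω) [IsProbabilityMeasure P]
    (n : ℕ) (hn : 0 < n) (X : Fin n → Ω → ℝ)
    (hmeas : ∀ i, Measurable (X i))
    (hnonneg : ∀ i ω, 0 ≤ X i ω)
    (hint : ∀ i, Integrable (X i) P)
    (hindep : iIndepFun X P)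
    (M : Fin n → ℝ)
    (hM : ∀ i, M i =
      ∫ v, (⨆ j, v j) ∂(Measure.pi fun _ : Fin n => Measure.map (X i) P)) :
    (∑ i, M i) / n ≤ ∫ ω, ⨆ i, X i ω ∂P := by
  have hne : Nonempty (Fin n) := ⟨⟨0, hn⟩⟩
  set μ : Fin n → Measure ℝ := fun i => Measure.map (X i) P with hμ
  have hprob : ∀ i, IsProbabilityMeasure (μ i) := fun i =>
    Measure.isProbabilityMeasure_map (hmeas i).aemeasurable
  set π : Fin n → Measure (Fin n → ℝ) := fun i => Measure.pi fun _ : Fin n => μ i with hπ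
  have hπprob : ∀ i, IsProbabilityMeasure (π i) := fun i => by
    have := hprob i; exact inferInstance
  -- sup on Ω
  have hbdd : ∀ ω, BddAbove (range fun i => X i ω) := fun ω =>
    (Set.finite_range _).bddAbove
  have hsupmeas : Measurable fun ω => ⨆ i, X i ω := Measurable.iSup hmeas
  have hsupnn : ∀ ω, 0 ≤ ⨆ i, X i ω := fun ω =>
    le_ciSup_of_le (hbdd ω) ⟨0, hn⟩ (hnonneg _ ω)
  have hsupint : Integrable (fun ω => ⨆ i, X i ω) P := by
    refine Integrable.mono' (integrable_finset_sum Finset.univ fun i _ => hint i)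
      hsupmeas.aestronglyMeasurable ?_
    filter_upwards with ω
    rw [Real.norm_of_nonneg (hsupnn ω)]
    exact ciSup_le fun i =>
      Finset.single_le_sum (fun j _ => hnonneg j ω) (Finset.mem_univ i)
  -- sup on pi space
  have hpibdd : ∀ v : Fin n → ℝ, BddAbove (range v) := fun v =>
    (Set.finite_range _).bddAbove
  have hpi_meas : Measurable fun v : Fin n → ℝ => ⨆ j, v j :=
    Measurable.iSup fun j => measurable_pi_apply j
  have hpinn : ∀ i, ∀ᵐ v ∂(π i), 0 ≤ ⨆ j, v j := by
    intro i
    have hcoord : ∀ j : Fin n, ∀ᵐ v ∂(π i), 0 ≤ v j := by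
      intro j
      have h0 : μ i (Iio 0) = 0 := by
        rw [hμ, Measure.map_apply (hmeas i) measurableSet_Iio]
        have : X i ⁻¹' Iio 0 = ∅ := by
          ext ω; simp [not_lt.2 (hnonneg i ω)]
        rw [this, measure_empty]
      have := hprob i
      have hnull : π i (Function.eval j ⁻¹' Iio 0) = 0 :=
        Measure.pi_eval_preimage_null (μ := fun _ : Fin n => μ i) h0
      rw [ae_iff]
      convert hnull using 2
      ext v; simp [Function.eval, not_le]
    filter_upwards [ae_all_iff.2 hcoord] with v hv
    exact le_ciSup_of_le (hpibdd v) ⟨0, hn⟩ (hv ⟨0, hn⟩)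
  -- Lebesgue integrals
  set L : ℝ≥0∞ := ∫⁻ ω, ENNReal.ofReal (⨆ i, X i ω) ∂P with hL
  set Li : Fin n → ℝ≥0∞ := fun i => ∫⁻ v, ENNReal.ofReal (⨆ j, v j) ∂(π i) with hLi
  have hLfin : L ≠ ∞ := hsupint.lintegral_lt_top.ne
  have hMi : ∀ i, M i = (Li i).toReal := fun i => by
    rw [hM i,
      integral_eq_lintegral_of_nonneg_ae (hpinn i) hpi_meas.aestronglyMeasurable]
  have hEq : ∫ ω, ⨆ i, X i ω ∂P = L.toReal :=
    integral_eq_lintegral_of_nonneg_ae (Filter.Eventually.of_forall hsupnn)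
      hsupmeas.aestronglyMeasurable
  -- layercake
  have hlayer : ∀ i, Li i = ∫⁻ t in Ioi (0:ℝ), π i {v | t < ⨆ j, v j} := fun i =>
    lintegral_eq_lintegral_meas_lt _ (hpinn i) hpi_meas.aemeasurable
  have hlayer0 : L = ∫⁻ t in Ioi (0:ℝ), P {ω | t < ⨆ i, X i ω} :=
    lintegral_eq_lintegral_meas_lt P (Filter.Eventually.of_forall hsupnn)
      hsupmeas.aemeasurable
  -- survival function computations
  have hSi : ∀ i (t : ℝ), π i {v | t < ⨆ j, v j} = 1 - (μ i (Iic t)) ^ n := by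
    intro i t
    have := hπprob i
    have hcompl : {v : Fin n → ℝ | t < ⨆ j, v j} = {v : Fin n → ℝ | ⨆ j, v j ≤ t}ᶜ := by
      ext v; simp [not_le]
    have hset : {v : Fin n → ℝ | ⨆ j, v j ≤ t} = Set.pi univ (fun _ : Fin n => Iic t) := by
      ext v
      simp only [mem_setOf_eq, mem_pi, mem_univ, forall_true_left, mem_Iic]
      exact ciSup_le_iff (hpibdd v)
    have hmsle : MeasurableSet {v : Fin n → ℝ | ⨆ j, v j ≤ t} :=
      measurableSet_le hpi_meas measurable_const
    rw [hcompl, prob_compl_eq_one_sub hmsle, hset, Measure.pi_pi]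
    simp [Finset.prod_const, Finset.card_univ]
  have hS : ∀ t : ℝ, P {ω | t < ⨆ i, X i ω} = 1 - ∏ i, μ i (Iic t) := by
    intro t
    have hcompl : {ω | t < ⨆ i, X i ω} = {ω | ⨆ i, X i ω ≤ t}ᶜ := by
      ext ω; simp [not_le]
    have hset : {ω | ⨆ i, X i ω ≤ t} = ⋂ i, X i ⁻¹' Iic t := by
      ext ω
      simp only [mem_setOf_eq, mem_iInter, mem_preimage, mem_Iic]
      exact ciSup_le_iff (hbdd ω)
    have hmsle : MeasurableSet {ω | ⨆ i, X i ω ≤ t} :=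
      measurableSet_le hsupmeas measurable_const
    have hInter : P (⋂ i, X i ⁻¹' Iic t) = ∏ i, P (X i ⁻¹' Iic t) :=
      hindep.meas_iInter fun i => ⟨Iic t, measurableSet_Iic, rfl⟩
    rw [hcompl, prob_compl_eq_one_sub hmsle, hset, hInter]
    congr 1
    refine Finset.prod_congr rfl fun i _ => ?_
    rw [hμ, Measure.map_apply (hmeas i) measurableSet_Iic]
  -- pointwise inequality
  have hpt : ∀ t : ℝ, ∑ i, π i {v | t < ⨆ j, v j}
      ≤ (n : ℝ≥0∞) * P {ω | t < ⨆ i, X i ω} := by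
    intro t
    rw [hS t]
    calc ∑ i, π i {v | t < ⨆ j, v j} = ∑ i, (1 - (μ i (Iic t)) ^ n) := by
          exact Finset.sum_congr rfl fun i _ => hSi i t
      _ ≤ (n : ℝ≥0∞) * (1 - ∏ i, μ i (Iic t)) :=
          key_ennreal hn _ (fun i => prob_le_one)
  -- measurability of survival functions
  have hmble : ∀ i, Measurable fun t : ℝ => π i {v | t < ⨆ j, v j} := by
    intro i
    have : Antitone fun t : ℝ => π i {v | t < ⨆ j, v j} := fun s t hst =>
      measure_mono fun v hv => lt_of_le_of_lt hst hv
    exact this.measurable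
  -- sum inequality
  have hsum : ∑ i, Li i ≤ (n : ℝ≥0∞) * L := by
    calc ∑ i, Li i = ∫⁻ t in Ioi (0:ℝ), ∑ i, π i {v | t < ⨆ j, v j} := by
          rw [lintegral_finset_sum _ fun i _ => hmble i]
          exact Finset.sum_congr rfl fun i _ => hlayer i
      _ ≤ ∫⁻ t in Ioi (0:ℝ), (n : ℝ≥0∞) * P {ω | t < ⨆ i, X i ω} :=
          lintegral_mono fun t => hpt t
      _ = (n : ℝ≥0∞) * L := by
          rw [lintegral_const_mul _ ?_, ← hlayer0]
          have : Antitone fun t : ℝ => P {ω | t < ⨆ i, X i ω} := fun s t hst =>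
            measure_mono fun ω hω => lt_of_le_of_lt hst hω
          exact this.measurable
  have hnLfin : (n : ℝ≥0∞) * L ≠ ∞ := ENNReal.mul_ne_top (ENNReal.natCast_ne_top n) hLfin
  have hLi_fin : ∀ i, Li i ≠ ∞ := fun i =>
    (lt_of_le_of_lt (le_trans (Finset.single_le_sum (fun j _ => zero_le)
      (Finset.mem_univ i)) hsum) hnLfin.lt_top).ne
  -- conclude
  have hnpos : (0:ℝ) < n := Nat.cast_pos.2 hn
  rw [div_le_iff₀ hnpos]
  calc ∑ i, M i = (∑ i, Li i).toReal := by
        rw [ENNReal.toReal_sum fun i _ => hLi_fin i]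
        exact Finset.sum_congr rfl fun i _ => hMi i
    _ ≤ ((n : ℝ≥0∞) * L).toReal := ENNReal.toReal_mono hnLfin hsum
    _ = (n : ℝ) * L.toReal := by rw [ENNReal.toReal_mul, ENNReal.toReal_natCast]
    _ = (∫ ω, ⨆ i, X i ω ∂P) * n := by rw [hEq]; ring
end

section
/- If X_1,...,X_n are independent nonnegative random variables with finite means such that M_i = M for all i (where M_i is the expected maximum of n i.i.d. copies of X_i), then M ≤ E[max(X_1,...,X_n)] ≤ (2 − 1/n)·M. -/
open MeasureTheory ProbabilityTheory Set
open scoped ENNReal NNReal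

namespace Stmt2Aux

lemma geom_id (b : ℝ) (n : ℕ) :
    (1 - b) * (∑ k ∈ Finset.range n, b ^ k) = 1 - b ^ n := by
  linear_combination (-(1:ℝ)) * geom_sum_mul b n

lemma sum_pow_lb {b : ℝ} (hb0 : 0 ≤ b) (hb1 : b ≤ 1) {n : ℕ} (hn : 0 < n) :
    ∑ k ∈ Finset.range n, (1 - b ^ k) ≤ ((n : ℝ) - 1) * (1 - b ^ n) := by
  obtain ⟨m, rfl⟩ : ∃ m, n = m + 1 := ⟨n - 1, (Nat.succ_pred_eq_of_pos hn).symm⟩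
  rw [Finset.sum_range_succ']
  have hle : ∀ i ∈ Finset.range m, 1 - b ^ (i + 1) ≤ 1 - b ^ (m + 1) := by
    intro i hi
    have : b ^ (m + 1) ≤ b ^ (i + 1) :=
      pow_le_pow_of_le_one hb0 hb1 (by have := Finset.mem_range.mp hi; omega)
    linarith
  have h2 : ∑ i ∈ Finset.range m, (1 - b ^ (i + 1)) ≤ (m : ℝ) * (1 - b ^ (m + 1)) := by
    calc ∑ i ∈ Finset.range m, (1 - b ^ (i + 1)) ≤
        ∑ _i ∈ Finset.range m, (1 - b ^ (m + 1)) := Finset.sum_le_sum hle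
      _ = (m : ℝ) * (1 - b ^ (m + 1)) := by
          rw [Finset.sum_const, Finset.card_range]; ring
  have : (1 : ℝ) - b ^ 0 = 0 := by simp
  push_cast
  linarith

lemma key3 {b : ℝ} (hb0 : 0 ≤ b) (hb1 : b ≤ 1) {n : ℕ} (hn : 0 < n) :
    (n : ℝ) ≤ (∑ k ∈ Finset.range n, b ^ k) * (1 + ((n : ℝ) - 1) * (1 - b)) := by
  have h1 := geom_id b n
  have h2 := sum_pow_lb hb0 hb1 hn
  have h3 : (∑ k ∈ Finset.range n, b ^ k) + ∑ k ∈ Finset.range n, (1 - b ^ k) = n := by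
    rw [← Finset.sum_add_distrib]
    simp
  nlinarith [h1, h2, h3]

lemma union_bound {ι : Type*} (s : Finset ι) (b : ι → ℝ)
    (h0 : ∀ i ∈ s, 0 ≤ b i) (h1 : ∀ i ∈ s, b i ≤ 1) :
    1 - ∏ i ∈ s, b i ≤ ∑ i ∈ s, (1 - b i) := by
  induction s using Finset.cons_induction with
  | empty => simp
  | cons a s ha ih =>
    rw [Finset.prod_cons, Finset.sum_cons]
    have hprod0 : 0 ≤ ∏ i ∈ s, b i :=
      Finset.prod_nonneg fun i hi => h0 i (Finset.mem_cons.mpr (Or.inr hi))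
    have hprod1 : ∏ i ∈ s, b i ≤ 1 :=
      Finset.prod_le_one (fun i hi => h0 i (Finset.mem_cons.mpr (Or.inr hi)))
        (fun i hi => h1 i (Finset.mem_cons.mpr (Or.inr hi)))
    have hih := ih (fun i hi => h0 i (Finset.mem_cons.mpr (Or.inr hi)))
      (fun i hi => h1 i (Finset.mem_cons.mpr (Or.inr hi)))
    have ha0 : 0 ≤ b a := h0 a (Finset.mem_cons_self a s)
    have ha1 : b a ≤ 1 := h1 a (Finset.mem_cons_self a s)
    nlinarith [hih, ha0, ha1, hprod0, hprod1]

lemma amgm {n : ℕ} (hn : 0 < n) (b : Fin n → ℝ) (h0 : ∀ i, 0 ≤ b i) :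
    ∏ i, b i ≤ (∑ i, b i ^ n) / n := by
  have hw : ∑ _i : Fin n, (1 : ℝ) / n = 1 := by
    rw [Finset.sum_const, Finset.card_univ, Fintype.card_fin, nsmul_eq_mul]
    field_simp
  have key := Real.geom_mean_le_arith_mean_weighted Finset.univ (fun _ => (1 : ℝ) / n)
    (fun i => b i ^ n) (fun i _ => by positivity) hw (fun i _ => pow_nonneg (h0 i) n)
  have hL : ∏ i : Fin n, (b i ^ n) ^ ((1 : ℝ) / n) = ∏ i, b i := by
    apply Finset.prod_congr rfl
    intro i _
    rw [← Real.rpow_natCast (b i) n, ← Real.rpow_mul (h0 i)]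
    rw [mul_one_div, div_self (by exact_mod_cast hn.ne' : (n : ℝ) ≠ 0), Real.rpow_one]
  have hR : ∑ i : Fin n, (1 : ℝ) / n * b i ^ n = (∑ i, b i ^ n) / n := by
    rw [Finset.sum_div]
    apply Finset.sum_congr rfl
    intro i _
    ring
  rw [hL, hR] at key
  exact key


lemma le_add_eps {a b : ℝ} (h : ∀ ε : ℝ, 0 < ε → a ≤ b + ε) : a ≤ b := by
  by_contra hlt
  push_neg at hlt
  have := h ((a - b) / 2) (by linarith)
  linarith

lemma one_sub_pow_bounds {b : ℝ} (hb0 : 0 ≤ b) (hb1 : b ≤ 1) (n : ℕ) :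
    0 ≤ 1 - b ^ n ∧ 1 - b ^ n ≤ n * (1 - b) := by
  constructor
  · have := pow_le_one₀ hb0 hb1 (n := n); linarith
  · have hs : ∑ k ∈ Finset.range n, b ^ k ≤ (n : ℝ) := by
      calc ∑ k ∈ Finset.range n, b ^ k ≤ ∑ _k ∈ Finset.range n, (1 : ℝ) :=
          Finset.sum_le_sum fun k _ => pow_le_one₀ hb0 hb1
        _ = n := by simp
    have hid := geom_id b n
    nlinarith [hs, hid]

set_option maxHeartbeats 2000000 in
theorem core {n : ℕ} (hn : 0 < n) (F : Fin n → ℝ → ℝ)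
    (hmono : ∀ i, Monotone (F i)) (h0 : ∀ i t, 0 ≤ F i t) (h1 : ∀ i t, F i t ≤ 1)
    (hSint : ∀ i, IntegrableOn (fun t => 1 - F i t) (Set.Ioi 0))
    (M : ℝ) (hM : ∀ i, M = ∫ t in Set.Ioi 0, (1 - F i t ^ n))
    (hGint : IntegrableOn (fun t => 1 - ∏ i, F i t) (Set.Ioi 0)) :
    M ≤ (∫ t in Set.Ioi 0, (1 - ∏ i, F i t)) ∧
      (∫ t in Set.Ioi 0, (1 - ∏ i, F i t)) ≤ (2 - 1 / n) * M := by
  have hnR : (0 : ℝ) < n := by exact_mod_cast hn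
  have i₀ : Fin n := ⟨0, hn⟩
  -- integrability of 1 - F i ^ n
  have hPint : ∀ i, IntegrableOn (fun t => 1 - F i t ^ n) (Set.Ioi 0) := by
    intro i
    refine Integrable.mono' (((hSint i).const_mul (n : ℝ))) ?_ ?_
    · exact (((hmono i).measurable.pow_const n).const_sub 1).aestronglyMeasurable
    · refine ae_of_all _ fun x => ?_
      obtain ⟨hb1, hb2⟩ := one_sub_pow_bounds (h0 i x) (h1 i x) n
      rw [Real.norm_eq_abs, abs_of_nonneg hb1]
      exact hb2
  have hMnn : 0 ≤ M := by
    rw [hM i₀]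
    refine setIntegral_nonneg measurableSet_Ioi fun x _ => ?_
    have := pow_le_one₀ (h0 i₀ x) (h1 i₀ x) (n := n); linarith
  -- Lower bound
  have hlow : M ≤ ∫ t in Set.Ioi 0, (1 - ∏ i, F i t) := by
    have hpoint : ∀ t : ℝ, (∑ i, (1 - F i t ^ n)) / n ≤ 1 - ∏ i, F i t := by
      intro t
      have := amgm hn (fun i => F i t) (fun i => h0 i t)
      have hsum : (∑ i, (1 - F i t ^ n)) = (n : ℝ) - ∑ i, F i t ^ n := by
        rw [Finset.sum_sub_distrib]; simp
      rw [hsum, sub_div, div_self (ne_of_gt hnR)]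
      linarith
    have hint2 : IntegrableOn (fun t => (∑ i, (1 - F i t ^ n)) / n) (Set.Ioi 0) := by
      exact (integrable_finset_sum _ fun i _ => hPint i).div_const _
    have := setIntegral_mono_on hint2 hGint measurableSet_Ioi fun x _ => hpoint x
    have heval : ∫ t in Set.Ioi 0, (∑ i, (1 - F i t ^ n)) / n = M := by
      rw [integral_div, integral_finset_sum _ fun i _ => hPint i]
      have : ∀ i ∈ Finset.univ, ∫ t in Set.Ioi 0, (1 - F i t ^ n) = M :=
        fun i _ => (hM i).symm
      rw [Finset.sum_congr rfl this, Finset.sum_const, Finset.card_univ, Fintype.card_fin,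
        nsmul_eq_mul]
      field_simp
    rw [heval] at this
    exact this
  refine ⟨hlow, ?_⟩
  haveI : Nonempty (Fin n) := ⟨i₀⟩
  set EZ := ∫ t in Set.Ioi 0, (1 - ∏ i, F i t) with hEZdef
  -- sigma facts
  have hσint : IntegrableOn (fun x => ∑ i, (1 - F i x)) (Set.Ioi 0) :=
    integrable_finset_sum _ fun i _ => hSint i
  have hσanti : Antitone (fun x : ℝ => ∑ i, (1 - F i x)) := by
    intro a b hab
    exact Finset.sum_le_sum fun i _ => by have := hmono i hab; linarith
  have hDne : {x : ℝ | 0 < x ∧ (∑ i, (1 - F i x)) < 1}.Nonempty := by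
    by_contra hne
    have hge : ∀ x : ℝ, 0 < x → 1 ≤ ∑ i, (1 - F i x) := by
      intro x hx
      by_contra h'
      push_neg at h'
      exact hne ⟨x, hx, h'⟩
    have hone : IntegrableOn (fun _ : ℝ => (1:ℝ)) (Set.Ioi 0) := by
      refine Integrable.mono' hσint aestronglyMeasurable_const ?_
      refine (ae_restrict_iff' measurableSet_Ioi).mpr (ae_of_all _ fun x hx => ?_)
      rw [norm_one]
      exact hge x hx
    rw [integrableOn_const_iff] at hone
    rcases hone with h' | h'
    · exact absurd h' (by simp)
    · rw [Real.volume_Ioi] at h'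
      exact lt_irrefl _ h'
  set t₀ := sInf {x : ℝ | 0 < x ∧ (∑ i, (1 - F i x)) < 1} with ht₀def
  have hbdd : BddBelow {x : ℝ | 0 < x ∧ (∑ i, (1 - F i x)) < 1} := ⟨0, fun x hx => hx.1.le⟩
  have ht₀0 : 0 ≤ t₀ := le_csInf hDne fun x hx => hx.1.le
  have htail : ∀ x : ℝ, t₀ < x → (∑ i, (1 - F i x)) < 1 := by
    intro x hx
    obtain ⟨y, hy, hyx⟩ := exists_lt_of_csInf_lt hDne hx
    exact lt_of_le_of_lt (hσanti hyx.le) hy.2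
  have hhead : ∀ x : ℝ, 0 < x → x < t₀ → 1 ≤ ∑ i, (1 - F i x) := by
    intro x hx hxt
    by_contra hcon
    push_neg at hcon
    exact absurd (csInf_le hbdd ⟨hx, hcon⟩) (not_le.mpr hxt)
  -- w i : right limit of survival at t₀
  have hwne : ∀ i, ((fun x => 1 - F i x) '' Set.Ioi t₀).Nonempty :=
    fun i => ⟨1 - F i (t₀ + 1), ⟨t₀ + 1, Set.mem_Ioi.mpr (lt_add_one t₀), rfl⟩⟩
  have hwbdd : ∀ i, BddAbove ((fun x => 1 - F i x) '' Set.Ioi t₀) := by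
    intro i
    refine ⟨1, ?_⟩
    rintro y ⟨x, hx, rfl⟩
    have := h0 i x
    show 1 - F i x ≤ 1
    linarith
  set w : Fin n → ℝ := fun i => sSup ((fun x => 1 - F i x) '' Set.Ioi t₀) with hwdef
  have hw_ub : ∀ (i : Fin n) (x : ℝ), t₀ < x → 1 - F i x ≤ w i :=
    fun i x hx => le_csSup (hwbdd i) ⟨x, hx, rfl⟩
  have hw0 : ∀ i, 0 ≤ w i := by
    intro i
    have h' := hw_ub i (t₀ + 1) (lt_add_one t₀)
    have := h1 i (t₀ + 1)
    linarith
  have hw1 : ∀ i, w i ≤ 1 := by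
    intro i
    refine csSup_le (hwne i) ?_
    rintro y ⟨x, hx, rfl⟩
    have := h0 i x
    show 1 - F i x ≤ 1
    linarith
  have hw_head : ∀ (i : Fin n) (x : ℝ), 0 < x → x < t₀ → w i ≤ 1 - F i x := by
    intro i x hx hxt
    refine csSup_le (hwne i) ?_
    rintro y ⟨z, hz, rfl⟩
    have := hmono i (le_of_lt (lt_trans hxt hz))
    show 1 - F i z ≤ 1 - F i x
    linarith
  have hsumw : ∑ i, w i ≤ 1 := by
    refine le_add_eps fun ε hε => ?_
    have hchoice : ∀ i : Fin n, ∃ x : ℝ, t₀ < x ∧ w i - ε / n < 1 - F i x := by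
      intro i
      have hlt : w i - ε / n < w i := by
        have : 0 < ε / n := by positivity
        linarith
      obtain ⟨y, ⟨x, hx, rfl⟩, hy⟩ := exists_lt_of_lt_csSup (hwne i) hlt
      exact ⟨x, hx, hy⟩
    choose xs hxs1 hxs2 using hchoice
    have hx't : t₀ < Finset.univ.inf' Finset.univ_nonempty xs := by
      rw [Finset.lt_inf'_iff]
      exact fun i _ => hxs1 i
    have hper : ∀ i, w i ≤ 1 - F i (Finset.univ.inf' Finset.univ_nonempty xs) + ε / n := by
      intro i
      have hle : Finset.univ.inf' Finset.univ_nonempty xs ≤ xs i :=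
        Finset.inf'_le _ (Finset.mem_univ i)
      have h2 := hmono i hle
      have h3 := hxs2 i
      linarith
    calc ∑ i, w i ≤ ∑ i, (1 - F i (Finset.univ.inf' Finset.univ_nonempty xs) + ε / n) :=
        Finset.sum_le_sum fun i _ => hper i
      _ = (∑ i, (1 - F i (Finset.univ.inf' Finset.univ_nonempty xs))) + ε := by
          rw [Finset.sum_add_distrib, Finset.sum_const, Finset.card_univ, Fintype.card_fin,
            nsmul_eq_mul]
          field_simp
      _ ≤ 1 + ε := by have := htail _ hx't; linarith
  -- split machinery
  have hsplitset : Set.Ioc 0 t₀ ∪ Set.Ioi t₀ = Set.Ioi (0:ℝ) := Set.Ioc_union_Ioi_eq_Ioi ht₀0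
  have hdisj : Disjoint (Set.Ioc (0:ℝ) t₀) (Set.Ioi t₀) := Set.Ioc_disjoint_Ioi le_rfl
  have hsplitInt : ∀ f : ℝ → ℝ, IntegrableOn f (Set.Ioi 0) →
      ∫ x in Set.Ioi 0, f x = (∫ x in Set.Ioc 0 t₀, f x) + ∫ x in Set.Ioi t₀, f x := by
    intro f hf
    rw [← hsplitset] at hf ⊢
    exact setIntegral_union hdisj measurableSet_Ioi (hf.mono_set Set.subset_union_left)
      (hf.mono_set Set.subset_union_right)
  have hIooIoi : Set.Ioo (0:ℝ) t₀ ⊆ Set.Ioi 0 := fun x hx => Set.mem_Ioi.mpr hx.1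
  have hIocIoi : Set.Ioc (0:ℝ) t₀ ⊆ Set.Ioi 0 := fun x hx => Set.mem_Ioi.mpr hx.1
  have hIoiIoi : Set.Ioi t₀ ⊆ Set.Ioi (0:ℝ) := Set.Ioi_subset_Ioi ht₀0
  -- master inequality
  have master : ∀ c : Fin n → ℝ, (∀ i, 0 ≤ c i) → (∀ i, c i ≤ 1) → (∀ i, w i ≤ c i) →
      (∀ (i : Fin n) (x : ℝ), 0 < x → x < t₀ → c i ≤ 1 - F i x) →
      EZ * n ≤ n * t₀ + n * M + (((n:ℝ) - 1) * M - n * t₀) * (∑ i, c i) := by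
    intro c hc0 hc1 hwc hchead
    have hperi : ∀ i : Fin n, (n:ℝ) * ∫ x in Set.Ioi t₀, (1 - F i x) ≤
        M * (1 + ((n:ℝ) - 1) * c i) - n * t₀ * c i := by
      intro i
      set T := ∫ x in Set.Ioi t₀, (1 - F i x) with hTdef
      set Sc := ∑ k ∈ Finset.range n, (1 - c i) ^ k with hScdef
      set Sw := ∑ k ∈ Finset.range n, (1 - w i) ^ k with hSwdef
      have hT0 : 0 ≤ T :=
        setIntegral_nonneg measurableSet_Ioi fun x _ => by have := h1 i x; linarith
      have hScSw : Sc ≤ Sw :=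
        Finset.sum_le_sum fun k _ =>
          pow_le_pow_left₀ (by have := hc1 i; linarith) (by have := hwc i; linarith) k
      have hMsplit : M = (∫ x in Set.Ioc 0 t₀, (1 - F i x ^ n)) +
          ∫ x in Set.Ioi t₀, (1 - F i x ^ n) := by
        rw [hM i]
        exact hsplitInt _ (hPint i)
      have hhead_i : t₀ * (1 - (1 - c i) ^ n) ≤ ∫ x in Set.Ioc 0 t₀, (1 - F i x ^ n) := by
        rw [integral_Ioc_eq_integral_Ioo]
        have hconst : ∫ _x in Set.Ioo (0:ℝ) t₀, (1 - (1 - c i) ^ n) =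
            t₀ * (1 - (1 - c i) ^ n) := by
          rw [setIntegral_const, Real.volume_real_Ioo, smul_eq_mul, sub_zero,
            max_eq_left ht₀0]
        have hmono2 : ∫ _x in Set.Ioo (0:ℝ) t₀, (1 - (1 - c i) ^ n) ≤
            ∫ x in Set.Ioo (0:ℝ) t₀, (1 - F i x ^ n) := by
          refine setIntegral_mono_on ?_ ((hPint i).mono_set hIooIoi) measurableSet_Ioo ?_
          · exact (integrableOn_const_iff).mpr
              (Or.inr (by rw [Real.volume_Ioo]; exact ENNReal.ofReal_lt_top))
          · intro x hx
            have hcx := hchead i x hx.1 hx.2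
            have hpow : F i x ^ n ≤ (1 - c i) ^ n := pow_le_pow_left₀ (h0 i x) (by linarith) n
            linarith
        rw [hconst] at hmono2
        exact hmono2
      have htail_i : Sw * T ≤ ∫ x in Set.Ioi t₀, (1 - F i x ^ n) := by
        rw [hTdef, ← integral_const_mul]
        refine setIntegral_mono_on (((hSint i).mono_set hIoiIoi).const_mul Sw)
          ((hPint i).mono_set hIoiIoi) measurableSet_Ioi ?_
        intro x hx
        have hwx : 1 - F i x ≤ w i := hw_ub i x hx
        have hsum_le : Sw ≤ ∑ k ∈ Finset.range n, F i x ^ k :=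
          Finset.sum_le_sum fun k _ =>
            pow_le_pow_left₀ (by have := hw1 i; linarith) (by linarith) k
        have hnn : 0 ≤ 1 - F i x := by have := h1 i x; linarith
        have hgeom := geom_id (F i x) n
        nlinarith [mul_le_mul_of_nonneg_right hsum_le hnn]
      have hTs : Sc * T + t₀ * (1 - (1 - c i) ^ n) ≤ M := by
        have h1' : Sc * T ≤ Sw * T := mul_le_mul_of_nonneg_right hScSw hT0
        linarith [hMsplit, hhead_i, htail_i]
      have hk3 := key3 (b := 1 - c i) (by have := hc1 i; linarith)
        (by have := hc0 i; linarith) hn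
      have hcc : (1 : ℝ) - (1 - c i) = c i := by ring
      rw [hcc] at hk3
      have hg := geom_id (1 - c i) n
      rw [hcc] at hg
      -- hk3 : n ≤ Sc * (1 + (n-1) * c i) ; hg : c i * Sc = 1 - (1-c i)^n
      have hA0 : (0:ℝ) ≤ 1 + ((n:ℝ) - 1) * c i := by
        have h' := hc0 i
        have h'' : (1:ℝ) ≤ n := by exact_mod_cast hn
        nlinarith
      have e1 : (n:ℝ) * T ≤ (Sc * (1 + ((n:ℝ) - 1) * c i)) * T :=
        mul_le_mul_of_nonneg_right hk3 hT0
      have e2 : Sc * T ≤ M - t₀ * (1 - (1 - c i) ^ n) := by linarith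
      have e4 : (Sc * T) * (1 + ((n:ℝ) - 1) * c i) ≤
          (M - t₀ * (1 - (1 - c i) ^ n)) * (1 + ((n:ℝ) - 1) * c i) :=
        mul_le_mul_of_nonneg_right e2 hA0
      have e5 : c i * (n:ℝ) ≤ c i * (Sc * (1 + ((n:ℝ) - 1) * c i)) :=
        mul_le_mul_of_nonneg_left hk3 (hc0 i)
      have e6 : t₀ * (c i * (n:ℝ)) ≤ t₀ * ((1 - (1 - c i) ^ n) * (1 + ((n:ℝ) - 1) * c i)) := by
        refine mul_le_mul_of_nonneg_left ?_ ht₀0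
        calc c i * (n:ℝ) ≤ c i * (Sc * (1 + ((n:ℝ) - 1) * c i)) := e5
          _ = (c i * Sc) * (1 + ((n:ℝ) - 1) * c i) := by ring
          _ = (1 - (1 - c i) ^ n) * (1 + ((n:ℝ) - 1) * c i) := by rw [hg]
      nlinarith [e1, e4, e6]
    have hsum' : ∑ i, ((n:ℝ) * ∫ x in Set.Ioi t₀, (1 - F i x)) ≤
        ∑ i, (M * (1 + ((n:ℝ) - 1) * c i) - n * t₀ * c i) :=
      Finset.sum_le_sum fun i _ => hperi i
    have hsumL : ∑ i, ((n:ℝ) * ∫ x in Set.Ioi t₀, (1 - F i x)) =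
        (n:ℝ) * ∑ i, ∫ x in Set.Ioi t₀, (1 - F i x) := by rw [Finset.mul_sum]
    have hsumR : ∑ i, (M * (1 + ((n:ℝ) - 1) * c i) - n * t₀ * c i) =
        (n:ℝ) * M + (((n:ℝ) - 1) * M - n * t₀) * ∑ i, c i := by
      rw [show (fun i => M * (1 + ((n:ℝ) - 1) * c i) - n * t₀ * c i) =
          (fun i => M + (((n:ℝ) - 1) * M - n * t₀) * c i) from funext fun i => by ring]
      rw [Finset.sum_add_distrib, Finset.sum_const, ← Finset.mul_sum, Finset.card_univ,
        Fintype.card_fin, nsmul_eq_mul]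
    have hEZsplit : EZ ≤ t₀ + ∑ i, ∫ x in Set.Ioi t₀, (1 - F i x) := by
      have hh1 : ∫ x in Set.Ioc 0 t₀, (1 - ∏ i, F i x) ≤ t₀ := by
        have hconst : ∫ _x in Set.Ioc (0:ℝ) t₀, (1:ℝ) = t₀ := by
          rw [setIntegral_const, Real.volume_real_Ioc, smul_eq_mul, mul_one, sub_zero,
            max_eq_left ht₀0]
        have hmono2 : ∫ x in Set.Ioc (0:ℝ) t₀, (1 - ∏ i, F i x) ≤
            ∫ _x in Set.Ioc (0:ℝ) t₀, (1:ℝ) := by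
          refine setIntegral_mono_on (hGint.mono_set hIocIoi) ?_ measurableSet_Ioc fun x _ => ?_
          · exact (integrableOn_const_iff).mpr
              (Or.inr (by rw [Real.volume_Ioc]; exact ENNReal.ofReal_lt_top))
          · have := Finset.prod_nonneg (fun i (_ : i ∈ Finset.univ) => h0 i x)
            linarith
        rw [hconst] at hmono2
        exact hmono2
      have hh2 : ∫ x in Set.Ioi t₀, (1 - ∏ i, F i x) ≤
          ∑ i, ∫ x in Set.Ioi t₀, (1 - F i x) := by
        rw [← integral_finset_sum _ fun i _ => (hSint i).mono_set hIoiIoi]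
        refine setIntegral_mono_on (hGint.mono_set hIoiIoi)
          (integrable_finset_sum _ fun i _ => (hSint i).mono_set hIoiIoi)
          measurableSet_Ioi fun x _ => ?_
        exact union_bound Finset.univ _ (fun i _ => h0 i x) (fun i _ => h1 i x)
      have hsp := hsplitInt _ hGint
      rw [hEZdef, hsp]
      linarith
    have hEZn := mul_le_mul_of_nonneg_left hEZsplit (le_of_lt hnR)
    rw [hsumL, hsumR] at hsum'
    have hc : EZ * (n:ℝ) = (n:ℝ) * EZ := mul_comm _ _
    rw [hc]
    nlinarith [hEZn, hsum']
  -- conclude by branches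
  have hgoal : EZ * n ≤ (2 * (n:ℝ) - 1) * M := by
    rcases le_or_gt t₀ ((1 - 1/(n:ℝ)) * M) with hB | hA
    · -- branch B : use c = w
      have hm := master w hw0 hw1 (fun i => le_refl (w i)) hw_head
      have hcoef : 0 ≤ ((n:ℝ) - 1) * M - n * t₀ := by
        have h' : n * t₀ ≤ (n:ℝ) * ((1 - 1/(n:ℝ)) * M) :=
          mul_le_mul_of_nonneg_left hB (le_of_lt hnR)
        have h'' : (n:ℝ) * ((1 - 1/(n:ℝ)) * M) = ((n:ℝ) - 1) * M := by
          field_simp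
        linarith
      have h2 : (((n:ℝ) - 1) * M - n * t₀) * (∑ i, w i) ≤
          (((n:ℝ) - 1) * M - n * t₀) * 1 :=
        mul_le_mul_of_nonneg_left hsumw hcoef
      nlinarith [hm, h2]
    · -- branch A : use c = v
      have ht₀pos : 0 < t₀ := by
        have h1n : 1/(n:ℝ) ≤ 1 := by
          rw [div_le_one hnR]
          exact_mod_cast hn
        have : 0 ≤ (1 - 1/(n:ℝ)) * M := mul_nonneg (by linarith) hMnn
        linarith
      have hvne : ∀ i, ((fun x => 1 - F i x) '' Set.Ioo 0 t₀).Nonempty :=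
        fun i => ⟨1 - F i (t₀ / 2), ⟨t₀ / 2, ⟨by linarith, by linarith⟩, rfl⟩⟩
      have hvbdd : ∀ i, BddBelow ((fun x => 1 - F i x) '' Set.Ioo 0 t₀) := by
        intro i
        refine ⟨0, ?_⟩
        rintro y ⟨x, hx, rfl⟩
        have := h1 i x
        show (0:ℝ) ≤ 1 - F i x
        linarith
      set v : Fin n → ℝ := fun i => sInf ((fun x => 1 - F i x) '' Set.Ioo 0 t₀) with hvdef
      have hv_le : ∀ (i : Fin n) (x : ℝ), 0 < x → x < t₀ → v i ≤ 1 - F i x :=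
        fun i x hx1 hx2 => csInf_le (hvbdd i) ⟨x, ⟨hx1, hx2⟩, rfl⟩
      have hv0 : ∀ i, 0 ≤ v i := by
        intro i
        refine le_csInf (hvne i) ?_
        rintro y ⟨x, hx, rfl⟩
        have := h1 i x
        show (0:ℝ) ≤ 1 - F i x
        linarith
      have hv1 : ∀ i, v i ≤ 1 := by
        intro i
        have h' := hv_le i (t₀ / 2) (by linarith) (by linarith)
        have := h0 i (t₀ / 2)
        linarith
      have hwv : ∀ i, w i ≤ v i := by
        intro i
        refine le_csInf (hvne i) ?_
        rintro y ⟨x, hx, rfl⟩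
        exact hw_head i x hx.1 hx.2
      have hsumv : 1 ≤ ∑ i, v i := by
        refine le_add_eps fun ε hε => ?_
        have hchoice : ∀ i : Fin n, ∃ x : ℝ, (0 < x ∧ x < t₀) ∧ 1 - F i x < v i + ε / n := by
          intro i
          have hlt : v i < v i + ε / n := by
            have : 0 < ε / n := by positivity
            linarith
          obtain ⟨y, ⟨x, hx, rfl⟩, hy⟩ := exists_lt_of_csInf_lt (hvne i) hlt
          exact ⟨x, hx, hy⟩
        choose xs hxs1 hxs2 using hchoice
        have hx't : Finset.univ.sup' Finset.univ_nonempty xs < t₀ := by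
          rw [Finset.sup'_lt_iff]
          exact fun i _ => (hxs1 i).2
        have hx'0 : 0 < Finset.univ.sup' Finset.univ_nonempty xs :=
          lt_of_lt_of_le (hxs1 i₀).1 (Finset.le_sup' _ (Finset.mem_univ i₀))
        have hper : ∀ i, 1 - F i (Finset.univ.sup' Finset.univ_nonempty xs) ≤ v i + ε / n := by
          intro i
          have hle : xs i ≤ Finset.univ.sup' Finset.univ_nonempty xs :=
            Finset.le_sup' _ (Finset.mem_univ i)
          have h2 := hmono i hle
          have h3 := hxs2 i
          linarith
        have h4 := hhead _ hx'0 hx't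
        calc (1:ℝ) ≤ ∑ i, (1 - F i (Finset.univ.sup' Finset.univ_nonempty xs)) := h4
          _ ≤ ∑ i, (v i + ε / n) := Finset.sum_le_sum fun i _ => hper i
          _ = (∑ i, v i) + ε := by
              rw [Finset.sum_add_distrib, Finset.sum_const, Finset.card_univ, Fintype.card_fin,
                nsmul_eq_mul]
              field_simp
      have hm := master v hv0 hv1 hwv hv_le
      have hcoef : ((n:ℝ) - 1) * M - n * t₀ ≤ 0 := by
        have h' : (n:ℝ) * ((1 - 1/(n:ℝ)) * M) ≤ n * t₀ :=
          mul_le_mul_of_nonneg_left (le_of_lt hA) (le_of_lt hnR)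
        have h'' : (n:ℝ) * ((1 - 1/(n:ℝ)) * M) = ((n:ℝ) - 1) * M := by
          field_simp
        linarith
      have h2 : (((n:ℝ) - 1) * M - n * t₀) * (∑ i, v i) ≤
          (((n:ℝ) - 1) * M - n * t₀) * 1 :=
        mul_le_mul_of_nonpos_left hsumv hcoef
      nlinarith [hm, h2]
  have hfin : (2 - 1/(n:ℝ)) * M = ((2 * (n:ℝ) - 1) * M) / n := by
    field_simp
  rw [hfin]
  rw [le_div_iff₀ hnR]
  exact hgoal

lemma toReal_repr {g : ℝ → ℝ≥0∞} (hgmeas : Measurable g) (hle : ∀ t, g t ≤ 1)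
    (hfin : (∫⁻ t in Set.Ioi 0, g t) ≠ ⊤) :
    IntegrableOn (fun t => (g t).toReal) (Set.Ioi 0) ∧
      ∫ t in Set.Ioi 0, (g t).toReal = (∫⁻ t in Set.Ioi 0, g t).toReal :=
  ⟨integrable_toReal_of_lintegral_ne_top hgmeas.aemeasurable hfin,
   integral_toReal hgmeas.aemeasurable
     (ae_of_all _ fun t => lt_of_le_of_lt (hle t) ENNReal.one_lt_top)⟩

end Stmt2Aux

theorem stmt_2 {Ω : Type*} [MeasurableSpace Ω] (P : Measure Ω) [IsProbabilityMeasure P]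
    (n : ℕ) (hn : 0 < n) (X : Fin n → Ω → ℝ)
    (hmeas : ∀ i, Measurable (X i))
    (hnonneg : ∀ i ω, 0 ≤ X i ω)
    (hint : ∀ i, Integrable (X i) P)
    (hindep : iIndepFun X P)
    (M : ℝ)
    (hM : ∀ i, M =
      ∫ v, (⨆ j, v j) ∂(Measure.pi fun _ : Fin n => Measure.map (X i) P)) :
    M ≤ ∫ ω, ⨆ i, X i ω ∂P ∧ ∫ ω, ⨆ i, X i ω ∂P ≤ (2 - 1 / (n : ℝ)) * M := by
  classical
  have i₀ : Fin n := ⟨0, hn⟩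
  haveI : Nonempty (Fin n) := ⟨i₀⟩
  -- ENNReal CDF and survival functions
  have hsetm : ∀ (i : Fin n) (t : ℝ), MeasurableSet {ω | X i ω ≤ t} :=
    fun i t => (hmeas i) measurableSet_Iic
  have hFe1 : ∀ (i : Fin n) (t : ℝ), P {ω | X i ω ≤ t} ≤ 1 := fun i t => prob_le_one
  have hFene : ∀ (i : Fin n) (t : ℝ), P {ω | X i ω ≤ t} ≠ ⊤ :=
    fun i t => ne_top_of_le_ne_top ENNReal.one_ne_top (hFe1 i t)
  have hFemono : ∀ i : Fin n, Monotone (fun t => P {ω | X i ω ≤ t}) :=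
    fun i a b hab => measure_mono (fun ω h => le_trans h hab)
  have hGeanti : ∀ i : Fin n, Antitone (fun t => P {ω | t < X i ω}) :=
    fun i a b hab => measure_mono (fun ω h => lt_of_le_of_lt hab h)
  have hcompl : ∀ (i : Fin n) (t : ℝ), P {ω | t < X i ω} = 1 - P {ω | X i ω ≤ t} := by
    intro i t
    have h1' : {ω | t < X i ω} = {ω | X i ω ≤ t}ᶜ := by ext ω; simp [not_le]
    rw [h1', prob_compl_eq_one_sub (hsetm i t)]
  have hGefin : ∀ i : Fin n, (∫⁻ t in Set.Ioi 0, P {ω | t < X i ω}) ≠ ⊤ := by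
    intro i
    have hl := lintegral_eq_lintegral_meas_lt P (ae_of_all _ (hnonneg i)) (hmeas i).aemeasurable
    rw [← hl]
    exact (hint i).lintegral_lt_top.ne
  -- real CDF
  set F : Fin n → ℝ → ℝ := fun i t => (P {ω | X i ω ≤ t}).toReal with hFdef
  have hFmono : ∀ i, Monotone (F i) :=
    fun i a b hab => ENNReal.toReal_mono (hFene i b) (hFemono i hab)
  have hF0 : ∀ i t, 0 ≤ F i t := fun i t => ENNReal.toReal_nonneg
  have hF1 : ∀ i t, F i t ≤ 1 := by
    intro i t
    rw [hFdef]
    calc (P {ω | X i ω ≤ t}).toReal ≤ (1 : ℝ≥0∞).toReal :=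
      ENNReal.toReal_mono ENNReal.one_ne_top (hFe1 i t)
      _ = 1 := ENNReal.toReal_one
  -- pointwise toReal identities
  have hSeq : ∀ i : Fin n, (fun t => 1 - F i t) = (fun t => (P {ω | t < X i ω}).toReal) := by
    intro i
    funext t
    rw [hcompl i t, ENNReal.toReal_sub_of_le (hFe1 i t) ENNReal.one_ne_top, ENNReal.toReal_one]
  -- integrability of survival functions
  have hSint : ∀ i, IntegrableOn (fun t => 1 - F i t) (Set.Ioi 0) := by
    intro i
    rw [hSeq i]
    exact (Stmt2Aux.toReal_repr (hGeanti i).measurable (fun t => prob_le_one) (hGefin i)).1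
  -- the maximum
  have hZmeas : Measurable (fun ω => ⨆ i, X i ω) := Measurable.iSup hmeas
  have hZnn : 0 ≤ᵐ[P] fun ω => ⨆ i, X i ω :=
    ae_of_all _ fun ω =>
      le_ciSup_of_le (Set.Finite.bddAbove (Set.finite_range _)) i₀ (hnonneg i₀ ω)
  have hZset : ∀ t : ℝ, {ω | (⨆ i, X i ω) ≤ t} = ⋂ i, {ω | X i ω ≤ t} := by
    intro t
    ext ω
    simp only [Set.mem_setOf_eq, Set.mem_iInter]
    exact ciSup_le_iff (Set.Finite.bddAbove (Set.finite_range _))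
  have hZsetm : ∀ t : ℝ, MeasurableSet {ω | (⨆ i, X i ω) ≤ t} :=
    fun t => hZmeas measurableSet_Iic
  have hZprob : ∀ t : ℝ, P {ω | t < (⨆ i, X i ω)} = 1 - ∏ i, P {ω | X i ω ≤ t} := by
    intro t
    have h1' : {ω | t < (⨆ i, X i ω)} = {ω | (⨆ i, X i ω) ≤ t}ᶜ := by ext ω; simp [not_le]
    rw [h1', prob_compl_eq_one_sub (hZsetm t), hZset]
    congr 1
    exact hindep.meas_iInter fun i => ⟨Iic t, measurableSet_Iic, rfl⟩
  have hZanti : Antitone (fun t => P {ω | t < (⨆ i, X i ω)}) :=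
    fun a b hab => measure_mono (fun ω h => lt_of_le_of_lt hab h)
  have hZfin : (∫⁻ t in Set.Ioi 0, P {ω | t < (⨆ i, X i ω)}) ≠ ⊤ := by
    have hb : ∀ t : ℝ, P {ω | t < (⨆ i, X i ω)} ≤ ∑ i, P {ω | t < X i ω} := by
      intro t
      have hsub : {ω | t < (⨆ i, X i ω)} ⊆ ⋃ i, {ω | t < X i ω} := by
        intro ω hω
        by_contra hc
        simp only [Set.mem_iUnion, Set.mem_setOf_eq, not_exists, not_lt] at hc
        exact absurd (ciSup_le hc) (not_le.mpr hω)
      exact le_trans (measure_mono hsub) (measure_iUnion_fintype_le _ _)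
    have hle : (∫⁻ t in Set.Ioi 0, P {ω | t < (⨆ i, X i ω)}) ≤
        ∑ i, ∫⁻ t in Set.Ioi 0, P {ω | t < X i ω} := by
      calc (∫⁻ t in Set.Ioi 0, P {ω | t < (⨆ i, X i ω)}) ≤
          ∫⁻ t in Set.Ioi 0, ∑ i, P {ω | t < X i ω} := lintegral_mono fun t => hb t
        _ = ∑ i, ∫⁻ t in Set.Ioi 0, P {ω | t < X i ω} :=
            lintegral_finset_sum _ fun i _ => (hGeanti i).measurable
    exact ne_top_of_le_ne_top
      (ENNReal.sum_lt_top.mpr fun i _ => (hGefin i).lt_top).ne hle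
  have hprodle : ∀ t : ℝ, (∏ i, P {ω | X i ω ≤ t}) ≤ 1 :=
    fun t => Finset.prod_le_one' (fun i _ => hFe1 i t)
  have hGtoReal : ∀ t : ℝ, ((1 : ℝ≥0∞) - ∏ i, P {ω | X i ω ≤ t}).toReal = 1 - ∏ i, F i t := by
    intro t
    rw [ENNReal.toReal_sub_of_le (hprodle t) ENNReal.one_ne_top, ENNReal.toReal_one,
      ENNReal.toReal_prod]
  -- integrability of 1 - ∏ F
  have hGmeasE : Measurable (fun t => (1 : ℝ≥0∞) - ∏ i, P {ω | X i ω ≤ t}) := by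
    refine Measurable.sub measurable_const ?_
    exact Finset.measurable_prod _ fun i _ => (hFemono i).measurable
  have hGfinE : (∫⁻ t in Set.Ioi 0, ((1 : ℝ≥0∞) - ∏ i, P {ω | X i ω ≤ t})) ≠ ⊤ := by
    have : ∀ t : ℝ, ((1 : ℝ≥0∞) - ∏ i, P {ω | X i ω ≤ t}) = P {ω | t < (⨆ i, X i ω)} :=
      fun t => (hZprob t).symm
    rw [setLIntegral_congr_fun_ae measurableSet_Ioi (ae_of_all _ fun t _ => this t)]
    exact hZfin
  have hGint : IntegrableOn (fun t => 1 - ∏ i, F i t) (Set.Ioi 0) := by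
    have heq : (fun t => 1 - ∏ i, F i t) =
        (fun t => ((1 : ℝ≥0∞) - ∏ i, P {ω | X i ω ≤ t}).toReal) :=
      funext fun t => (hGtoReal t).symm
    rw [heq]
    exact (Stmt2Aux.toReal_repr hGmeasE (fun t => tsub_le_self) hGfinE).1
  -- representation of E[max]
  have hZrepr : ∫ ω, (⨆ i, X i ω) ∂P = ∫ t in Set.Ioi 0, (1 - ∏ i, F i t) := by
    rw [integral_eq_lintegral_of_nonneg_ae hZnn hZmeas.aestronglyMeasurable]
    rw [lintegral_eq_lintegral_meas_lt P hZnn hZmeas.aemeasurable]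
    obtain ⟨-, heq⟩ := Stmt2Aux.toReal_repr hZanti.measurable (fun t => prob_le_one) hZfin
    rw [← heq]
    refine setIntegral_congr_fun measurableSet_Ioi fun t _ => ?_
    rw [hZprob t]
    exact hGtoReal t
  -- representation of M
  have hMrep : ∀ i, M = ∫ t in Set.Ioi 0, (1 - F i t ^ n) := by
    intro i
    haveI hPM : IsProbabilityMeasure (Measure.map (X i) P) :=
      Measure.isProbabilityMeasure_map (hmeas i).aemeasurable
    have hsupm : Measurable (fun v : Fin n → ℝ => ⨆ j, v j) :=
      Measurable.iSup fun j => measurable_pi_apply j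
    -- coordinate computation
    have hcoordset : ∀ (j : Fin n) (s : Set ℝ), MeasurableSet s →
        (Measure.pi fun _ : Fin n => Measure.map (X i) P) {v : Fin n → ℝ | v j ∈ s} =
          Measure.map (X i) P s := by
      intro j s hs
      have h1' : {v : Fin n → ℝ | v j ∈ s} =
          Set.pi Set.univ (Function.update (fun _ : Fin n => (Set.univ : Set ℝ)) j s) :=
        Set.eval_preimage
      rw [h1', Measure.pi_pi]
      rw [Finset.prod_eq_single j (fun x _ hx => by
        rw [Function.update_of_ne hx]; exact measure_univ) (fun h => absurd (Finset.mem_univ j) h)]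
      rw [Function.update_self]
    have hQnn : 0 ≤ᵐ[Measure.pi fun _ : Fin n => Measure.map (X i) P]
        fun v : Fin n → ℝ => ⨆ j, v j := by
      have hnull : (Measure.pi fun _ : Fin n => Measure.map (X i) P)
          (⋃ j, {v : Fin n → ℝ | v j ∈ Set.Iio 0}) = 0 := by
        refine measure_iUnion_null fun j => ?_
        rw [hcoordset j _ measurableSet_Iio]
        rw [Measure.map_apply (hmeas i) measurableSet_Iio]
        have : X i ⁻¹' Set.Iio 0 = ∅ := by
          ext ω
          simp only [Set.mem_preimage, Set.mem_Iio, Set.mem_empty_iff_false, iff_false, not_lt]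
          exact hnonneg i ω
        rw [this]
        exact measure_empty
      rw [Filter.EventuallyLE]
      rw [ae_iff]
      refine measure_mono_null ?_ hnull
      intro v hv
      simp only [Set.mem_setOf_eq, Pi.zero_apply, not_le] at hv
      refine Set.mem_iUnion.mpr ⟨i₀, ?_⟩
      simp only [Set.mem_setOf_eq, Set.mem_Iio]
      exact lt_of_le_of_lt (le_ciSup (Set.Finite.bddAbove (Set.finite_range _)) i₀) hv
    have hQprob : ∀ t : ℝ, (Measure.pi fun _ : Fin n => Measure.map (X i) P)
        {v : Fin n → ℝ | t < ⨆ j, v j} = 1 - (P {ω | X i ω ≤ t}) ^ n := by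
      intro t
      have hset : {v : Fin n → ℝ | (⨆ j, v j) ≤ t} =
          Set.pi Set.univ (fun _ : Fin n => Set.Iic t) := by
        ext v
        simp only [Set.mem_setOf_eq, Set.mem_univ_pi, Set.mem_Iic]
        exact ciSup_le_iff (Set.Finite.bddAbove (Set.finite_range _))
      have h1' : {v : Fin n → ℝ | t < ⨆ j, v j} = {v : Fin n → ℝ | (⨆ j, v j) ≤ t}ᶜ := by
        ext v; simp [not_le]
      rw [h1', prob_compl_eq_one_sub
        (show MeasurableSet {v : Fin n → ℝ | (⨆ j, v j) ≤ t} from hsupm measurableSet_Iic),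
        hset, Measure.pi_pi]
      rw [Finset.prod_const, Finset.card_univ, Fintype.card_fin]
      congr 1
      congr 1
      rw [Measure.map_apply (hmeas i) measurableSet_Iic]
      rfl
    have hQanti : Antitone (fun t => (Measure.pi fun _ : Fin n => Measure.map (X i) P)
        {v : Fin n → ℝ | t < ⨆ j, v j}) :=
      fun a b hab => measure_mono (fun v h => lt_of_le_of_lt hab h)
    have hQfin : (∫⁻ t in Set.Ioi 0, (Measure.pi fun _ : Fin n => Measure.map (X i) P)
        {v : Fin n → ℝ | t < ⨆ j, v j}) ≠ ⊤ := by
      have hb : ∀ t : ℝ, (Measure.pi fun _ : Fin n => Measure.map (X i) P)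
          {v : Fin n → ℝ | t < ⨆ j, v j} ≤ ∑ _j : Fin n, P {ω | t < X i ω} := by
        intro t
        have hsub : {v : Fin n → ℝ | t < ⨆ j, v j} ⊆ ⋃ j, {v : Fin n → ℝ | v j ∈ Set.Ioi t} := by
          intro v hv
          by_contra hc
          simp only [Set.mem_iUnion, Set.mem_setOf_eq, Set.mem_Ioi, not_exists, not_lt] at hc
          exact absurd (ciSup_le hc) (not_le.mpr hv)
        refine le_trans (measure_mono hsub) (le_trans (measure_iUnion_fintype_le _ _) ?_)
        refine Finset.sum_le_sum fun j _ => ?_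
        rw [hcoordset j _ measurableSet_Ioi, Measure.map_apply (hmeas i) measurableSet_Ioi]
        rfl
      have hle : (∫⁻ t in Set.Ioi 0, (Measure.pi fun _ : Fin n => Measure.map (X i) P)
          {v : Fin n → ℝ | t < ⨆ j, v j}) ≤
          ∑ _j : Fin n, ∫⁻ t in Set.Ioi 0, P {ω | t < X i ω} := by
        calc _ ≤ ∫⁻ t in Set.Ioi 0, ∑ _j : Fin n, P {ω | t < X i ω} :=
            lintegral_mono fun t => hb t
          _ = _ := lintegral_finset_sum _ fun j _ => (hGeanti i).measurable
      exact ne_top_of_le_ne_top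
        (ENNReal.sum_lt_top.mpr fun j _ => (hGefin i).lt_top).ne hle
    have hpowle : ∀ t : ℝ, (P {ω | X i ω ≤ t}) ^ n ≤ 1 :=
      fun t => pow_le_one' (hFe1 i t) n
    rw [hM i]
    rw [integral_eq_lintegral_of_nonneg_ae hQnn hsupm.aestronglyMeasurable]
    rw [lintegral_eq_lintegral_meas_lt _ hQnn hsupm.aemeasurable]
    obtain ⟨-, heq⟩ := Stmt2Aux.toReal_repr hQanti.measurable (fun t => prob_le_one) hQfin
    rw [← heq]
    refine setIntegral_congr_fun measurableSet_Ioi fun t _ => ?_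
    rw [hQprob t]
    rw [ENNReal.toReal_sub_of_le (hpowle t) ENNReal.one_ne_top, ENNReal.toReal_one,
      ENNReal.toReal_pow]
  -- apply the core theorem
  have hcore := Stmt2Aux.core hn F hFmono hF0 hF1 hSint M hMrep hGint
  rw [hZrepr]
  exact hcore
end

section
/- For independent nonnegative integrable random variables X_1,...,X_n, if E[max(X_1,...,X_n)] = (M_1+...+M_n)/n (with M_i the expected maximum of n i.i.d. copies of X_i), then X_1,...,X_n are all identically distributed. -/
open MeasureTheory ProbabilityTheory Set Filter Topology ENNReal

section
variable {n : ℕ}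

lemma amgm_le (hn : 0 < n) (a : Fin n → ℝ) (ha : ∀ i, 0 ≤ a i) :
    (n : ℝ) * ∏ i, a i ≤ ∑ i, a i ^ n := by
  rcases Classical.em (∃ i, a i = 0) with ⟨i, hi⟩ | hpos
  · calc (n:ℝ) * ∏ i, a i = 0 := by rw [Finset.prod_eq_zero (Finset.mem_univ i) hi, mul_zero]
    _ ≤ ∑ i, a i ^ n := Finset.sum_nonneg fun i _ => pow_nonneg (ha i) n
  · push_neg at hpos
    have hpos' : ∀ i, 0 < a i := fun i => (ha i).lt_of_ne (fun h => hpos i h.symm)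
    have hn' : (n:ℝ) ≠ 0 := Nat.cast_ne_zero.mpr hn.ne'
    have key := convexOn_exp.map_sum_le (t := Finset.univ) (w := fun _ : Fin n => (n:ℝ)⁻¹)
      (p := fun i => (n:ℝ) * Real.log (a i))
      (fun i _ => by positivity) (by simp [Finset.sum_const]; field_simp)
      (fun i _ => Set.mem_univ _)
    have h1 : ∑ i, (n:ℝ)⁻¹ • ((n:ℝ) * Real.log (a i)) = ∑ i, Real.log (a i) := by
      congr 1; ext i; rw [smul_eq_mul]; field_simp
    have h2 : ∀ i, Real.exp ((n:ℝ) * Real.log (a i)) = a i ^ n := by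
      intro i
      rw [Real.exp_nat_mul, Real.exp_log (hpos' i)]
    rw [h1, Real.exp_sum] at key
    simp only [smul_eq_mul, h2] at key
    have h3 : ∏ i, Real.exp (Real.log (a i)) = ∏ i, a i := by
      congr 1; ext i; rw [Real.exp_log (hpos' i)]
    rw [h3, ← Finset.mul_sum] at key
    calc (n:ℝ) * ∏ i, a i ≤ (n:ℝ) * ((n:ℝ)⁻¹ * ∑ i, a i ^ n) :=
          mul_le_mul_of_nonneg_left key (Nat.cast_nonneg n)
      _ = ∑ i, a i ^ n := by field_simp

lemma amgm_eq (hn : 0 < n) (a : Fin n → ℝ) (ha : ∀ i, 0 ≤ a i)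
    (h : ∑ i, a i ^ n ≤ (n : ℝ) * ∏ i, a i) : ∀ i j, a i = a j := by
  rcases Classical.em (∃ i, a i = 0) with ⟨i, hi⟩ | hpos
  · have h0 : ∑ i, a i ^ n ≤ 0 := by
      rw [Finset.prod_eq_zero (Finset.mem_univ i) hi, mul_zero] at h; exact h
    have : ∀ j, a j = 0 := by
      intro j
      have hj : a j ^ n = 0 := by
        have := Finset.sum_nonneg (fun i (_ : i ∈ Finset.univ) => pow_nonneg (ha i) n)
        have hle : a j ^ n ≤ ∑ i, a i ^ n :=
          Finset.single_le_sum (fun i _ => pow_nonneg (ha i) n) (Finset.mem_univ j)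
        nlinarith [pow_nonneg (ha j) n]
      exact pow_eq_zero_iff hn.ne' |>.mp hj
    intro i' j'; rw [this i', this j']
  · push_neg at hpos
    have hpos' : ∀ i, 0 < a i := fun i => (ha i).lt_of_ne (fun h => hpos i h.symm)
    have hn' : (n:ℝ) ≠ 0 := Nat.cast_ne_zero.mpr hn.ne'
    have h1 : ∑ i, (n:ℝ)⁻¹ • ((n:ℝ) * Real.log (a i)) = ∑ i, Real.log (a i) := by
      congr 1; ext i; rw [smul_eq_mul]; field_simp
    have h2 : ∀ i, Real.exp ((n:ℝ) * Real.log (a i)) = a i ^ n := by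
      intro i
      rw [Real.exp_nat_mul, Real.exp_log (hpos' i)]
    have key := strictConvexOn_exp.eq_of_le_map_sum (t := Finset.univ)
      (w := fun _ : Fin n => (n:ℝ)⁻¹) (p := fun i => (n:ℝ) * Real.log (a i))
      (fun i _ => by positivity) (by simp [Finset.sum_const]; field_simp)
      (fun i _ => Set.mem_univ _) ?_
    · intro i j
      have := key (Finset.mem_univ i) (Finset.mem_univ j)
      have hlog : Real.log (a i) = Real.log (a j) := by
        have h' : (n:ℝ) * Real.log (a i) = (n:ℝ) * Real.log (a j) := this
        exact mul_left_cancel₀ hn' h'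
      calc a i = Real.exp (Real.log (a i)) := (Real.exp_log (hpos' i)).symm
        _ = Real.exp (Real.log (a j)) := by rw [hlog]
        _ = a j := Real.exp_log (hpos' j)
    · rw [h1, Real.exp_sum]
      simp only [smul_eq_mul, h2]
      have h3 : ∏ i, Real.exp (Real.log (a i)) = ∏ i, a i := by
        congr 1; ext i; rw [Real.exp_log (hpos' i)]
      rw [h3, ← Finset.mul_sum]
      calc (n:ℝ)⁻¹ * ∑ i, a i ^ n
          ≤ (n:ℝ)⁻¹ * ((n:ℝ) * ∏ i, a i) := by
            apply mul_le_mul_of_nonneg_left h; positivity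
        _ = ∏ i, a i := by field_simp

lemma map_eval_pi (ν : Measure ℝ) [IsProbabilityMeasure ν] (j : Fin n) :
    (Measure.pi fun _ : Fin n => ν).map (Function.eval j) = ν := by
  haveI : IsProbabilityMeasure (Measure.pi fun _ : Fin n => ν) := by infer_instance
  ext s hs
  rw [Measure.map_apply (measurable_pi_apply j) hs, Set.eval_preimage, Measure.pi_pi]
  rw [Finset.prod_eq_single j (fun b _ hb => by simp [Function.update_of_ne hb]) (by simp)]
  simp

end

theorem stmt_3 {Ω : Type*} [MeasurableSpace Ω] (P : Measure Ω) [IsProbabilityMeasure P]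
    (n : ℕ) (hn : 0 < n) (X : Fin n → Ω → ℝ)
    (hmeas : ∀ i, Measurable (X i))
    (hnonneg : ∀ i ω, 0 ≤ X i ω)
    (hint : ∀ i, Integrable (X i) P)
    (hindep : iIndepFun X P)
    (M : Fin n → ℝ)
    (hM : ∀ i, M i =
      ∫ v, (⨆ j, v j) ∂(Measure.pi fun _ : Fin n => Measure.map (X i) P))
    (heq : ∫ ω, ⨆ i, X i ω ∂P = (∑ i, M i) / n) :
    ∀ i j, Measure.map (X i) P = Measure.map (X j) P := by
  haveI hne : Nonempty (Fin n) := Fin.pos_iff_nonempty.mp hn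
  set ν : Fin n → Measure ℝ := fun i => P.map (X i) with hνdef
  have hprob : ∀ i, IsProbabilityMeasure (ν i) :=
    fun i => Measure.isProbabilityMeasure_map (hmeas i).aemeasurable
  haveI := fun i => hprob i
  -- basic facts
  have hbdd : ∀ (f : Fin n → ℝ), BddAbove (Set.range f) :=
    fun f => (Set.finite_range f).bddAbove
  have hG1 : ∀ i t, ν i (Iic t) ≤ 1 := fun i t => prob_le_one
  have hsetgen : ∀ (f : Fin n → ℝ) (t : ℝ), (t < ⨆ j, f j) ↔ ¬ (∀ j, f j ≤ t) := by
    intro f t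
    rw [← not_le, not_iff_not, ciSup_le_iff (hbdd f)]
  have hGne : ∀ i t, ν i (Iic t) ≠ ⊤ := fun i t => measure_ne_top _ _
  have hGmeas : ∀ i, Measurable (fun t => ν i (Iic t)) := by
    intro i
    exact Monotone.measurable (fun s t hst => measure_mono (Iic_subset_Iic.mpr hst))
  -- measurability of sups
  have hsup_meas : Measurable (fun ω => ⨆ i, X i ω) := by
    have h := Finset.measurable_sup' (Finset.univ_nonempty (α := Fin n)) (fun i _ => hmeas i)
    convert h using 1
    ext ω
    rw [Finset.sup'_apply, Finset.sup'_univ_eq_ciSup]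
  have hsupv_meas : Measurable (fun v : Fin n → ℝ => ⨆ j, v j) := by
    have h := Finset.measurable_sup' (Finset.univ_nonempty (α := Fin n))
      (fun i _ => (measurable_pi_apply i : Measurable fun v : Fin n → ℝ => v i))
    convert h using 1
    ext v
    rw [Finset.sup'_apply, Finset.sup'_univ_eq_ciSup]
  -- survival function of the max
  have h1 : ∀ t : ℝ, P {ω | t < ⨆ i, X i ω} = 1 - ∏ k, ν k (Iic t) := by
    intro t
    have hset : {ω | t < ⨆ i, X i ω} = (⋂ k, X k ⁻¹' Iic t)ᶜ := by
      ext ω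
      simp only [mem_setOf_eq, mem_compl_iff, mem_iInter, mem_preimage, mem_Iic,
        hsetgen (fun i => X i ω) t]
    have hmbl : MeasurableSet (⋂ k, X k ⁻¹' Iic t) :=
      MeasurableSet.iInter fun k => (hmeas k) measurableSet_Iic
    have hind := hindep.measure_inter_preimage_eq_mul Finset.univ
      (sets := fun _ => Iic t) (fun i _ => measurableSet_Iic)
    have hiInter : (⋂ k, X k ⁻¹' Iic t) = ⋂ k ∈ Finset.univ, X k ⁻¹' Iic t := by simp
    have hmap : ∀ k, ν k (Iic t) = P (X k ⁻¹' Iic t) := fun k =>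
      Measure.map_apply (hmeas k) measurableSet_Iic
    rw [hset, measure_compl hmbl (measure_ne_top _ _), measure_univ, hiInter, hind]
    congr 1
    exact Finset.prod_congr rfl fun k _ => (hmap k).symm
  -- survival function of the iid max
  have h2 : ∀ (i : Fin n) (t : ℝ),
      (Measure.pi fun _ : Fin n => ν i) {v | t < ⨆ j, v j} = 1 - (ν i (Iic t)) ^ n := by
    intro i t
    haveI : IsProbabilityMeasure (Measure.pi fun _ : Fin n => ν i) := by infer_instance
    have hset : {v : Fin n → ℝ | t < ⨆ j, v j} = (Set.pi Set.univ fun _ => Iic t)ᶜ := by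
      ext v
      simp only [mem_setOf_eq, mem_compl_iff, Set.mem_pi, Set.mem_univ, forall_true_left,
        mem_Iic, hsetgen v t]
    rw [hset, measure_compl (MeasurableSet.univ_pi fun _ => measurableSet_Iic)
      (measure_ne_top _ _), measure_univ, Measure.pi_pi]
    congr 1
    rw [Finset.prod_const, Finset.card_univ, Fintype.card_fin]
  -- finiteness of the coordinate lintegrals
  have hfinX : ∀ i, ∫⁻ ω, ENNReal.ofReal (X i ω) ∂P ≠ ⊤ := by
    intro i
    have h := (hint i).hasFiniteIntegral
    rw [hasFiniteIntegral_iff_ofReal (ae_of_all _ (hnonneg i))] at h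
    exact h.ne
  -- layer cake for the max
  have hofmax : ENNReal.ofReal (∫ ω, ⨆ i, X i ω ∂P) = ∫⁻ t in Ioi 0, P {ω | t < ⨆ i, X i ω} := by
    have hnn : 0 ≤ᵐ[P] fun ω => ⨆ i, X i ω := ae_of_all _ fun ω =>
      le_trans (hnonneg (Classical.arbitrary _) ω)
        (le_ciSup (f := fun i => X i ω) (hbdd _) (Classical.arbitrary _))
    rw [integral_eq_lintegral_of_nonneg_ae hnn hsup_meas.aestronglyMeasurable]
    rw [ENNReal.ofReal_toReal, lintegral_eq_lintegral_meas_lt P hnn hsup_meas.aemeasurable]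
    -- finiteness
    have hb : ∀ ω, ENNReal.ofReal (⨆ i, X i ω) ≤ ∑ i, ENNReal.ofReal (X i ω) := by
      intro ω
      calc ENNReal.ofReal (⨆ i, X i ω) ≤ ENNReal.ofReal (∑ i, X i ω) := by
            apply ENNReal.ofReal_le_ofReal
            exact ciSup_le fun i => Finset.single_le_sum (fun k _ => hnonneg k ω)
              (Finset.mem_univ i)
        _ = ∑ i, ENNReal.ofReal (X i ω) :=
            ENNReal.ofReal_sum_of_nonneg fun i _ => hnonneg i ω
    have : ∫⁻ ω, ENNReal.ofReal (⨆ i, X i ω) ∂P ≤ ∑ i, ∫⁻ ω, ENNReal.ofReal (X i ω) ∂P := by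
      calc ∫⁻ ω, ENNReal.ofReal (⨆ i, X i ω) ∂P
          ≤ ∫⁻ ω, ∑ i, ENNReal.ofReal (X i ω) ∂P := lintegral_mono hb
        _ = ∑ i, ∫⁻ ω, ENNReal.ofReal (X i ω) ∂P :=
            lintegral_finset_sum _ fun i _ => (ENNReal.measurable_ofReal.comp (hmeas i))
    exact (this.trans_lt (ENNReal.sum_lt_top.mpr fun i _ => (hfinX i).lt_top)).ne
  -- layer cake for the M i
  have hofM : ∀ i, 0 ≤ M i ∧ ENNReal.ofReal (M i)
      = ∫⁻ t in Ioi 0, (Measure.pi fun _ : Fin n => ν i) {v | t < ⨆ j, v j} := by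
    intro i
    haveI : IsProbabilityMeasure (Measure.pi fun _ : Fin n => ν i) := by infer_instance
    have hzero : ν i (Iio 0) = 0 := by
      rw [show ν i = P.map (X i) from rfl, Measure.map_apply (hmeas i) measurableSet_Iio]
      have hemp : X i ⁻¹' Iio 0 = ∅ := by
        ext ω
        simp only [mem_preimage, mem_Iio, mem_empty_iff_false, iff_false, not_lt]
        exact hnonneg i ω
      rw [hemp]
      exact measure_empty
    have hco : ∀ᵐ v ∂(Measure.pi fun _ : Fin n => ν i), ∀ j, 0 ≤ v j := by
      rw [ae_all_iff]
      intro j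
      have h0 : (Measure.pi fun _ : Fin n => ν i) (Function.eval j ⁻¹' Iio 0) = 0 :=
        Measure.pi_eval_preimage_null (μ := fun _ : Fin n => ν i) hzero
      rw [ae_iff]
      convert h0 using 2
      ext v
      simp [Function.eval, not_le]
    have hnn : 0 ≤ᵐ[(Measure.pi fun _ : Fin n => ν i)] fun v => ⨆ j, v j := by
      filter_upwards [hco] with v hv
      exact le_trans (hv (Classical.arbitrary _))
        (le_ciSup (f := fun j => v j) (hbdd _) (Classical.arbitrary _))
    constructor
    · rw [hM i]
      exact integral_nonneg_of_ae hnn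
    rw [hM i, integral_eq_lintegral_of_nonneg_ae hnn hsupv_meas.aestronglyMeasurable]
    rw [ENNReal.ofReal_toReal, lintegral_eq_lintegral_meas_lt _ hnn hsupv_meas.aemeasurable]
    -- finiteness
    have hb : ∀ᵐ v ∂(Measure.pi fun _ : Fin n => ν i),
        ENNReal.ofReal (⨆ j, v j) ≤ ∑ j, ENNReal.ofReal (v j) := by
      filter_upwards [hco] with v hv
      calc ENNReal.ofReal (⨆ j, v j) ≤ ENNReal.ofReal (∑ j, v j) := by
            apply ENNReal.ofReal_le_ofReal
            exact ciSup_le fun j => Finset.single_le_sum (fun k _ => hv k) (Finset.mem_univ j)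
        _ = ∑ j, ENNReal.ofReal (v j) := ENNReal.ofReal_sum_of_nonneg fun j _ => hv j
    have hcoord : ∀ j : Fin n, ∫⁻ v, ENNReal.ofReal (v j) ∂(Measure.pi fun _ : Fin n => ν i)
        = ∫⁻ ω, ENNReal.ofReal (X i ω) ∂P := by
      intro j
      have he : ∫⁻ v, ENNReal.ofReal (v j) ∂(Measure.pi fun _ : Fin n => ν i)
          = ∫⁻ x, ENNReal.ofReal x ∂((Measure.pi fun _ : Fin n => ν i).map (Function.eval j)) := by
        rw [lintegral_map ENNReal.measurable_ofReal (measurable_pi_apply j)]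
      rw [he, _root_.map_eval_pi, show ν i = P.map (X i) from rfl,
        lintegral_map ENNReal.measurable_ofReal (hmeas i)]
    have hfin2 : ∫⁻ v, ENNReal.ofReal (⨆ j, v j) ∂(Measure.pi fun _ : Fin n => ν i) ≠ ⊤ := by
      have hle : ∫⁻ v, ENNReal.ofReal (⨆ j, v j) ∂(Measure.pi fun _ : Fin n => ν i)
          ≤ ∑ j : Fin n, ∫⁻ ω, ENNReal.ofReal (X i ω) ∂P := by
        calc ∫⁻ v, ENNReal.ofReal (⨆ j, v j) ∂(Measure.pi fun _ : Fin n => ν i)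
            ≤ ∫⁻ v, ∑ j, ENNReal.ofReal (v j) ∂(Measure.pi fun _ : Fin n => ν i) :=
              lintegral_mono_ae hb
          _ = ∑ j : Fin n, ∫⁻ v, ENNReal.ofReal (v j) ∂(Measure.pi fun _ : Fin n => ν i) :=
              lintegral_finset_sum _ fun j _ =>
                ENNReal.measurable_ofReal.comp (measurable_pi_apply j)
          _ = ∑ j : Fin n, ∫⁻ ω, ENNReal.ofReal (X i ω) ∂P :=
              Finset.sum_congr rfl fun j _ => hcoord j
      exact (hle.trans_lt (ENNReal.sum_lt_top.mpr fun j _ => (hfinX i).lt_top)).ne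
    exact hfin2
  -- the two lintegrals
  set A : ℝ≥0∞ := (∫⁻ t in Ioi (0:ℝ), (1 - ∏ k, ν k (Iic t))) with hAdef
  set B : Fin n → ℝ≥0∞ := fun i => (∫⁻ t in Ioi (0:ℝ), (1 - (ν i (Iic t)) ^ n)) with hBdef
  have hA : ENNReal.ofReal (∫ ω, ⨆ i, X i ω ∂P) = A := by
    rw [hofmax]
    exact lintegral_congr fun t => h1 t
  have hB : ∀ i, ENNReal.ofReal (M i) = B i := by
    intro i
    rw [(hofM i).2]
    exact lintegral_congr fun t => h2 i t
  have hAfin : A ≠ ⊤ := by rw [← hA]; exact ENNReal.ofReal_ne_top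
  have hmulreal : (n : ℝ) * ∫ ω, ⨆ i, X i ω ∂P = ∑ i, M i := by
    rw [heq]
    field_simp
  have hsum : (n : ℝ≥0∞) * A = ∑ i, B i := by
    calc (n : ℝ≥0∞) * A = ENNReal.ofReal ((n : ℝ) * ∫ ω, ⨆ i, X i ω ∂P) := by
          rw [ENNReal.ofReal_mul (Nat.cast_nonneg n), ENNReal.ofReal_natCast, hA]
      _ = ENNReal.ofReal (∑ i, M i) := by rw [hmulreal]
      _ = ∑ i, ENNReal.ofReal (M i) := ENNReal.ofReal_sum_of_nonneg fun i _ => (hofM i).1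
      _ = ∑ i, B i := Finset.sum_congr rfl fun i _ => hB i
  -- bounds
  have hpow_le : ∀ k t, (ν k (Iic t)) ^ n ≤ 1 := fun k t => pow_le_one' (hG1 k t) n
  have hprod_le : ∀ t, (∏ k, ν k (Iic t)) ≤ 1 :=
    fun t => Finset.prod_le_one (fun k _ => zero_le) (fun k _ => hG1 k t)
  have hLfin : ∀ t : ℝ, (∑ k, (1 - (ν k (Iic t)) ^ n)) ≠ ⊤ := fun t =>
    (ENNReal.sum_lt_top.mpr fun k _ =>
      lt_of_le_of_lt tsub_le_self ENNReal.one_lt_top).ne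
  have hRfin : ∀ t : ℝ, ((n : ℝ≥0∞) * (1 - ∏ k, ν k (Iic t))) ≠ ⊤ := fun t =>
    ENNReal.mul_ne_top (ENNReal.natCast_ne_top n)
      (lt_of_le_of_lt tsub_le_self ENNReal.one_lt_top).ne
  -- toReal computations
  have hcalcL : ∀ t : ℝ, (∑ k, (1 - (ν k (Iic t)) ^ n)).toReal
      = ∑ k, (1 - ((ν k (Iic t)).toReal) ^ n) := by
    intro t
    rw [ENNReal.toReal_sum (fun k _ => (lt_of_le_of_lt tsub_le_self ENNReal.one_lt_top).ne)]
    refine Finset.sum_congr rfl fun k _ => ?_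
    rw [ENNReal.toReal_sub_of_le (hpow_le k t) ENNReal.one_ne_top, ENNReal.toReal_one,
      ENNReal.toReal_pow]
  have hcalcR : ∀ t : ℝ, ((n : ℝ≥0∞) * (1 - ∏ k, ν k (Iic t))).toReal
      = (n : ℝ) * (1 - ∏ k, (ν k (Iic t)).toReal) := by
    intro t
    rw [ENNReal.toReal_mul, ENNReal.toReal_natCast,
      ENNReal.toReal_sub_of_le (hprod_le t) ENNReal.one_ne_top, ENNReal.toReal_one,
      ENNReal.toReal_prod]
  have hx0 : ∀ k (t : ℝ), 0 ≤ (ν k (Iic t)).toReal := fun k t => ENNReal.toReal_nonneg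
  have hsplit : ∀ t : ℝ, ∑ k, (1 - ((ν k (Iic t)).toReal) ^ n)
      = (n : ℝ) - ∑ k, ((ν k (Iic t)).toReal) ^ n := by
    intro t
    rw [Finset.sum_sub_distrib, Finset.sum_const, Finset.card_univ, Fintype.card_fin,
      nsmul_eq_mul, mul_one]
  -- pointwise inequality
  have hpt : ∀ t : ℝ, ∑ k, (1 - (ν k (Iic t)) ^ n)
      ≤ (n : ℝ≥0∞) * (1 - ∏ k, ν k (Iic t)) := by
    intro t
    rw [← ENNReal.toReal_le_toReal (hLfin t) (hRfin t), hcalcL t, hcalcR t, hsplit t]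
    have hle := amgm_le hn (fun k => (ν k (Iic t)).toReal) (fun k => hx0 k t)
    linarith
  -- measurability
  have hmeasB : ∀ k, Measurable fun t : ℝ => (1 : ℝ≥0∞) - (ν k (Iic t)) ^ n :=
    fun k => measurable_const.sub ((hGmeas k).pow_const n)
  have hmeasP : Measurable fun t : ℝ => (1 : ℝ≥0∞) - ∏ k, ν k (Iic t) :=
    measurable_const.sub (Finset.measurable_prod Finset.univ fun k _ => hGmeas k)
  have hLf : ∫⁻ t in Ioi 0, ∑ k, (1 - (ν k (Iic t)) ^ n) = ∑ k, B k :=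
    lintegral_finset_sum _ fun k _ => hmeasB k
  have hLg : ∫⁻ t in Ioi 0, (n : ℝ≥0∞) * (1 - ∏ k, ν k (Iic t)) = (n : ℝ≥0∞) * A :=
    lintegral_const_mul _ hmeasP
  -- a.e. equality
  have hae : (fun t => ∑ k, (1 - (ν k (Iic t)) ^ n))
      =ᵐ[volume.restrict (Ioi 0)] fun t => (n : ℝ≥0∞) * (1 - ∏ k, ν k (Iic t)) := by
    refine ae_eq_of_ae_le_of_lintegral_le (ae_of_all _ hpt) ?_
      (hmeasP.const_mul _).aemeasurable ?_
    · rw [hLf, ← hsum]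
      exact ENNReal.mul_ne_top (ENNReal.natCast_ne_top n) hAfin
    · rw [hLf, hLg, hsum]
  have hQ : ∀ᵐ t ∂volume.restrict (Ioi 0), ∀ k l, ν k (Iic t) = ν l (Iic t) := by
    filter_upwards [hae] with t ht
    have htr : ∑ k, (1 - ((ν k (Iic t)).toReal) ^ n)
        = (n : ℝ) * (1 - ∏ k, (ν k (Iic t)).toReal) := by
      rw [← hcalcL t, ← hcalcR t, ht]
    rw [hsplit t] at htr
    have hle : ∑ k, ((ν k (Iic t)).toReal) ^ n ≤ (n : ℝ) * ∏ k, (ν k (Iic t)).toReal := by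
      linarith
    have := amgm_eq hn (fun k => (ν k (Iic t)).toReal) (fun k => hx0 k t) hle
    intro k l
    exact (ENNReal.toReal_eq_toReal_iff' (hGne k t) (hGne l t)).mp (this k l)
  -- conclude via cdf and right continuity
  intro i j
  have hQ' : ∀ᵐ t : ℝ, t ∈ Ioi (0:ℝ) → ν i (Iic t) = ν j (Iic t) := by
    have h := (ae_restrict_iff' measurableSet_Ioi).mp hQ
    filter_upwards [h] with t ht hmem
    exact ht hmem i j
  have hneg : ∀ t : ℝ, t < 0 → ∀ k, ν k (Iic t) = 0 := by
    intro t ht k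
    rw [show ν k = P.map (X k) from rfl, Measure.map_apply (hmeas k) measurableSet_Iic]
    have hemp : X k ⁻¹' Iic t = ∅ := by
      ext ω
      simp only [mem_preimage, mem_Iic, mem_empty_iff_false, iff_false, not_le]
      exact lt_of_lt_of_le ht (hnonneg k ω)
    rw [hemp]
    exact measure_empty
  set A' : Set ℝ := {t | ν i (Iic t) = ν j (Iic t)} with hA'def
  have hA'ae : ∀ᵐ t : ℝ, t ∈ A' := by
    have h0 : ∀ᵐ t : ℝ, t ≠ 0 := by
      rw [ae_iff]
      have : {a : ℝ | ¬ a ≠ 0} = {0} := by ext t; simp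
      rw [this]
      exact measure_singleton 0
    filter_upwards [hQ', h0] with t ht ht0
    rcases lt_trichotomy t 0 with h | h | h
    · show ν i (Iic t) = ν j (Iic t)
      rw [hneg t h i, hneg t h j]
    · exact absurd h ht0
    · exact ht h
  have hdense : ∀ x : ℝ, ∀ δ : ℝ, 0 < δ → ∃ t, t ∈ A' ∧ x < t ∧ t < x + δ := by
    intro x δ hδ
    by_contra hcon
    push_neg at hcon
    have hsub : Ioo x (x + δ) ⊆ {t | ¬ t ∈ A'} := by
      intro t ht htA
      exact absurd (hcon t htA ht.1) (not_le.mpr ht.2)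
    have hnull : volume (Ioo x (x + δ)) = 0 := by
      apply measure_mono_null hsub
      rw [← ae_iff] at *
      exact hA'ae
    rw [Real.volume_Ioo] at hnull
    have : x + δ - x ≤ 0 := by
      by_contra hpos
      push_neg at hpos
      rw [ENNReal.ofReal_eq_zero] at hnull
      linarith
    linarith
  have hcdf : cdf (ν i) = cdf (ν j) := by
    ext x
    have hu : ∀ m : ℕ, ∃ t, t ∈ A' ∧ x < t ∧ t < x + 1 / (m + 1) :=
      fun m => hdense x (1 / (m + 1)) (by positivity)
    choose u hu1 hu2 hu3 using hu
    have hulim : Tendsto u atTop (𝓝 x) := by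
      have h1 : Tendsto (fun m : ℕ => x + 1 / (m + 1 : ℝ)) atTop (𝓝 (x + 0)) :=
        tendsto_const_nhds.add tendsto_one_div_add_atTop_nhds_zero_nat
      rw [add_zero] at h1
      exact tendsto_of_tendsto_of_tendsto_of_le_of_le tendsto_const_nhds h1
        (fun m => (hu2 m).le) (fun m => (hu3 m).le)
    have hclos : x ∈ closure (A' ∩ Ioi x) :=
      mem_closure_of_tendsto hulim (Eventually.of_forall fun m => ⟨hu1 m, hu2 m⟩)
    haveI hnb : (𝓝[A' ∩ Ioi x] x).NeBot := mem_closure_iff_nhdsWithin_neBot.mp hclos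
    have hsub2 : A' ∩ Ioi x ⊆ Ici x := fun t ht => mem_Ici.mpr (ht.2 : x < t).le
    have hfi : Tendsto (cdf (ν i)) (𝓝[A' ∩ Ioi x] x) (𝓝 (cdf (ν i) x)) :=
      ((cdf (ν i)).right_continuous x).mono_left (nhdsWithin_mono x hsub2)
    have hfj : Tendsto (cdf (ν j)) (𝓝[A' ∩ Ioi x] x) (𝓝 (cdf (ν j) x)) :=
      ((cdf (ν j)).right_continuous x).mono_left (nhdsWithin_mono x hsub2)
    have heqev : (cdf (ν i) : ℝ → ℝ) =ᶠ[𝓝[A' ∩ Ioi x] x] (cdf (ν j) : ℝ → ℝ) := by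
      filter_upwards [self_mem_nhdsWithin] with t ht
      rw [cdf_eq_real, cdf_eq_real]
      exact congrArg ENNReal.toReal ht.1
    exact tendsto_nhds_unique (Tendsto.congr' heqev hfi) hfj
  exact Measure.eq_of_cdf _ _ hcdf
end

section
/- If X_1,...,X_n are independent random variables each taking values in [0,b], and M_i is the expected maximum of n i.i.d. copies of X_i, then E[max(X_1,...,X_n)] ≥ b − ∏_{i=1}^n (b − M_i)^{1/n}. -/
open MeasureTheory ProbabilityTheory

lemma tail_formula {Ω' : Type*} [MeasurableSpace Ω'] (ν : Measure Ω') [IsProbabilityMeasure ν]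
    {b : ℝ} (hb : 0 < b) {Y : Ω' → ℝ} (hY : Measurable Y)
    (h0 : ∀ᵐ ω ∂ν, Y ω ∈ Set.Icc 0 b) :
    ∫ ω, Y ω ∂ν = b - ∫ t in Set.Ioc 0 b, (ν {ω | Y ω < t}).toReal := by
  have hint : Integrable Y ν := by
    refine (integrable_const b).mono' hY.aestronglyMeasurable ?_
    filter_upwards [h0] with ω hω
    rw [Real.norm_eq_abs, abs_le]
    exact ⟨neg_nonpos_of_nonneg hb.le |>.trans hω.1, hω.2⟩
  have hkey := hint.integral_eq_integral_Ioc_meas_le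
    (by filter_upwards [h0] with ω hω using hω.1)
    (by filter_upwards [h0] with ω hω using hω.2)
  rw [hkey]
  have hcompl : ∀ t : ℝ, (ν {ω | t ≤ Y ω}).toReal = 1 - (ν {ω | Y ω < t}).toReal := by
    intro t
    have hs : MeasurableSet {ω | Y ω < t} := hY measurableSet_Iio
    have : {ω | t ≤ Y ω} = {ω | Y ω < t}ᶜ := by ext ω; simp [not_lt]
    rw [this, measure_compl hs (measure_ne_top _ _), measure_univ,
      ENNReal.toReal_sub_of_le prob_le_one ENNReal.one_ne_top, ENNReal.toReal_one]
  have hmono : Monotone fun t : ℝ => (ν {ω | Y ω < t}).toReal := by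
    intro s t hst
    exact ENNReal.toReal_mono (measure_ne_top _ _)
      (measure_mono fun ω h => lt_of_lt_of_le h hst)
  haveI : IsFiniteMeasure (volume.restrict (Set.Ioc (0:ℝ) b)) := by
    constructor
    rw [Measure.restrict_apply_univ, Real.volume_Ioc]
    exact ENNReal.ofReal_lt_top
  have hintg : Integrable (fun t : ℝ => (ν {ω | Y ω < t}).toReal)
      (volume.restrict (Set.Ioc 0 b)) := by
    refine (integrable_const 1).mono' (hmono.measurable.aestronglyMeasurable) ?_
    refine Filter.Eventually.of_forall fun t => ?_
    rw [Real.norm_eq_abs, abs_of_nonneg ENNReal.toReal_nonneg]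
    exact ENNReal.toReal_le_of_le_ofReal zero_le_one (by simpa using prob_le_one)
  calc ∫ t in Set.Ioc 0 b, (ν {ω | t ≤ Y ω}).toReal
      = ∫ t in Set.Ioc 0 b, (1 - (ν {ω | Y ω < t}).toReal) := by
        exact integral_congr_ae (Filter.Eventually.of_forall fun t => hcompl t)
    _ = b - ∫ t in Set.Ioc 0 b, (ν {ω | Y ω < t}).toReal := by
        rw [integral_sub (integrable_const 1) hintg, integral_const,
          measureReal_restrict_apply_univ, Real.volume_real_Ioc, smul_eq_mul, mul_one,
          max_eq_left (by linarith), sub_zero]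

theorem stmt_8 {Ω : Type*} [MeasurableSpace Ω] (P : Measure Ω) [IsProbabilityMeasure P]
    (n : ℕ) (hn : 0 < n) (b : ℝ) (hb : 0 < b) (X : Fin n → Ω → ℝ)
    (hmeas : ∀ i, Measurable (X i))
    (hbound : ∀ i ω, X i ω ∈ Set.Icc 0 b)
    (hindep : iIndepFun X P)
    (M : Fin n → ℝ)
    (hM : ∀ i, M i =
      ∫ v, (⨆ j, v j) ∂(Measure.pi fun _ : Fin n => Measure.map (X i) P)) :
    b - ∏ i, (b - M i) ^ ((n : ℝ)⁻¹) ≤ ∫ ω, ⨆ i, X i ω ∂P := by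
  haveI : Nonempty (Fin n) := ⟨(⟨0, hn⟩ : Fin n)⟩
  classical
  set q : Fin n → ℝ → ENNReal := fun i t => P (X i ⁻¹' Set.Iio t) with hq
  have hqmono : ∀ i, Monotone (q i) := fun i s t hst =>
    measure_mono (Set.preimage_mono (Set.Iio_subset_Iio hst))
  have hqmeas : ∀ i, Measurable (q i) := fun i => (hqmono i).measurable
  have hqle : ∀ i t, q i t ≤ 1 := fun i t => prob_le_one
  -- Step 1 : formula for E[sup]
  have hsupmeas : Measurable fun ω => ⨆ i, X i ω := Measurable.iSup hmeas
  have hstep1 : ∫ ω, ⨆ i, X i ω ∂P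
      = b - ∫ t in Set.Ioc 0 b, (∏ i, q i t).toReal := by
    have hbd1 : ∀ ω, (⨆ i, X i ω) ∈ Set.Icc 0 b := fun ω =>
      ⟨(hbound (⟨0, hn⟩ : Fin n) ω).1.trans
        (le_ciSup (f := fun i => X i ω) (Set.Finite.bddAbove (Set.finite_range _)) (⟨0, hn⟩ : Fin n)),
       ciSup_le fun i => (hbound i ω).2⟩
    rw [tail_formula P hb hsupmeas (Filter.Eventually.of_forall hbd1)]
    congr 1
    refine integral_congr_ae (Filter.Eventually.of_forall fun t => ?_)
    beta_reduce
    congr 1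
    have hset : {ω | (⨆ i, X i ω) < t} = ⋂ i, X i ⁻¹' Set.Iio t := by
      ext ω
      simp only [Set.mem_setOf_eq, Set.mem_iInter, Set.mem_preimage, Set.mem_Iio]
      constructor
      · intro h i
        exact lt_of_le_of_lt (le_ciSup (f := fun i => X i ω) (Set.Finite.bddAbove (Set.finite_range _)) i) h
      · intro h
        obtain ⟨i, hi⟩ := Finite.exists_max fun i => X i ω
        exact lt_of_le_of_lt (ciSup_le hi) (h i)
    rw [hset, hindep.meas_iInter fun i => ⟨Set.Iio t, measurableSet_Iio, rfl⟩]
  -- Step 2 : formula for b - M i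
  have hstep2 : ∀ i, b - M i = ∫ t in Set.Ioc 0 b, ((q i t) ^ n).toReal := by
    intro i
    haveI : IsProbabilityMeasure (Measure.map (X i) P) :=
      Measure.isProbabilityMeasure_map (hmeas i).aemeasurable
    set ν := Measure.pi fun _ : Fin n => Measure.map (X i) P with hνdef
    have hYmeas : Measurable fun v : Fin n → ℝ => ⨆ j, v j :=
      Measurable.iSup fun j => measurable_pi_apply j
    have hIcc : Measure.map (X i) P (Set.Icc 0 b) = 1 := by
      have huniv : X i ⁻¹' Set.Icc 0 b = Set.univ :=
        Set.eq_univ_of_forall fun ω => hbound i ω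
      rw [Measure.map_apply (hmeas i) measurableSet_Icc, huniv, measure_univ]
    have hbd : ∀ᵐ v ∂ν, (⨆ j, v j) ∈ Set.Icc (0:ℝ) b := by
      have h1 : ν (Set.pi Set.univ fun _ => Set.Icc (0:ℝ) b) = 1 := by
        rw [hνdef, Measure.pi_pi]
        simp [hIcc]
      have hc : ν (Set.pi Set.univ fun _ : Fin n => Set.Icc (0:ℝ) b)ᶜ = 0 := by
        rw [measure_compl (MeasurableSet.univ_pi fun _ => measurableSet_Icc)
          (measure_ne_top _ _), h1, measure_univ, tsub_self]
      have h2 : ∀ᵐ v ∂ν, v ∈ Set.pi Set.univ fun _ => Set.Icc (0:ℝ) b := by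
        have := measure_eq_zero_iff_ae_notMem.mp hc
        filter_upwards [this] with v hv
        exact Set.not_notMem.mp hv
      filter_upwards [h2] with v hv
      exact ⟨(hv (⟨0, hn⟩ : Fin n) trivial).1.trans
          (le_ciSup (f := fun j => v j) (Set.Finite.bddAbove (Set.finite_range _)) (⟨0, hn⟩ : Fin n)),
        ciSup_le fun j => (hv j trivial).2⟩
    have hν : ∀ t : ℝ, ν {v : Fin n → ℝ | (⨆ j, v j) < t} = q i t ^ n := by
      intro t
      have hset : {v : Fin n → ℝ | (⨆ j, v j) < t}
          = Set.pi Set.univ fun _ => Set.Iio t := by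
        ext v
        simp only [Set.mem_setOf_eq, Set.mem_pi, Set.mem_univ, forall_true_left,
          Set.mem_Iio]
        constructor
        · intro h j
          exact lt_of_le_of_lt (le_ciSup (f := fun j => v j) (Set.Finite.bddAbove (Set.finite_range _)) j) h
        · intro h
          obtain ⟨j, hj⟩ := Finite.exists_max fun j => v j
          exact lt_of_le_of_lt (ciSup_le hj) (h j)
      rw [hset, hνdef, Measure.pi_pi]
      rw [Measure.map_apply (hmeas i) measurableSet_Iio]
      simp [hq, Finset.prod_const, Finset.card_univ]
    have hMi : M i = b - ∫ t in Set.Ioc 0 b, ((q i t) ^ n).toReal := by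
      rw [hM i, tail_formula ν hb hYmeas hbd]
      congr 1
      refine integral_congr_ae (Filter.Eventually.of_forall fun t => ?_)
      simp only [hν]
    rw [hMi]; ring
  -- Step 3 : Hölder
  set L : Fin n → ENNReal := fun i => ∫⁻ t in Set.Ioc 0 b, (q i t) ^ n with hL
  have hLfin : ∀ i, L i < ⊤ := by
    intro i
    have h1 : L i ≤ ∫⁻ t in Set.Ioc (0:ℝ) b, 1 :=
      lintegral_mono fun t => pow_le_one' (hqle i t) n
    have h2 : (∫⁻ t in Set.Ioc (0:ℝ) b, 1) = ENNReal.ofReal b := by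
      rw [setLIntegral_one, Real.volume_Ioc, sub_zero]
    exact lt_of_le_of_lt (h1.trans h2.le) ENNReal.ofReal_lt_top
  have hholder : ∫⁻ t in Set.Ioc (0:ℝ) b, ∏ i, q i t
      ≤ ∏ i, (L i) ^ ((n : ℝ)⁻¹) := by
    have hsum : ∑ _i : Fin n, (n : ℝ)⁻¹ = 1 := by
      rw [Finset.sum_const, Finset.card_univ, Fintype.card_fin, nsmul_eq_mul]
      field_simp
    have key := ENNReal.lintegral_prod_norm_pow_le (μ := volume.restrict (Set.Ioc 0 b))
      Finset.univ (f := fun i t => (q i t) ^ n)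
      (fun i _ => ((hqmeas i).pow_const n).aemeasurable)
      (p := fun _ => (n : ℝ)⁻¹) hsum (fun i _ => by positivity)
    have hpow : ∀ (i : Fin n) (t : ℝ), ((q i t) ^ n) ^ ((n : ℝ)⁻¹) = q i t := by
      intro i t
      rw [← ENNReal.rpow_natCast (q i t) n, ← ENNReal.rpow_mul,
        mul_inv_cancel₀ (by exact_mod_cast hn.ne'), ENNReal.rpow_one]
    calc ∫⁻ t in Set.Ioc (0:ℝ) b, ∏ i, q i t
        = ∫⁻ t in Set.Ioc (0:ℝ) b, ∏ i, ((q i t) ^ n) ^ ((n : ℝ)⁻¹) := by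
          refine lintegral_congr fun t => ?_
          exact Finset.prod_congr rfl fun i _ => (hpow i t).symm
      _ ≤ ∏ i, (L i) ^ ((n : ℝ)⁻¹) := key
  -- Step 4 : convert to reals
  have hreal1 : ∫ t in Set.Ioc 0 b, (∏ i, q i t).toReal
      = (∫⁻ t in Set.Ioc (0:ℝ) b, ∏ i, q i t).toReal := by
    refine integral_toReal ?_ ?_
    · exact (Finset.measurable_prod Finset.univ fun i _ => hqmeas i).aemeasurable
    · refine Filter.Eventually.of_forall fun t => ?_
      exact lt_of_le_of_lt (Finset.prod_le_one (fun i _ => zero_le)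
        (fun i _ => hqle i t)) ENNReal.one_lt_top
  have hreal2 : ∀ i, b - M i = (L i).toReal := by
    intro i
    rw [hstep2 i]
    exact integral_toReal ((hqmeas i).pow_const n).aemeasurable
      (Filter.Eventually.of_forall fun t =>
        lt_of_le_of_lt (pow_le_one' (hqle i t) n) ENNReal.one_lt_top)
  have hrhs : ∏ i, (b - M i) ^ ((n : ℝ)⁻¹)
      = (∏ i, (L i) ^ ((n : ℝ)⁻¹)).toReal := by
    rw [ENNReal.toReal_prod]
    refine Finset.prod_congr rfl fun i _ => ?_
    rw [hreal2 i, ENNReal.toReal_rpow]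
  have hrhsfin : (∏ i, (L i) ^ ((n : ℝ)⁻¹)) ≠ ⊤ := by
    refine (ENNReal.prod_lt_top fun i _ => ?_).ne
    exact ENNReal.rpow_lt_top_of_nonneg (by positivity) (hLfin i).ne
  have hle : (∫⁻ t in Set.Ioc (0:ℝ) b, ∏ i, q i t).toReal
      ≤ (∏ i, (L i) ^ ((n : ℝ)⁻¹)).toReal :=
    ENNReal.toReal_mono hrhsfin hholder
  rw [hstep1, hreal1, hrhs]
  linarith
end

section
/- For fixed u > v > 0 and integer n ≥ 2, the function φ(p) = u·p + v·(1−p)/(1−p^n) on [0,1) (extended at p=1 by continuity with value u + v/n) is increasing, with φ(0) = v and φ(1) = u + v/n. -/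
open Finset

theorem stmt_11 (n : ℕ) (hn : 2 ≤ n) (u v : ℝ) (hv : 0 < v) (huv : v < u)
    (φ : ℝ → ℝ)
    (hφ : ∀ p ∈ Set.Ico (0 : ℝ) 1, φ p = u * p + v * (1 - p) / (1 - p ^ n))
    (hφ1 : φ 1 = u + v / n) :
    MonotoneOn φ (Set.Icc 0 1) ∧ φ 0 = v ∧ φ 1 = u + v / n := by
  set S : ℝ → ℝ := fun x => ∑ i ∈ range n, x ^ i with hS
  have hS1 : ∀ x : ℝ, 0 ≤ x → 1 ≤ S x := by
    intro x hx
    have h0 : x ^ 0 ≤ S x :=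
      Finset.single_le_sum (f := fun i => x ^ i) (fun i _ => pow_nonneg hx i)
        (mem_range.mpr (by omega))
    simpa using h0
  have key : ∀ p q : ℝ, 0 ≤ p → p ≤ q → q ≤ 1 →
      S q - S p ≤ (q - p) * (S p * S q) := by
    intro p q hp hpq hq1
    have hq0 : 0 ≤ q := hp.trans hpq
    have h1 : S q - S p = (q - p) *
        ∑ i ∈ range n, ∑ j ∈ range i, q ^ j * p ^ (i - 1 - j) := by
      rw [hS, Finset.mul_sum, ← Finset.sum_sub_distrib]
      refine Finset.sum_congr rfl fun i _ => ?_
      rw [← geom_sum₂_mul q p i]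
      ring
    have h2 : (∑ i ∈ range n, ∑ j ∈ range i, q ^ j * p ^ (i - 1 - j))
        ≤ S p * S q := by
      have hswap :
          (∑ i ∈ range n, ∑ j ∈ range i, q ^ j * p ^ (i - 1 - j)) =
          ∑ i ∈ range n, ∑ j ∈ Finset.Ico (i + 1) n, q ^ i * p ^ (j - 1 - i) := by
        rw [range_eq_Ico,
          Finset.sum_Ico_Ico_comm' 0 n (fun a b => q ^ a * p ^ (b - 1 - a))]
        simp only [range_eq_Ico]
      rw [hswap]
      have hbound : ∀ i ∈ range n,
          (∑ j ∈ Finset.Ico (i + 1) n, q ^ i * p ^ (j - 1 - i)) ≤ q ^ i * S p := by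
        intro i _
        rw [← Finset.mul_sum]
        refine mul_le_mul_of_nonneg_left ?_ (pow_nonneg hq0 i)
        rw [Finset.sum_Ico_eq_sum_range]
        have heq : (∑ k ∈ range (n - (i + 1)), p ^ (i + 1 + k - 1 - i)) =
            ∑ k ∈ range (n - (i + 1)), p ^ k := by
          refine Finset.sum_congr rfl fun k _ => ?_
          congr 1
          omega
        rw [heq, hS]
        exact Finset.sum_le_sum_of_subset_of_nonneg
          (Finset.range_subset_range.mpr (by omega)) (fun k _ _ => pow_nonneg hp k)
      calc (∑ i ∈ range n, ∑ j ∈ Finset.Ico (i + 1) n, q ^ i * p ^ (j - 1 - i))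
          ≤ ∑ i ∈ range n, q ^ i * S p := Finset.sum_le_sum hbound
        _ = S q * S p := by rw [hS, ← Finset.sum_mul]
        _ = S p * S q := mul_comm _ _
    rw [h1]
    exact mul_le_mul_of_nonneg_left h2 (sub_nonneg.mpr hpq)
  have hSn : S 1 = n := by simp [hS]
  have hrep : ∀ x ∈ Set.Icc (0 : ℝ) 1, φ x = u * x + v / S x := by
    rintro x ⟨hx0, hx1⟩
    rcases lt_or_eq_of_le hx1 with h1 | h1
    · rw [hφ x ⟨hx0, h1⟩]
      have hxn : 1 - x ^ n = (1 - x) * S x := by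
        have := geom_sum_mul x n
        rw [hS]
        nlinarith [this]
      have hx1' : (1 : ℝ) - x ≠ 0 := by linarith
      rw [hxn, show v * (1 - x) = (1 - x) * v by ring,
        mul_div_mul_left v (S x) hx1']
    · subst h1
      rw [hφ1, hSn]
      ring
  have hmono : MonotoneOn φ (Set.Icc 0 1) := by
    intro a ha b hb hab
    rw [hrep a ha, hrep b hb]
    have hSa := hS1 a ha.1
    have hSb := hS1 b hb.1
    have hSa0 : 0 < S a := lt_of_lt_of_le zero_lt_one hSa
    have hSb0 : 0 < S b := lt_of_lt_of_le zero_lt_one hSb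
    have hkey := key a b ha.1 hab hb.2
    have h3 : v / S a - v / S b ≤ u * (b - a) := by
      rw [div_sub_div _ _ (ne_of_gt hSa0) (ne_of_gt hSb0),
        div_le_iff₀ (by positivity)]
      have hba : 0 ≤ b - a := sub_nonneg.mpr hab
      calc v * S b - S a * v = v * (S b - S a) := by ring
        _ ≤ v * ((b - a) * (S a * S b)) := mul_le_mul_of_nonneg_left hkey hv.le
        _ ≤ u * ((b - a) * (S a * S b)) := by
            refine mul_le_mul_of_nonneg_right huv.le ?_
            positivity
        _ = u * (b - a) * (S a * S b) := by ring
    linarith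
  have hφ0 : φ 0 = v := by
    rw [hφ 0 ⟨le_refl 0, zero_lt_one⟩, zero_pow (by omega : n ≠ 0)]
    ring
  exact ⟨hmono, hφ0, hφ1⟩
end

section
/- Let X and X' be random variables with X taking values x with probability 1−p and 0 with probability p, and let Y be an independent nonnegative random variable with Y < x almost surely; write M = E[max of n i.i.d. copies of X] = (1−p^n)x and suppose E[Y] > M. Then E[max(X, Y)] = p·E[Y] + (1−p)·x ≤ E[Y] + M/n. -/
open MeasureTheory ProbabilityTheory

theorem stmt_14 {Ω : Type*} [MeasurableSpace Ω] (P : Measure Ω) [IsProbabilityMeasure P]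
    (n : ℕ) (hn : 0 < n) (p x M : ℝ) (hp : 0 < p) (hp1 : p < 1) (hx : 0 < x)
    (X Y : Ω → ℝ) (hXmeas : Measurable X) (hYmeas : Measurable Y)
    (hlaw : Measure.map X P =
      ENNReal.ofReal p • Measure.dirac 0 + ENNReal.ofReal (1 - p) • Measure.dirac x)
    (hY : ∀ᵐ ω ∂P, 0 ≤ Y ω ∧ Y ω < x)
    (hYint : Integrable Y P)
    (hindep : IndepFun X Y P)
    (hM : M = (1 - p ^ n) * x)
    (hEY : M < ∫ ω, Y ω ∂P) :
    (∫ ω, max (X ω) (Y ω) ∂P = p * ∫ ω, Y ω ∂P + (1 - p) * x) ∧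
      ∫ ω, max (X ω) (Y ω) ∂P ≤ (∫ ω, Y ω ∂P) + M / n := by
  have hxne : x ≠ 0 := ne_of_gt hx
  -- measure of {X = 0}
  have hmap0 : P (X ⁻¹' {0}) = ENNReal.ofReal p := by
    rw [← Measure.map_apply hXmeas (measurableSet_singleton 0), hlaw]
    simp [Measure.dirac_apply, hxne]
  -- a.e. X = 0 or X = x
  have hae : ∀ᵐ ω ∂P, X ω = 0 ∨ X ω = x := by
    have hms : MeasurableSet ({0, x} : Set ℝ) := (measurableSet_singleton x).insert 0
    have h1 : P (X ⁻¹' {0, x}) = 1 := by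
      rw [← Measure.map_apply hXmeas hms, hlaw]
      have h0 : (0:ℝ) ∈ ({0, x} : Set ℝ) := by simp
      have hx2 : x ∈ ({0, x} : Set ℝ) := by simp
      simp only [Measure.add_apply, Measure.smul_apply, smul_eq_mul,
        Measure.dirac_apply' _ hms, Set.indicator_of_mem h0,
        Set.indicator_of_mem hx2, Pi.one_apply, mul_one]
      rw [← ENNReal.ofReal_add hp.le (by linarith)]
      norm_num
    have h2 : P (X ⁻¹' {0, x})ᶜ = 0 := by
      rw [measure_compl (hXmeas hms) (measure_ne_top _ _), h1]
      simp
    filter_upwards [measure_eq_zero_iff_ae_notMem.mp h2] with ω hω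
    simp only [Set.mem_compl_iff, Set.mem_preimage, Set.mem_insert_iff,
      Set.mem_singleton_iff, not_not] at hω
    tauto
  -- the indicator of {X = 0}
  set g : ℝ → ℝ := Set.indicator ({0} : Set ℝ) (fun _ => (1:ℝ)) with hg
  have hgmeas : Measurable g := measurable_const.indicator (measurableSet_singleton 0)
  set I : Ω → ℝ := fun ω => g (X ω) with hI
  have hIeq : I = Set.indicator (X ⁻¹' {0}) (fun _ => (1:ℝ)) := by
    funext ω
    by_cases h : X ω = 0 <;> simp [hI, hg, h, Set.indicator]
  have hIint : Integrable I P := by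
    rw [hIeq]
    exact (integrable_const (1:ℝ)).indicator (hXmeas (measurableSet_singleton 0))
  have hIval : ∫ ω, I ω ∂P = p := by
    rw [hIeq]
    rw [integral_indicator (hXmeas (measurableSet_singleton 0))]
    simp [measureReal_def, hmap0, ENNReal.toReal_ofReal hp.le]
  have hIindep : IndepFun I Y P :=
    hindep.comp hgmeas measurable_id
  have hIbound : ∀ ω, ‖I ω‖ ≤ 1 := by
    intro ω
    by_cases h : X ω = 0 <;> simp [hI, hg, h, Set.indicator]
  have hIYint : Integrable (fun ω => I ω * Y ω) P :=
    hYint.bdd_mul (hIint.aestronglyMeasurable) (c := 1) (Filter.Eventually.of_forall hIbound)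
  have h2int : Integrable (fun ω => (1 - I ω) * x) P :=
    ((integrable_const (1:ℝ)).sub hIint).mul_const x
  have hIYval : ∫ ω, I ω * Y ω ∂P = p * ∫ ω, Y ω ∂P := by
    have := hIindep.integral_mul_eq_mul_integral hIint.aestronglyMeasurable hYint.aestronglyMeasurable
    rw [show (fun ω => I ω * Y ω) = I * Y from rfl, this, hIval]
  have h2val : ∫ ω, (1 - I ω) * x ∂P = (1 - p) * x := by
    rw [integral_mul_const, integral_sub (integrable_const 1) hIint, integral_const, hIval]
    simp
  -- main equality
  have key : ∫ ω, max (X ω) (Y ω) ∂P = ∫ ω, (I ω * Y ω + (1 - I ω) * x) ∂P := by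
    refine integral_congr_ae ?_
    filter_upwards [hae, hY] with ω hω hYω
    rcases hω with h | h
    · simp [hI, hg, h, Set.indicator, max_eq_right hYω.1]
    · simp [hI, hg, h, hxne, Set.indicator, max_eq_left hYω.2.le]
  have hmain : ∫ ω, max (X ω) (Y ω) ∂P = p * ∫ ω, Y ω ∂P + (1 - p) * x := by
    rw [key, integral_add hIYint h2int, hIYval, h2val]
  refine ⟨hmain, ?_⟩
  rw [hmain]
  -- arithmetic
  set E := ∫ ω, Y ω ∂P with hE
  have hgeom : (n : ℝ) * p ^ n ≤ ∑ i ∈ Finset.range n, p ^ i := by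
    have : ∀ i ∈ Finset.range n, p ^ n ≤ p ^ i := by
      intro i hi
      exact pow_le_pow_of_le_one hp.le hp1.le (Finset.mem_range.mp hi).le
    calc (n : ℝ) * p ^ n = ∑ _i ∈ Finset.range n, p ^ n := by
          simp [Finset.sum_const, mul_comm]
      _ ≤ _ := Finset.sum_le_sum this
  have hpow : 1 - p ^ n = (1 - p) * ∑ i ∈ Finset.range n, p ^ i := by
    have := geom_sum_mul p n
    nlinarith [this]
  have hkey : (n : ℝ) * ((1 - p) * p ^ n) ≤ 1 - p ^ n := by
    rw [hpow]
    have h1p : (0:ℝ) ≤ 1 - p := by linarith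
    nlinarith [hgeom]
  have hnpos : (0:ℝ) < n := by exact_mod_cast hn
  -- (1-p)(x - E) ≤ M / n
  have h1 : (1 - p) * (x - E) ≤ (1 - p) * (x - M) := by
    nlinarith [hEY]
  have h2 : (1 - p) * (x - M) = (1 - p) * p ^ n * x := by
    rw [hM]; ring
  have h3 : (1 - p) * p ^ n * x ≤ M / n := by
    rw [hM, le_div_iff₀ hnpos]
    nlinarith [hkey, hx.le]
  nlinarith [h1, h2, h3]
end

section
/- Let X_1,...,X_n be independent random variables where each X_i takes value x_i > 0 with probability 1 − p_i and value 0 with probability p_i (so each takes exactly one nonzero value). Set M_i = (1 − p_i^n)·x_i. Then E[max(X_1,...,X_n)] ≤ (1/n)∑_{i=1}^n M_i + ((n−1)/n)·max_i M_i. -/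
open MeasureTheory ProbabilityTheory Finset

lemma key (n : ℕ) (hn : 0 < n) (p Q : ℝ) (hp0 : 0 ≤ p) (hp1 : p ≤ 1)
    (hQ1 : Q ≤ 1) :
    (n : ℝ) * (1 - p) * Q ≤ (1 - p ^ n) + ((n : ℝ) - 1) * (1 - p) * (1 - p ^ n) * Q := by
  set s : ℝ := ∑ k ∈ range n, p ^ k with hs
  have h1 : (1 - p) * s = 1 - p ^ n := by
    have := geom_sum_mul p n
    nlinarith [this]
  have h2 : 1 + ((n : ℝ) - 1) * p ^ n ≤ s := by
    have hle : ∀ k ∈ range n, (p ^ n + if k = 0 then 1 - p ^ n else 0) ≤ p ^ k := by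
      intro k hk
      by_cases h : k = 0
      · simp [h, pow_le_one₀ hp0 hp1]
      · simp only [h, if_false, add_zero]
        exact pow_le_pow_of_le_one hp0 hp1 (Nat.le_of_lt (mem_range.mp hk))
    have hsum := Finset.sum_le_sum hle
    rw [Finset.sum_add_distrib, Finset.sum_const, Finset.sum_ite_eq' (range n) 0 (fun _ => 1 - p ^ n)] at hsum
    simp only [mem_range, hn, if_true, card_range, nsmul_eq_mul] at hsum
    linarith
  have hpn0 : (0:ℝ) ≤ p ^ n := pow_nonneg hp0 n
  have hpn1 : p ^ n ≤ 1 := pow_le_one₀ hp0 hp1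
  nlinarith [mul_nonneg (sub_nonneg.mpr hp1) (sub_nonneg.mpr hQ1),
    mul_nonneg (mul_nonneg (sub_nonneg.mpr hp1) (sub_nonneg.mpr hQ1)) hpn0,
    mul_nonneg (sub_nonneg.mpr hp1) (mul_nonneg (sub_nonneg.mpr hQ1) hpn0)]

theorem stmt_15 {Ω : Type*} [MeasurableSpace Ω] (P : Measure Ω) [IsProbabilityMeasure P]
    (n : ℕ) (hn : 0 < n) (p x : Fin n → ℝ)
    (hp : ∀ i, p i ∈ Set.Icc (0 : ℝ) 1) (hx : ∀ i, 0 < x i)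
    (X : Fin n → Ω → ℝ) (hmeas : ∀ i, Measurable (X i))
    (hlaw : ∀ i, Measure.map (X i) P =
      ENNReal.ofReal (p i) • Measure.dirac 0 +
        ENNReal.ofReal (1 - p i) • Measure.dirac (x i))
    (hindep : iIndepFun X P)
    (M : Fin n → ℝ) (hM : ∀ i, M i = (1 - p i ^ n) * x i) :
    ∫ ω, ⨆ i, X i ω ∂P ≤ (1 / (n : ℝ)) * ∑ i, M i + ((n - 1 : ℝ) / n) * ⨆ i, M i := by
  have : Nonempty (Fin n) := ⟨⟨0, hn⟩⟩
  -- sorted permutation: x ∘ σ is antitone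
  set σ : Equiv.Perm (Fin n) := Tuple.sort (fun i => -x i) with hσ
  have hanti : ∀ ⦃j k : Fin n⦄, j ≤ k → x (σ k) ≤ x (σ j) := by
    intro j k hjk
    have := Tuple.monotone_sort (fun i => -x i) hjk
    simpa using this
  -- events
  set A : Fin n → Set Ω := fun k => X k ⁻¹' {x k} with hA
  have hAmeas : ∀ k, MeasurableSet (A k) := fun k => (hmeas k) (measurableSet_singleton _)
  set E : Fin n → Set Ω := fun i => A (σ i) ∩ ⋂ j ∈ Iio i, (A (σ j))ᶜ with hE
  have hEmeas : ∀ i, MeasurableSet (E i) := fun i =>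
    ((hAmeas (σ i)).inter (MeasurableSet.biInter (Set.to_countable _)
      (fun j _ => (hAmeas (σ j)).compl)))
  -- laws of single events
  have hPA : ∀ k, P (A k) = ENNReal.ofReal (1 - p k) := by
    intro k
    have h1 : P (A k) = Measure.map (X k) P {x k} :=
      (Measure.map_apply (hmeas k) (measurableSet_singleton _)).symm
    rw [h1, hlaw k]
    have h0 : (0:ℝ) ∉ ({x k} : Set ℝ) := by simp [(hx k).ne]
    simp [Measure.dirac_apply' _ (measurableSet_singleton (x k)), Set.indicator_of_notMem h0]
  have hPAc : ∀ k, P ((A k)ᶜ) = ENNReal.ofReal (p k) := by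
    intro k
    have h1 : P ((A k)ᶜ) = Measure.map (X k) P ({x k}ᶜ) := by
      rw [Measure.map_apply (hmeas k) (measurableSet_singleton _).compl]
      rfl
    rw [h1, hlaw k]
    have h0 : (0:ℝ) ∈ ({x k}ᶜ : Set ℝ) := by simp [(hx k).ne]
    have h2 : (x k) ∉ ({x k}ᶜ : Set ℝ) := by simp
    simp [Measure.dirac_apply' _ (measurableSet_singleton (x k)).compl,
      Set.indicator_of_mem h0, Set.indicator_of_notMem h2]
  -- probability of E i via independence
  set r : Fin n → ℝ := fun i => (1 - p (σ i)) * ∏ j ∈ Iio i, p (σ j) with hr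
  have hr0 : ∀ i, 0 ≤ r i := by
    intro i
    exact mul_nonneg (by linarith [(hp (σ i)).2]) (Finset.prod_nonneg fun j _ => (hp (σ j)).1)
  have hPE : ∀ i, P (E i) = ENNReal.ofReal (r i) := by
    intro i
    classical
    set D : Fin n → Set Ω := fun k => if k = σ i then A k else (A k)ᶜ with hD
    have hDi : D (σ i) = A (σ i) := if_pos rfl
    have hDj : ∀ j ∈ Iio i, D (σ j) = (A (σ j))ᶜ := by
      intro j hj
      have : σ j ≠ σ i := fun h => (Finset.mem_Iio.mp hj).ne (σ.injective h)
      exact if_neg this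
    have hEeq : E i = ⋂ k ∈ Finset.image σ (Iic i), D k := by
      rw [Finset.set_biInter_finset_image, ← Finset.Iio_insert, Finset.set_biInter_insert]
      exact congrArg₂ Set.inter hDi.symm (Set.iInter₂_congr hDj).symm
    have hmeasD : ∀ k ∈ Finset.image σ (Iic i),
        MeasurableSet[MeasurableSpace.comap (X k) inferInstance] (D k) := by
      intro k _
      refine ⟨if k = σ i then {x k} else {x k}ᶜ, ?_, ?_⟩
      · split_ifs
        · exact measurableSet_singleton _
        · exact (measurableSet_singleton _).compl
      · by_cases h : k = σ i <;> simp [hD, hA, h]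
    rw [hEeq, hindep.meas_biInter hmeasD,
      Finset.prod_image (fun a _ b _ h => σ.injective h), ← Finset.Iio_insert,
      Finset.prod_insert (by simp), hDi, hPA,
      Finset.prod_congr rfl (fun j hj => by rw [hDj j hj, hPAc])]
    rw [← ENNReal.ofReal_prod_of_nonneg (fun j _ => (hp (σ j)).1),
      ← ENNReal.ofReal_mul (by linarith [(hp (σ i)).2])]
  classical
  have hn' : (0:ℝ) < n := Nat.cast_pos.mpr hn
  have hn1 : (1:ℝ) ≤ n := by exact_mod_cast hn
  -- a.e. each X i takes values in {0, x i}
  have hae : ∀ᵐ ω ∂P, ∀ i, X i ω = 0 ∨ X i ω = x i := by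
    rw [MeasureTheory.ae_all_iff]
    intro k
    have hset : MeasurableSet ({0, x k} : Set ℝ) :=
      (measurableSet_singleton (x k)).insert 0
    have h1 : P (X k ⁻¹' ({0, x k} : Set ℝ)ᶜ) = 0 := by
      rw [← Measure.map_apply (hmeas k) hset.compl, hlaw k]
      have h0 : (0:ℝ) ∉ ({0, x k}ᶜ : Set ℝ) := by simp
      have h2 : x k ∉ ({0, x k}ᶜ : Set ℝ) := by simp
      simp [Measure.dirac_apply' _ hset.compl, Set.indicator_of_notMem h0,
        Set.indicator_of_notMem h2]
    refine measure_mono_null ?_ h1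
    intro ω hω
    simp only [Set.mem_compl_iff, Set.mem_setOf_eq, not_or] at hω
    simp only [Set.mem_preimage, Set.mem_compl_iff, Set.mem_insert_iff,
      Set.mem_singleton_iff, not_or]
    exact hω
  -- a.e. identification of the sup with a sum of indicators
  have hbdd : ∀ ω, BddAbove (Set.range fun i => X i ω) :=
    fun ω => (Set.finite_range _).bddAbove
  have hsup : (fun ω => ⨆ i, X i ω)
      =ᵐ[P] (fun ω => ∑ i, Set.indicator (E i) (fun _ => x (σ i)) ω) := by
    filter_upwards [hae] with ω hω
    by_cases hT : ∃ k, X k ω = x k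
    · set T : Finset (Fin n) := univ.filter (fun i => X (σ i) ω = x (σ i)) with hTdef
      obtain ⟨k₀, hk₀⟩ := hT
      have hTne : T.Nonempty := ⟨σ.symm k₀, by simp [hTdef, Equiv.apply_symm_apply, hk₀]⟩
      set i₀ := T.min' hTne with hi₀def
      have hi₀ : X (σ i₀) ω = x (σ i₀) := (mem_filter.mp (T.min'_mem hTne)).2
      have hmin : ∀ j, X (σ j) ω = x (σ j) → i₀ ≤ j := by
        intro j hj
        exact T.min'_le j (by simp [hTdef, hj])
      have hEi₀ : ω ∈ E i₀ := by
        refine ⟨hi₀, Set.mem_iInter₂.mpr fun j hj hmem => ?_⟩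
        exact absurd (hmin j hmem) (not_le.mpr (Finset.mem_Iio.mp hj))
      have hnot : ∀ i, i ≠ i₀ → ω ∉ E i := by
        intro i hne hi
        rcases lt_or_gt_of_ne hne with h | h
        · exact absurd (hmin i hi.1) (not_le.mpr h)
        · exact (Set.mem_iInter₂.mp hi.2 i₀ (Finset.mem_Iio.mpr h)) hi₀
      have hsum : ∑ i, Set.indicator (E i) (fun _ => x (σ i)) ω = x (σ i₀) := by
        rw [Finset.sum_eq_single i₀
          (fun b _ hb => Set.indicator_of_notMem (hnot b hb) _)
          (fun h => absurd (mem_univ i₀) h)]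
        exact Set.indicator_of_mem hEi₀ _
      rw [hsum]
      refine le_antisymm (ciSup_le fun k => ?_) ?_
      · rcases hω k with h | h
        · rw [h]; exact (hx _).le
        · have hmem : i₀ ≤ σ.symm k := hmin _ (by rw [Equiv.apply_symm_apply]; exact h)
          have := hanti hmem
          rw [Equiv.apply_symm_apply] at this
          rw [h]; exact this
      · have := le_ciSup (hbdd ω) (σ i₀)
        rwa [hi₀] at this
    · push_neg at hT
      have hz : ∀ k, X k ω = 0 := fun k => (hω k).resolve_right (hT k)
      have h1 : ⨆ i, X i ω = 0 := by simp only [hz]; exact ciSup_const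
      have h2 : ∑ i, Set.indicator (E i) (fun _ => x (σ i)) ω = 0 :=
        Finset.sum_eq_zero fun i _ =>
          Set.indicator_of_notMem (fun hi => hT (σ i) hi.1) _
      rw [h1, h2]
  -- compute the integral
  have hint : ∀ i, Integrable (Set.indicator (E i) (fun _ => x (σ i))) P :=
    fun i => (integrable_const _).indicator (hEmeas i)
  have hIeq : ∫ ω, ⨆ i, X i ω ∂P = ∑ i, r i * x (σ i) := by
    rw [integral_congr_ae hsup, integral_finset_sum _ (fun i _ => hint i)]
    refine Finset.sum_congr rfl fun i _ => ?_
    rw [integral_indicator_const _ (hEmeas i), Measure.real, hPE i,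
      ENNReal.toReal_ofReal (hr0 i), smul_eq_mul]
  rw [hIeq]
  -- algebraic bound
  set m := ⨆ i, M i with hm
  have hM0 : ∀ i, 0 ≤ M i := by
    intro i
    rw [hM]
    have hpow : p i ^ n ≤ 1 := pow_le_one₀ (hp i).1 (hp i).2
    exact mul_nonneg (by linarith) (hx i).le
  have hMle : ∀ i, M i ≤ m := fun i => le_ciSup ((Set.finite_range M).bddAbove) i
  have hm0 : 0 ≤ m := le_trans (hM0 (Classical.arbitrary _)) (hMle _)
  have hQ0 : ∀ i : Fin n, (0:ℝ) ≤ ∏ j ∈ Iio i, p (σ j) :=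
    fun i => Finset.prod_nonneg fun j _ => (hp (σ j)).1
  have hQ1 : ∀ i : Fin n, (∏ j ∈ Iio i, p (σ j)) ≤ 1 :=
    fun i => Finset.prod_le_one (fun j _ => (hp (σ j)).1) (fun j _ => (hp (σ j)).2)
  have hterm : ∀ i : Fin n, r i * x (σ i) ≤
      M (σ i) * (1/(n:ℝ)) +
        (((n:ℝ)-1)/n) * (m * ((1 - p (σ i)) * ∏ j ∈ Iio i, p (σ j))) := by
    intro i
    set Q : ℝ := ∏ j ∈ Iio i, p (σ j) with hQ
    have hkey := key n hn (p (σ i)) Q (hp (σ i)).1 (hp (σ i)).2 (hQ1 i)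
    have h2 : ((n:ℝ)-1) * ((1 - p (σ i)) * Q) * M (σ i) ≤
        ((n:ℝ)-1) * ((1 - p (σ i)) * Q) * m :=
      mul_le_mul_of_nonneg_left (hMle (σ i))
        (mul_nonneg (by linarith)
          (mul_nonneg (by linarith [(hp (σ i)).2]) (hQ0 i)))
    have hns : (n:ℝ) ≠ 0 := ne_of_gt hn'
    apply le_of_mul_le_mul_left _ hn'
    calc (n:ℝ) * (r i * x (σ i))
        = x (σ i) * ((n:ℝ) * ((1 - p (σ i)) * Q)) := by rw [hr]; ring
      _ ≤ x (σ i) * ((1 - p (σ i) ^ n) +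
            ((n:ℝ)-1) * (1 - p (σ i)) * (1 - p (σ i) ^ n) * Q) := by
          refine mul_le_mul_of_nonneg_left ?_ (hx (σ i)).le
          calc (n:ℝ) * ((1 - p (σ i)) * Q) = (n:ℝ) * (1 - p (σ i)) * Q := by ring
            _ ≤ _ := hkey
      _ = M (σ i) + ((n:ℝ)-1) * ((1 - p (σ i)) * Q) * M (σ i) := by
          rw [hM]; ring
      _ ≤ M (σ i) + ((n:ℝ)-1) * ((1 - p (σ i)) * Q) * m := by linarith
      _ = (n:ℝ) * (M (σ i) * (1/(n:ℝ)) +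
            (((n:ℝ)-1)/n) * (m * ((1 - p (σ i)) * Q))) := by
          field_simp
  -- telescoping sum
  set g : ℕ → ℝ := fun k => ∏ j ∈ univ.filter (fun j : Fin n => (j:ℕ) < k), p (σ j) with hg
  have hg0 : g 0 = 1 := by
    rw [hg]
    convert Finset.prod_empty
    exact Finset.filter_false_of_mem (fun j _ => Nat.not_lt_zero _)
  have hgnn : 0 ≤ g n := Finset.prod_nonneg fun j _ => (hp (σ j)).1
  have hgi : ∀ i : Fin n, g i = ∏ j ∈ Iio i, p (σ j) := by
    intro i
    refine Finset.prod_congr (Finset.ext fun j => ?_) (fun _ _ => rfl)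
    simp only [Finset.mem_filter, Finset.mem_univ, true_and, Finset.mem_Iio, Fin.lt_def]
  have hgi1 : ∀ i : Fin n, g (i + 1) = p (σ i) * ∏ j ∈ Iio i, p (σ j) := by
    intro i
    have hfe : univ.filter (fun j : Fin n => (j:ℕ) < (i:ℕ) + 1) = insert i (Iio i) := by
      rw [Finset.Iio_insert]
      refine Finset.ext fun j => ?_
      simp only [Finset.mem_filter, Finset.mem_univ, true_and, Finset.mem_Iic,
        Fin.le_def, Nat.lt_succ_iff]
    rw [hg]
    simp only [hfe]
    rw [Finset.prod_insert (by simp)]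
  have htel : ∑ i : Fin n, (1 - p (σ i)) * ∏ j ∈ Iio i, p (σ j) = 1 - g n := by
    have : ∀ i : Fin n, (1 - p (σ i)) * ∏ j ∈ Iio i, p (σ j) = g i - g (i + 1) := by
      intro i
      rw [hgi1 i, hgi i]; ring
    rw [Finset.sum_congr rfl fun i _ => this i,
      Fin.sum_univ_eq_sum_range (fun k => g k - g (k + 1)) n,
      Finset.sum_range_sub' g n, hg0]
  -- combine
  calc ∑ i, r i * x (σ i)
      ≤ ∑ i : Fin n, (M (σ i) * (1/(n:ℝ)) +
          (((n:ℝ)-1)/n) * (m * ((1 - p (σ i)) * ∏ j ∈ Iio i, p (σ j)))) :=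
        Finset.sum_le_sum fun i _ => hterm i
    _ = (1 / (n:ℝ)) * ∑ i, M i +
          (((n:ℝ)-1)/n) * (m * (1 - g n)) := by
        have e1 : ∑ i : Fin n, M (σ i) * (1/(n:ℝ)) = (1/(n:ℝ)) * ∑ i, M i := by
          rw [← Finset.sum_mul, Equiv.sum_comp σ M, mul_comm]
        have e2 : ∑ i : Fin n, (((n:ℝ)-1)/n) *
            (m * ((1 - p (σ i)) * ∏ j ∈ Iio i, p (σ j))) =
            (((n:ℝ)-1)/n) * (m * (1 - g n)) := by
          rw [← Finset.mul_sum, ← Finset.mul_sum, htel]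
        rw [Finset.sum_add_distrib, e1, e2]
    _ ≤ (1 / (n:ℝ)) * ∑ i, M i + (((n:ℝ)-1)/n) * m := by
        have h1 : m * (1 - g n) ≤ m := by nlinarith [mul_nonneg hm0 hgnn]
        have h2 : (0:ℝ) ≤ ((n:ℝ)-1)/n := div_nonneg (by linarith) (by linarith)
        have h3 := mul_le_mul_of_nonneg_left h1 h2
        linarith
end

section
/- Let X_1 and Y be independent nonnegative random variables with P(a ≤ X_1 ≤ b) = p > 0 and P(a < Y < b) = 0. Define X_2 to equal X_1 outside [a,b] and to equal the constant x = E-weighted coalescing point on {X_1 ∈ [a,b]}, where x is chosen so that E[max of n i.i.d. copies of X_2] = E[max of n i.i.d. copies of X_1]. Then a ≤ x ≤ b, x ≥ E[X_1 | a ≤ X_1 ≤ b], and E[max(X_2, Y)] ≥ E[max(X_1, Y)]. -/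
open MeasureTheory ProbabilityTheory

section Helpers

variable {Ω : Type*} [MeasurableSpace Ω]

lemma ciSup_le_sum_abs {n : ℕ} [NeZero n] (g : Fin n → ℝ) : |⨆ j, g j| ≤ ∑ j, |g j| := by
  have hbdd : BddAbove (Set.range g) := Set.Finite.bddAbove (Set.finite_range g)
  have h1 : (⨆ j, g j) ≤ ∑ j, |g j| := by
    refine ciSup_le fun j => le_trans (le_abs_self _) ?_
    exact Finset.single_le_sum (fun i _ => abs_nonneg (g i)) (Finset.mem_univ j)
  have h2 : -(∑ j, |g j|) ≤ ⨆ j, g j := by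
    refine le_trans ?_ (le_ciSup hbdd (0 : Fin n))
    have : |g 0| ≤ ∑ j, |g j| :=
      Finset.single_le_sum (fun i _ => abs_nonneg (g i)) (Finset.mem_univ 0)
    nlinarith [neg_abs_le (g 0)]
  exact abs_le.2 ⟨h2, h1⟩

lemma measurable_pi_sup' {n : ℕ} [NeZero n] (f : Ω → ℝ) (hf : Measurable f) :
    Measurable (fun v : Fin n → Ω => ⨆ j, f (v j)) := by
  have : (fun v : Fin n → Ω => ⨆ j, f (v j))
      = Finset.univ.sup' Finset.univ_nonempty (fun j (v : Fin n → Ω) => f (v j)) := by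
    funext v
    rw [← Finset.sup'_univ_eq_ciSup]
    simp [Finset.sup'_apply]
  rw [this]
  exact Finset.measurable_sup' _ (fun j _ => hf.comp (measurable_pi_apply j))

open Classical in
lemma map_eval_pi' {ι : Type*} [Fintype ι] (P : Measure Ω) [IsProbabilityMeasure P] (i : ι) :
    Measure.map (Function.eval i) (Measure.pi fun _ : ι => P) = P := by
  ext s hs
  rw [Measure.map_apply (measurable_pi_apply i) hs]
  have : Function.eval i ⁻¹' s
      = Set.pi Set.univ (Function.update (fun _ : ι => (Set.univ : Set Ω)) i s) := by
    rw [Set.univ_pi_update_univ]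
  rw [this, Measure.pi_pi]
  rw [Fintype.prod_eq_single i (fun j hj => by rw [Function.update_of_ne hj]; simp)]
  simp

lemma integrable_pi_sup' {n : ℕ} [NeZero n] (P : Measure Ω) [IsProbabilityMeasure P]
    (f : Ω → ℝ) (hf : Measurable f) (hfi : Integrable f P) :
    Integrable (fun v : Fin n → Ω => ⨆ j, f (v j)) (Measure.pi fun _ : Fin n => P) := by
  have hcoord : ∀ j : Fin n, Integrable (fun v : Fin n → Ω => f (v j))
      (Measure.pi fun _ : Fin n => P) := by
    intro j
    have h1 : Integrable f (Measure.map (Function.eval j) (Measure.pi fun _ : Fin n => P)) := by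
      rw [map_eval_pi']; exact hfi
    exact (integrable_map_measure hf.aestronglyMeasurable
      (measurable_pi_apply j).aemeasurable).mp h1
  have hsum : Integrable (fun v : Fin n → Ω => ∑ j, |f (v j)|)
      (Measure.pi fun _ : Fin n => P) :=
    integrable_finset_sum _ (fun j _ => (hcoord j).abs)
  refine hsum.mono' (measurable_pi_sup' f hf).aestronglyMeasurable ?_
  filter_upwards with v
  simpa using ciSup_le_sum_abs (fun j => f (v j))

lemma map_pi_eq {n : ℕ} (P : Measure Ω) [IsProbabilityMeasure P]
    (f : Ω → ℝ) (hf : Measurable f) :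
    Measure.pi (fun _ : Fin n => Measure.map f P)
      = Measure.map (fun (v : Fin n → Ω) (j : Fin n) => f (v j))
          (Measure.pi fun _ : Fin n => P) := by
  have hm : Measurable (fun (v : Fin n → Ω) (j : Fin n) => f (v j)) :=
    measurable_pi_lambda _ (fun j => hf.comp (measurable_pi_apply j))
  have : IsProbabilityMeasure (Measure.map f P) := Measure.isProbabilityMeasure_map hf.aemeasurable
  refine Measure.pi_eq (μ := fun _ : Fin n => Measure.map f P) fun s hs => ?_
  rw [Measure.map_apply hm (MeasurableSet.univ_pi fun j => hs j)]
  have : (fun (v : Fin n → Ω) (j : Fin n) => f (v j)) ⁻¹' Set.pi Set.univ s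
      = Set.pi Set.univ (fun j => f ⁻¹' s j) := by
    ext v; simp [Set.mem_pi]
  rw [this, Measure.pi_pi]
  exact Finset.prod_congr rfl fun j _ => (Measure.map_apply hf (hs j)).symm

lemma integral_sup_map {n : ℕ} [NeZero n] (P : Measure Ω) [IsProbabilityMeasure P]
    (f : Ω → ℝ) (hf : Measurable f) :
    ∫ v, (⨆ j, v j) ∂(Measure.pi fun _ : Fin n => Measure.map f P)
      = ∫ v, (⨆ j, f (v j)) ∂(Measure.pi fun _ : Fin n => P) := by
  rw [map_pi_eq P f hf]
  exact integral_map (measurable_pi_lambda _ (fun j => hf.comp (measurable_pi_apply j))).aemeasurable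
    (measurable_pi_sup' (n := n) id measurable_id).aestronglyMeasurable

lemma pi_sup_gt (μ : Measure ℝ) [IsProbabilityMeasure μ] {n : ℕ} [NeZero n] (t : ℝ) :
    Measure.pi (fun _ : Fin n => μ) {v | t < ⨆ j, v j} = 1 - (μ (Set.Iic t))^n := by
  have hms : MeasurableSet {v : Fin n → ℝ | (⨆ j, v j) ≤ t} :=
    measurableSet_le (measurable_pi_sup' id measurable_id) measurable_const
  have hset : {v : Fin n → ℝ | t < ⨆ j, v j} = {v : Fin n → ℝ | (⨆ j, v j) ≤ t}ᶜ := by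
    ext v; simp [not_le]
  rw [hset, prob_compl_eq_one_sub hms]
  congr 1
  have h2 : {v : Fin n → ℝ | (⨆ j, v j) ≤ t} = Set.pi Set.univ (fun _ : Fin n => Set.Iic t) := by
    ext v
    simp only [Set.mem_setOf_eq, Set.mem_pi, Set.mem_univ, Set.mem_Iic, forall_true_left]
    constructor
    · intro h j; exact le_trans (le_ciSup (Set.Finite.bddAbove (Set.finite_range v)) j) h
    · intro h; exact ciSup_le h
  rw [h2, Measure.pi_pi]
  simp

lemma pi_sup_gt_toReal (μ : Measure ℝ) [IsProbabilityMeasure μ] {n : ℕ} [NeZero n] (t : ℝ) :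
    ((Measure.pi fun _ : Fin n => μ) {v | t < ⨆ j, v j}).toReal
      = 1 - ((μ (Set.Iic t)).toReal)^n := by
  rw [pi_sup_gt, ENNReal.toReal_sub_of_le (pow_le_one' prob_le_one n) ENNReal.one_ne_top,
    ENNReal.toReal_pow, ENNReal.toReal_one]

lemma pi_sup_ae_nonneg (μ : Measure ℝ) [IsProbabilityMeasure μ] {n : ℕ} [NeZero n]
    (hμnn : ∀ᵐ s ∂μ, 0 ≤ s) :
    0 ≤ᵐ[Measure.pi fun _ : Fin n => μ] (fun v : Fin n → ℝ => ⨆ j, v j) := by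
  have h0 : μ {s : ℝ | s < 0} = 0 := by simpa [ae_iff, not_le] using hμnn
  have h1 : (Measure.pi fun _ : Fin n => μ) (Function.eval (0 : Fin n) ⁻¹' {s : ℝ | s < 0}) = 0 :=
    Measure.pi_eval_preimage_null _ h0
  rw [Filter.EventuallyLE, ae_iff]
  refine measure_mono_null ?_ h1
  intro v hv
  simp only [Set.mem_setOf_eq, Pi.zero_apply, not_le] at hv ⊢
  exact lt_of_le_of_lt (le_ciSup (Set.Finite.bddAbove (Set.finite_range v)) 0) hv

lemma survival_integrable {α : Type*} [MeasurableSpace α] (ν : Measure α) [IsProbabilityMeasure ν]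
    (g : α → ℝ) (hgm : AEMeasurable g ν) (hgi : Integrable g ν) (hgnn : 0 ≤ᵐ[ν] g) :
    IntegrableOn (fun t => (ν {a | t < g a}).toReal) (Set.Ioi (0:ℝ)) := by
  have hanti : Antitone (fun t => ν {a | t < g a}) :=
    fun s t hst => measure_mono (fun a ha => lt_of_le_of_lt hst ha)
  have hmeas : Measurable (fun t => (ν {a | t < g a}).toReal) :=
    (Antitone.measurable hanti).ennreal_toReal
  refine ⟨hmeas.aestronglyMeasurable.restrict, ?_⟩
  rw [hasFiniteIntegral_iff_ofReal (Filter.Eventually.of_forall fun t => ENNReal.toReal_nonneg)]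
  have hcongr : ∫⁻ t in Set.Ioi (0:ℝ), ENNReal.ofReal ((ν {a | t < g a}).toReal)
      = ∫⁻ t in Set.Ioi (0:ℝ), ν {a | t < g a} := by
    refine lintegral_congr fun t => ?_
    exact ENNReal.ofReal_toReal (measure_ne_top ν _)
  rw [hcongr, ← lintegral_eq_lintegral_meas_lt ν hgnn hgm]
  exact hgi.lintegral_lt_top

lemma integral_sup_layercake (μ : Measure ℝ) [IsProbabilityMeasure μ] {n : ℕ} [NeZero n]
    (hμint : Integrable id μ) (hμnn : ∀ᵐ s ∂μ, 0 ≤ s) :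
    ∫ v, (⨆ j, v j) ∂(Measure.pi fun _ : Fin n => μ)
      = ∫ t in Set.Ioi (0:ℝ), (1 - ((μ (Set.Iic t)).toReal)^n) := by
  have hint : Integrable (fun v : Fin n → ℝ => ⨆ j, v j) (Measure.pi fun _ : Fin n => μ) :=
    integrable_pi_sup' _ id measurable_id hμint
  rw [hint.integral_eq_integral_meas_lt (pi_sup_ae_nonneg μ hμnn)]
  exact setIntegral_congr_fun measurableSet_Ioi fun t _ => pi_sup_gt_toReal μ t

lemma pi_surv_integrable (μ : Measure ℝ) [IsProbabilityMeasure μ] {n : ℕ} [NeZero n]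
    (hμint : Integrable id μ) (hμnn : ∀ᵐ s ∂μ, 0 ≤ s) :
    IntegrableOn (fun t => 1 - ((μ (Set.Iic t)).toReal)^n) (Set.Ioi (0:ℝ)) := by
  have h := survival_integrable (Measure.pi fun _ : Fin n => μ) (fun v => ⨆ j, v j)
    (measurable_pi_sup' id measurable_id).aemeasurable
    (integrable_pi_sup' _ id measurable_id hμint) (pi_sup_ae_nonneg μ hμnn)
  have heq : (fun t => ((Measure.pi fun _ : Fin n => μ) {v | t < ⨆ j, v j}).toReal)
      = fun t => 1 - ((μ (Set.Iic t)).toReal)^n := funext fun t => pi_sup_gt_toReal μ t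
  rwa [heq] at h

lemma surv_toReal (μ : Measure ℝ) [IsProbabilityMeasure μ] (t : ℝ) :
    (μ {a : ℝ | t < a}).toReal = 1 - (μ (Set.Iic t)).toReal := by
  have : {a : ℝ | t < a} = (Set.Iic t)ᶜ := by ext s; simp [not_le]
  rw [this, prob_compl_eq_one_sub measurableSet_Iic,
    ENNReal.toReal_sub_of_le prob_le_one ENNReal.one_ne_top, ENNReal.toReal_one]

lemma integral_id_layercake (μ : Measure ℝ) [IsProbabilityMeasure μ]
    (hμint : Integrable id μ) (hμnn : ∀ᵐ s ∂μ, 0 ≤ s) :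
    ∫ s, s ∂μ = ∫ t in Set.Ioi (0:ℝ), (1 - (μ (Set.Iic t)).toReal) := by
  have h := hμint.integral_eq_integral_meas_lt hμnn
  have h2 : (∫ s, id s ∂μ) = ∫ s, s ∂μ := rfl
  rw [← h2, h]
  exact setIntegral_congr_fun measurableSet_Ioi fun t _ => surv_toReal μ t

lemma id_surv_integrable (μ : Measure ℝ) [IsProbabilityMeasure μ]
    (hμint : Integrable id μ) (hμnn : ∀ᵐ s ∂μ, 0 ≤ s) :
    IntegrableOn (fun t => 1 - (μ (Set.Iic t)).toReal) (Set.Ioi (0:ℝ)) := by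
  have h := survival_integrable μ id measurable_id.aemeasurable hμint hμnn
  have heq : (fun t => (μ {a : ℝ | t < id a}).toReal)
      = fun t => 1 - (μ (Set.Iic t)).toReal := funext fun t => surv_toReal μ t
  rwa [heq] at h

lemma key_pointwise {n : ℕ} {A B a b : ℝ} (hA0 : 0 ≤ A) (hB0 : 0 ≤ B) (ha0 : 0 ≤ a) (hb0 : 0 ≤ b)
    (hcase : (b ≤ a ∧ a ≤ A ∧ b ≤ B) ∨ (a ≤ b ∧ A ≤ a ∧ B ≤ b)) :
    a^n - b^n ≤ (∑ i ∈ Finset.range n, A^i * B^(n-1-i)) * (a - b) := by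
  rcases hcase with ⟨hba, haA, hbB⟩ | ⟨hab, hAa, hBb⟩
  · rw [← geom_sum₂_mul]
    refine mul_le_mul_of_nonneg_right ?_ (by linarith)
    refine Finset.sum_le_sum fun i _ => ?_
    exact mul_le_mul (pow_le_pow_left₀ ha0 haA i) (pow_le_pow_left₀ hb0 hbB _)
      (pow_nonneg hb0 _) (pow_nonneg hA0 _)
  · have hgeom : b^n - a^n = (∑ i ∈ Finset.range n, b^i * a^(n-1-i)) * (b - a) :=
      (geom_sum₂_mul ..).symm
    have hreflect : (∑ i ∈ Finset.range n, b^i * a^(n-1-i))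
        = ∑ i ∈ Finset.range n, a^i * b^(n-1-i) := by
      rw [← Finset.sum_range_reflect]
      refine Finset.sum_congr rfl fun i hi => ?_
      rw [Finset.mem_range] at hi
      have h1 : n - 1 - (n - 1 - i) = i := by omega
      rw [h1, mul_comm]
    have hterm : (∑ i ∈ Finset.range n, A^i * B^(n-1-i))
        ≤ ∑ i ∈ Finset.range n, a^i * b^(n-1-i) := by
      refine Finset.sum_le_sum fun i _ => ?_
      exact mul_le_mul (pow_le_pow_left₀ hA0 hAa i) (pow_le_pow_left₀ hB0 hBb _)
        (pow_nonneg hB0 _) (pow_nonneg ha0 _)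
    rw [hreflect] at hgeom
    nlinarith [mul_le_mul_of_nonneg_right hterm (by linarith : (0:ℝ) ≤ b - a)]

lemma key_lower {n : ℕ} (hn : 0 < n) {B p : ℝ} (hp : 0 ≤ p) (hpB : p ≤ B) (A : ℝ) (hA0 : 0 ≤ A) :
    p^(n-1) ≤ ∑ i ∈ Finset.range n, A^i * B^(n-1-i) := by
  calc p^(n-1) ≤ B^(n-1) := pow_le_pow_left₀ hp hpB _
  _ = A^0 * B^(n-1-0) := by simp
  _ ≤ _ := Finset.single_le_sum (f := fun i => A^i * B^(n-1-i))
      (fun i _ => mul_nonneg (pow_nonneg hA0 _) (pow_nonneg (le_trans hp hpB) _))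
      (Finset.mem_range.mpr hn)

end Helpers

theorem stmt_16 {Ω : Type*} [MeasurableSpace Ω] (P : Measure Ω) [IsProbabilityMeasure P]
    (n : ℕ) (hn : 0 < n) (a b : ℝ) (ha : 0 ≤ a) (hab : a ≤ b)
    (X₁ Y : Ω → ℝ) (hX₁ : Measurable X₁) (hY : Measurable Y)
    (hX₁nonneg : ∀ ω, 0 ≤ X₁ ω) (hYnonneg : ∀ ω, 0 ≤ Y ω)
    (hX₁int : Integrable X₁ P) (hYint : Integrable Y P)
    (hindep : IndepFun X₁ Y P)
    (p : ℝ) (hp : p = (P {ω | a ≤ X₁ ω ∧ X₁ ω ≤ b}).toReal) (hppos : 0 < p)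
    (hYgap : P {ω | a < Y ω ∧ Y ω < b} = 0)
    (x : ℝ)
    -- x is chosen so that the expected maximum of n i.i.d. copies is preserved:
    (hx : ∫ v, (⨆ j, v j)
            ∂(Measure.pi fun _ : Fin n =>
              Measure.map (fun ω => if a ≤ X₁ ω ∧ X₁ ω ≤ b then x else X₁ ω) P) =
          ∫ v, (⨆ j, v j) ∂(Measure.pi fun _ : Fin n => Measure.map X₁ P)) :
    a ≤ x ∧ x ≤ b ∧
      (∫ ω in {ω | a ≤ X₁ ω ∧ X₁ ω ≤ b}, X₁ ω ∂P) / p ≤ x ∧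
      ∫ ω, max (X₁ ω) (Y ω) ∂P ≤
        ∫ ω, max (if a ≤ X₁ ω ∧ X₁ ω ≤ b then x else X₁ ω) (Y ω) ∂P := by
  haveI : NeZero n := ⟨hn.ne'⟩
  set band : Set Ω := {ω | a ≤ X₁ ω ∧ X₁ ω ≤ b} with hbanddef
  have hbandm : MeasurableSet band :=
    (measurableSet_le measurable_const hX₁).inter (measurableSet_le hX₁ measurable_const)
  set X₂ : Ω → ℝ := fun ω => if a ≤ X₁ ω ∧ X₁ ω ≤ b then x else X₁ ω with hX₂def
  have hX₂m : Measurable X₂ := Measurable.ite hbandm measurable_const hX₁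
  have hX₂int : Integrable X₂ P := by
    refine (Integrable.add (integrable_const |x|) hX₁int.abs).mono'
      hX₂m.aestronglyMeasurable ?_
    filter_upwards with ω
    simp only [hX₂def]
    split_ifs with h
    · exact le_add_of_nonneg_right (abs_nonneg _)
    · exact le_add_of_nonneg_left (abs_nonneg _)
  -- transfer hx to Ω^n
  have hxΩ : ∫ v, (⨆ j, X₂ (v j)) ∂(Measure.pi fun _ : Fin n => P)
      = ∫ v, (⨆ j, X₁ (v j)) ∂(Measure.pi fun _ : Fin n => P) := by
    rw [← integral_sup_map P X₂ hX₂m, ← integral_sup_map P X₁ hX₁]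
    exact hx
  have hint1 : Integrable (fun v : Fin n → Ω => ⨆ j, X₁ (v j)) (Measure.pi fun _ : Fin n => P) :=
    integrable_pi_sup' P X₁ hX₁ hX₁int
  have hint2 : Integrable (fun v : Fin n → Ω => ⨆ j, X₂ (v j)) (Measure.pi fun _ : Fin n => P) :=
    integrable_pi_sup' P X₂ hX₂m hX₂int
  have hPband : P band ≠ 0 := by
    intro h0
    rw [hp, h0] at hppos
    simp at hppos
  have hAnull : (Measure.pi fun _ : Fin n => P) (Set.pi Set.univ fun _ : Fin n => band) ≠ 0 := by
    rw [Measure.pi_pi]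
    simp only [Finset.prod_const, Finset.card_univ, Fintype.card_fin]
    exact pow_ne_zero n hPband
  -- Step B : a ≤ x
  have hax : a ≤ x := by
    by_contra hcon
    push_neg at hcon
    have hle : ∀ ω, X₂ ω ≤ X₁ ω := by
      intro ω
      simp only [hX₂def]
      split_ifs with h
      · linarith [h.1]
      · exact le_rfl
    have hzero : ∫ v, ((⨆ j, X₁ (v j)) - ⨆ j, X₂ (v j)) ∂(Measure.pi fun _ : Fin n => P) = 0 := by
      rw [integral_sub hint1 hint2, hxΩ, sub_self]
    have hnn : ∀ v : Fin n → Ω, 0 ≤ (⨆ j, X₁ (v j)) - ⨆ j, X₂ (v j) := by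
      intro v
      refine sub_nonneg.2 (ciSup_mono (Set.Finite.bddAbove (Set.finite_range _)) fun j => hle (v j))
    have haez := (integral_eq_zero_iff_of_nonneg hnn (hint1.sub hint2)).mp hzero
    have hnull : (Measure.pi fun _ : Fin n => P)
        {v | ¬ ((⨆ j, X₁ (v j)) - (⨆ j, X₂ (v j)) = 0)} = 0 := by
      simpa [ae_iff, Filter.EventuallyEq] using haez
    refine hAnull (measure_mono_null ?_ hnull)
    intro v hv
    simp only [Set.mem_pi, Set.mem_univ, forall_true_left] at hv
    have h2 : ∀ j, X₂ (v j) = x := by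
      intro j
      simp only [hX₂def]
      exact if_pos (hv j)
    have hs2 : (⨆ j, X₂ (v j)) = x := by
      rw [iSup_congr h2]
      exact ciSup_const
    have hs1 : a ≤ ⨆ j, X₁ (v j) := by
      have j0 : Fin n := ⟨0, hn⟩
      exact le_trans (hv j0).1
        (le_ciSup (Set.Finite.bddAbove (Set.finite_range fun j => X₁ (v j))) j0)
    simp only [Set.mem_setOf_eq]
    intro heq
    rw [hs2] at heq
    linarith
  -- Step C : x ≤ b
  have hxb : x ≤ b := by
    by_contra hcon
    push_neg at hcon
    have hle : ∀ ω, X₁ ω ≤ X₂ ω := by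
      intro ω
      simp only [hX₂def]
      split_ifs with h
      · linarith [h.2]
      · exact le_rfl
    have hzero : ∫ v, ((⨆ j, X₂ (v j)) - ⨆ j, X₁ (v j)) ∂(Measure.pi fun _ : Fin n => P) = 0 := by
      rw [integral_sub hint2 hint1, hxΩ, sub_self]
    have hnn : ∀ v : Fin n → Ω, 0 ≤ (⨆ j, X₂ (v j)) - ⨆ j, X₁ (v j) := by
      intro v
      refine sub_nonneg.2 (ciSup_mono (Set.Finite.bddAbove (Set.finite_range _)) fun j => hle (v j))
    have haez := (integral_eq_zero_iff_of_nonneg hnn (hint2.sub hint1)).mp hzero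
    have hnull : (Measure.pi fun _ : Fin n => P)
        {v | ¬ ((⨆ j, X₂ (v j)) - (⨆ j, X₁ (v j)) = 0)} = 0 := by
      simpa [ae_iff, Filter.EventuallyEq] using haez
    refine hAnull (measure_mono_null ?_ hnull)
    intro v hv
    simp only [Set.mem_pi, Set.mem_univ, forall_true_left] at hv
    have h2 : ∀ j, X₂ (v j) = x := by
      intro j
      simp only [hX₂def]
      exact if_pos (hv j)
    have hs2 : (⨆ j, X₂ (v j)) = x := by
      rw [iSup_congr h2]
      exact ciSup_const
    have hs1 : (⨆ j, X₁ (v j)) ≤ b := ciSup_le fun j => (hv j).2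
    simp only [Set.mem_setOf_eq]
    intro heq
    rw [hs2] at heq
    linarith
  have hxnn : 0 ≤ x := le_trans ha hax
  -- Step D : conditional-mean inequality via layer cake
  have hX₂nonneg : ∀ ω, 0 ≤ X₂ ω := by
    intro ω
    simp only [hX₂def]
    split_ifs with h
    · exact hxnn
    · exact hX₁nonneg ω
  haveI hμ₁prob : IsProbabilityMeasure (Measure.map X₁ P) :=
    Measure.isProbabilityMeasure_map hX₁.aemeasurable
  haveI hμ₂prob : IsProbabilityMeasure (Measure.map X₂ P) :=
    Measure.isProbabilityMeasure_map hX₂m.aemeasurable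
  have hid₁ : Integrable id (Measure.map X₁ P) :=
    (integrable_map_measure aestronglyMeasurable_id hX₁.aemeasurable).mpr hX₁int
  have hid₂ : Integrable id (Measure.map X₂ P) :=
    (integrable_map_measure aestronglyMeasurable_id hX₂m.aemeasurable).mpr hX₂int
  have hnn₁ : ∀ᵐ s ∂(Measure.map X₁ P), 0 ≤ s :=
    (ae_map_iff hX₁.aemeasurable measurableSet_Ici).mpr (Filter.Eventually.of_forall hX₁nonneg)
  have hnn₂ : ∀ᵐ s ∂(Measure.map X₂ P), 0 ≤ s :=
    (ae_map_iff hX₂m.aemeasurable measurableSet_Ici).mpr (Filter.Eventually.of_forall hX₂nonneg)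
  have hxL : ∫ t in Set.Ioi (0:ℝ), (1 - (((Measure.map X₂ P) (Set.Iic t)).toReal)^n)
      = ∫ t in Set.Ioi (0:ℝ), (1 - (((Measure.map X₁ P) (Set.Iic t)).toReal)^n) := by
    rw [← integral_sup_layercake _ hid₂ hnn₂, ← integral_sup_layercake _ hid₁ hnn₁]
    exact hx
  -- CDF facts
  have hF₂₁ : ∀ t, t < x →
      ((Measure.map X₂ P) (Set.Iic t)).toReal ≤ ((Measure.map X₁ P) (Set.Iic t)).toReal := by
    intro t ht
    refine ENNReal.toReal_mono (measure_ne_top _ _) ?_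
    rw [Measure.map_apply hX₂m measurableSet_Iic, Measure.map_apply hX₁ measurableSet_Iic]
    refine measure_mono fun ω hω => ?_
    simp only [Set.mem_preimage, Set.mem_Iic, hX₂def] at hω ⊢
    by_cases hb : a ≤ X₁ ω ∧ X₁ ω ≤ b
    · rw [if_pos hb] at hω; linarith
    · rwa [if_neg hb] at hω
  have hF₁₂ : ∀ t, x ≤ t →
      ((Measure.map X₁ P) (Set.Iic t)).toReal ≤ ((Measure.map X₂ P) (Set.Iic t)).toReal := by
    intro t ht
    refine ENNReal.toReal_mono (measure_ne_top _ _) ?_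
    rw [Measure.map_apply hX₂m measurableSet_Iic, Measure.map_apply hX₁ measurableSet_Iic]
    refine measure_mono fun ω hω => ?_
    simp only [Set.mem_preimage, Set.mem_Iic, hX₂def] at hω ⊢
    by_cases hb : a ≤ X₁ ω ∧ X₁ ω ≤ b
    · rw [if_pos hb]; linarith
    · rwa [if_neg hb]
  have hmono₁ : ∀ s t : ℝ, s ≤ t →
      ((Measure.map X₁ P) (Set.Iic s)).toReal ≤ ((Measure.map X₁ P) (Set.Iic t)).toReal :=
    fun s t hst => ENNReal.toReal_mono (measure_ne_top _ _)
      (measure_mono (Set.Iic_subset_Iic.mpr hst))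
  have hmono₂ : ∀ s t : ℝ, s ≤ t →
      ((Measure.map X₂ P) (Set.Iic s)).toReal ≤ ((Measure.map X₂ P) (Set.Iic t)).toReal :=
    fun s t hst => ENNReal.toReal_mono (measure_ne_top _ _)
      (measure_mono (Set.Iic_subset_Iic.mpr hst))
  have hpF₂ : p ≤ ((Measure.map X₂ P) (Set.Iic x)).toReal := by
    rw [hp]
    refine ENNReal.toReal_mono (measure_ne_top _ _) ?_
    rw [Measure.map_apply hX₂m measurableSet_Iic]
    refine measure_mono fun ω hω => ?_
    simp only [Set.mem_preimage, Set.mem_Iic, hX₂def]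
    have hω' : a ≤ X₁ ω ∧ X₁ ω ≤ b := hω
    rw [if_pos hω']
  set S : ℝ := ∑ i ∈ Finset.range n,
      (((Measure.map X₁ P) (Set.Iic x)).toReal)^i
        * (((Measure.map X₂ P) (Set.Iic x)).toReal)^(n-1-i) with hSdef
  have hSpos : 0 < S :=
    lt_of_lt_of_le (pow_pos hppos (n-1)) (key_lower hn hppos.le hpF₂ _ ENNReal.toReal_nonneg)
  have hptwise : ∀ t : ℝ,
      (1 - (((Measure.map X₂ P) (Set.Iic t)).toReal)^n)
        - (1 - (((Measure.map X₁ P) (Set.Iic t)).toReal)^n)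
      ≤ S * ((1 - ((Measure.map X₂ P) (Set.Iic t)).toReal)
        - (1 - ((Measure.map X₁ P) (Set.Iic t)).toReal)) := by
    intro t
    have h1 : (1 - (((Measure.map X₂ P) (Set.Iic t)).toReal)^n)
        - (1 - (((Measure.map X₁ P) (Set.Iic t)).toReal)^n)
        = (((Measure.map X₁ P) (Set.Iic t)).toReal)^n
          - (((Measure.map X₂ P) (Set.Iic t)).toReal)^n := by ring
    have h2 : (1 - ((Measure.map X₂ P) (Set.Iic t)).toReal)
        - (1 - ((Measure.map X₁ P) (Set.Iic t)).toReal)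
        = ((Measure.map X₁ P) (Set.Iic t)).toReal - ((Measure.map X₂ P) (Set.Iic t)).toReal := by
      ring
    rw [h1, h2, hSdef]
    rcases lt_or_ge t x with htx | htx
    · exact key_pointwise ENNReal.toReal_nonneg ENNReal.toReal_nonneg
        ENNReal.toReal_nonneg ENNReal.toReal_nonneg
        (Or.inl ⟨hF₂₁ t htx, hmono₁ t x htx.le, hmono₂ t x htx.le⟩)
    · exact key_pointwise ENNReal.toReal_nonneg ENNReal.toReal_nonneg
        ENNReal.toReal_nonneg ENNReal.toReal_nonneg
        (Or.inr ⟨hF₁₂ t htx, hmono₁ x t htx, hmono₂ x t htx⟩)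
  have hS₁int := pi_surv_integrable (n := n) (Measure.map X₁ P) hid₁ hnn₁
  have hS₂int := pi_surv_integrable (n := n) (Measure.map X₂ P) hid₂ hnn₂
  have hG₁int := id_surv_integrable (Measure.map X₁ P) hid₁ hnn₁
  have hG₂int := id_surv_integrable (Measure.map X₂ P) hid₂ hnn₂
  have hmono_int : ∫ t in Set.Ioi (0:ℝ),
        ((1 - (((Measure.map X₂ P) (Set.Iic t)).toReal)^n)
          - (1 - (((Measure.map X₁ P) (Set.Iic t)).toReal)^n))
      ≤ ∫ t in Set.Ioi (0:ℝ), S * ((1 - ((Measure.map X₂ P) (Set.Iic t)).toReal)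
          - (1 - ((Measure.map X₁ P) (Set.Iic t)).toReal)) :=
    integral_mono (hS₂int.sub hS₁int) ((hG₂int.sub hG₁int).const_mul S) hptwise
  have hLHS : ∫ t in Set.Ioi (0:ℝ),
      ((1 - (((Measure.map X₂ P) (Set.Iic t)).toReal)^n)
        - (1 - (((Measure.map X₁ P) (Set.Iic t)).toReal)^n)) = 0 := by
    rw [integral_sub hS₂int hS₁int, hxL, sub_self]
  have hRHS : ∫ t in Set.Ioi (0:ℝ), S * ((1 - ((Measure.map X₂ P) (Set.Iic t)).toReal)
        - (1 - ((Measure.map X₁ P) (Set.Iic t)).toReal))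
      = S * ((∫ t in Set.Ioi (0:ℝ), (1 - ((Measure.map X₂ P) (Set.Iic t)).toReal))
        - ∫ t in Set.Ioi (0:ℝ), (1 - ((Measure.map X₁ P) (Set.Iic t)).toReal)) := by
    rw [MeasureTheory.integral_const_mul, integral_sub hG₂int hG₁int]
  have hGle : (∫ t in Set.Ioi (0:ℝ), (1 - ((Measure.map X₁ P) (Set.Iic t)).toReal))
      ≤ ∫ t in Set.Ioi (0:ℝ), (1 - ((Measure.map X₂ P) (Set.Iic t)).toReal) := by
    rw [hLHS, hRHS] at hmono_int
    nlinarith [hmono_int, hSpos]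
  have hEX : ∫ ω, X₁ ω ∂P ≤ ∫ ω, X₂ ω ∂P := by
    have e₁ : ∫ ω, X₁ ω ∂P = ∫ s, s ∂(Measure.map X₁ P) :=
      (integral_map hX₁.aemeasurable aestronglyMeasurable_id).symm
    have e₂ : ∫ ω, X₂ ω ∂P = ∫ s, s ∂(Measure.map X₂ P) :=
      (integral_map hX₂m.aemeasurable aestronglyMeasurable_id).symm
    rw [e₁, e₂, integral_id_layercake _ hid₁ hnn₁, integral_id_layercake _ hid₂ hnn₂]
    exact hGle
  -- band arithmetic
  have hX₂band : ∫ ω in band, X₂ ω ∂P = p * x := by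
    have hcg : ∫ ω in band, X₂ ω ∂P = ∫ _ω in band, x ∂P := by
      refine setIntegral_congr_fun hbandm fun ω hω => ?_
      simp only [hX₂def]
      have hω' : a ≤ X₁ ω ∧ X₁ ω ≤ b := hω
      rw [if_pos hω']
    rw [hcg, setIntegral_const, hp, smul_eq_mul, measureReal_def]
  have hX₂bandc : ∫ ω in bandᶜ, X₂ ω ∂P = ∫ ω in bandᶜ, X₁ ω ∂P := by
    refine setIntegral_congr_fun hbandm.compl fun ω hω => ?_
    simp only [hX₂def]
    have hω' : ¬(a ≤ X₁ ω ∧ X₁ ω ≤ b) := hω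
    rw [if_neg hω']
  have hkey : ∫ ω in band, X₁ ω ∂P ≤ p * x := by
    have hsplit₁ : (∫ ω in band, X₁ ω ∂P) + (∫ ω in bandᶜ, X₁ ω ∂P) = ∫ ω, X₁ ω ∂P :=
      integral_add_compl hbandm hX₁int
    have hsplit₂ : (∫ ω in band, X₂ ω ∂P) + (∫ ω in bandᶜ, X₂ ω ∂P) = ∫ ω, X₂ ω ∂P :=
      integral_add_compl hbandm hX₂int
    rw [hX₂band, hX₂bandc] at hsplit₂
    linarith [hEX]
  have hdiv : (∫ ω in band, X₁ ω ∂P) / p ≤ x := by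
    rw [div_le_iff₀ hppos]
    linarith [hkey]
  refine ⟨hax, hxb, hdiv, ?_⟩
  show ∫ ω, max (X₁ ω) (Y ω) ∂P ≤ ∫ ω, max (X₂ ω) (Y ω) ∂P
  have hmax₁int : Integrable (fun ω => max (X₁ ω) (Y ω)) P := by
    refine (hX₁int.abs.add hYint.abs).mono' (hX₁.max hY).aestronglyMeasurable ?_
    filter_upwards with ω
    refine le_trans (abs_max_le_max_abs_abs) ?_
    exact max_le (le_add_of_nonneg_right (abs_nonneg _)) (le_add_of_nonneg_left (abs_nonneg _))
  have hmax₂int : Integrable (fun ω => max (X₂ ω) (Y ω)) P := by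
    refine (hX₂int.abs.add hYint.abs).mono' (hX₂m.max hY).aestronglyMeasurable ?_
    filter_upwards with ω
    refine le_trans (abs_max_le_max_abs_abs) ?_
    exact max_le (le_add_of_nonneg_right (abs_nonneg _)) (le_add_of_nonneg_left (abs_nonneg _))
  set f : ℝ → ℝ := fun u => if a ≤ u ∧ u ≤ b then x - u else 0 with hfdef
  set g : ℝ → ℝ := fun v => if v ≤ a then (1:ℝ) else 0 with hgdef
  have hfm : Measurable f :=
    Measurable.ite ((measurableSet_le measurable_const measurable_id).inter
      (measurableSet_le measurable_id measurable_const))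
      (measurable_const.sub measurable_id) measurable_const
  have hgm : Measurable g :=
    Measurable.ite (measurableSet_le measurable_id measurable_const)
      measurable_const measurable_const
  have hae : ∀ᵐ ω ∂P, max (X₂ ω) (Y ω) - max (X₁ ω) (Y ω) = f (X₁ ω) * g (Y ω) := by
    have hY' : ∀ᵐ ω ∂P, ¬(a < Y ω ∧ Y ω < b) := by
      rw [ae_iff]
      simpa using hYgap
    filter_upwards [hY'] with ω hω
    simp only [hX₂def, hfdef, hgdef]
    by_cases hb : a ≤ X₁ ω ∧ X₁ ω ≤ b
    · rw [if_pos hb, if_pos hb]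
      by_cases hYa : Y ω ≤ a
      · rw [if_pos hYa, max_eq_left (le_trans hYa hax), max_eq_left (le_trans hYa hb.1)]
        ring
      · rw [if_neg hYa]
        push_neg at hω hYa
        have hbY : b ≤ Y ω := hω hYa
        rw [max_eq_right (le_trans hxb hbY), max_eq_right (le_trans hb.2 hbY)]
        ring
    · rw [if_neg hb, if_neg hb]
      ring
  have hf1int : Integrable (fun ω => f (X₁ ω)) P := by
    refine ((integrable_const |x|).add hX₁int.abs).mono'
      (hfm.comp hX₁).aestronglyMeasurable ?_
    filter_upwards with ω
    simp only [hfdef]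
    split_ifs with h
    · have h1 := abs_add_le x (-(X₁ ω))
      simp only [abs_neg, ← sub_eq_add_neg] at h1
      simpa using h1
    · simp [abs_nonneg]
      positivity
  have hg1int : Integrable (fun ω => g (Y ω)) P := by
    refine (integrable_const (1:ℝ)).mono' (hgm.comp hY).aestronglyMeasurable ?_
    filter_upwards with ω
    simp only [hgdef]
    split_ifs <;> simp
  have hindep2 : IndepFun (fun ω => f (X₁ ω)) (fun ω => g (Y ω)) P := hindep.comp hfm hgm
  have hprod : ∫ ω, f (X₁ ω) * g (Y ω) ∂P = (∫ ω, f (X₁ ω) ∂P) * ∫ ω, g (Y ω) ∂P :=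
    hindep2.integral_mul_eq_mul_integral hf1int.aestronglyMeasurable hg1int.aestronglyMeasurable
  have hfsplit : ∫ ω, f (X₁ ω) ∂P = (∫ ω in band, f (X₁ ω) ∂P) + ∫ ω in bandᶜ, f (X₁ ω) ∂P :=
    (integral_add_compl hbandm (hf1int)).symm
  have hfc : ∫ ω in bandᶜ, f (X₁ ω) ∂P = 0 := by
    have hcg : ∫ ω in bandᶜ, f (X₁ ω) ∂P = ∫ _ω in bandᶜ, (0:ℝ) ∂P := by
      refine setIntegral_congr_fun hbandm.compl fun ω hω => ?_
      simp only [hfdef]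
      have hω' : ¬(a ≤ X₁ ω ∧ X₁ ω ≤ b) := hω
      rw [if_neg hω']
    rw [hcg, integral_const]
    simp
  have hfb : ∫ ω in band, f (X₁ ω) ∂P = p * x - ∫ ω in band, X₁ ω ∂P := by
    have hcg : ∫ ω in band, f (X₁ ω) ∂P = ∫ ω in band, (x - X₁ ω) ∂P := by
      refine setIntegral_congr_fun hbandm fun ω hω => ?_
      simp only [hfdef]
      have hω' : a ≤ X₁ ω ∧ X₁ ω ≤ b := hω
      rw [if_pos hω']
    rw [hcg, integral_sub (integrableOn_const (C := x) (measure_lt_top P band).ne)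
      hX₁int.integrableOn, setIntegral_const, hp, smul_eq_mul, measureReal_def]
  have hfpos : 0 ≤ ∫ ω, f (X₁ ω) ∂P := by
    rw [hfsplit, hfc, hfb]
    linarith [hkey]
  have hgpos : 0 ≤ ∫ ω, g (Y ω) ∂P := by
    refine integral_nonneg fun ω => ?_
    simp only [hgdef]
    split_ifs <;> norm_num
  have hdiff : ∫ ω, (max (X₂ ω) (Y ω) - max (X₁ ω) (Y ω)) ∂P
      = (∫ ω, f (X₁ ω) ∂P) * ∫ ω, g (Y ω) ∂P := by
    rw [integral_congr_ae hae]
    exact hprod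
  rw [integral_sub hmax₂int hmax₁int] at hdiff
  nlinarith [mul_nonneg hfpos hgpos, hdiff]
end

section
/- Let Y be a nonnegative random variable with distribution function G, and h a differentiable real function. Then γ(u) = E[max(h(u), Y)] has right derivative γ'₊(u) = h'(u)·G(h(u)) when h'(u) ≥ 0 and γ'₊(u) = h'(u)·G⁻(h(u)) when h'(u) < 0, where G⁻ denotes the left limit of G. -/
open MeasureTheory Filter Topology Asymptotics

private lemma int_max {Ω : Type*} [MeasurableSpace Ω] (P : Measure Ω) [IsProbabilityMeasure P]
    (Y : Ω → ℝ) (hYint : Integrable Y P) (t : ℝ) :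
    Integrable (fun ω => max t (Y ω)) P := by
  simpa [Pi.sup_def, max_comm] using hYint.sup (integrable_const t)

private lemma phi_right {Ω : Type*} [MeasurableSpace Ω] (P : Measure Ω) [IsProbabilityMeasure P]
    (Y : Ω → ℝ) (hYmeas : Measurable Y) (hYint : Integrable Y P) (x : ℝ) :
    HasDerivWithinAt (fun t => ∫ ω, max t (Y ω) ∂P) (P {ω | Y ω ≤ x}).toReal
      (Set.Ici x) x := by
  have hint := int_max P Y hYint
  have hset : MeasurableSet {ω | Y ω ≤ x} := hYmeas measurableSet_Iic
  rw [hasDerivWithinAt_iff_tendsto_slope]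
  have hL : (P {ω | Y ω ≤ x}).toReal
      = ∫ ω, Set.indicator {ω | Y ω ≤ x} (1 : Ω → ℝ) ω ∂P :=
    (integral_indicator_one hset).symm
  rw [hL]
  have key : Tendsto (fun t => ∫ ω, (max t (Y ω) - max x (Y ω)) / (t - x) ∂P)
      (𝓝[Set.Ici x \ {x}] x)
      (𝓝 (∫ ω, Set.indicator {ω | Y ω ≤ x} (1 : Ω → ℝ) ω ∂P)) := by
    apply tendsto_integral_filter_of_dominated_convergence (fun _ => (1:ℝ))
    · exact Eventually.of_forall fun t =>
        (((measurable_const.max hYmeas).sub (measurable_const.max hYmeas)).div_const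
          _).aestronglyMeasurable
    · refine Eventually.of_forall fun t => Eventually.of_forall fun ω => ?_
      rw [Real.norm_eq_abs, abs_div]
      rcases eq_or_ne t x with rfl | htx
      · simp
      · rw [div_le_one (abs_pos.2 (sub_ne_zero.2 htx))]
        exact abs_max_sub_max_le_abs _ _ _
    · exact integrable_const 1
    · refine Eventually.of_forall fun ω => ?_
      by_cases hY : Y ω ≤ x
      · have heq : ∀ t ∈ Set.Ici x \ {x}, (1:ℝ) = (max t (Y ω) - max x (Y ω)) / (t - x) := by
          intro t ht
          have hxt : x < t := lt_of_le_of_ne ht.1 (Ne.symm ht.2)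
          rw [max_eq_left (hY.trans hxt.le), max_eq_left hY,
            div_self (sub_ne_zero.2 (ne_of_gt hxt))]
        have hfω : Set.indicator {ω | Y ω ≤ x} (1 : Ω → ℝ) ω = 1 := by
          simp [Set.indicator_apply, hY]
        rw [hfω]
        exact tendsto_const_nhds.congr' (eventually_mem_nhdsWithin.mono heq)
      · have hfω : Set.indicator {ω | Y ω ≤ x} (1 : Ω → ℝ) ω = 0 := by
          simp [Set.indicator_apply, hY]
        rw [hfω]
        have hYx : x < Y ω := lt_of_not_ge hY
        have hev : ∀ᶠ t in 𝓝[Set.Ici x \ {x}] x,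
            (0:ℝ) = (max t (Y ω) - max x (Y ω)) / (t - x) := by
          filter_upwards [(gt_mem_nhds hYx).filter_mono nhdsWithin_le_nhds] with t ht
          rw [max_eq_right ht.le, max_eq_right hYx.le, sub_self, zero_div]
        exact tendsto_const_nhds.congr' hev
  refine key.congr fun t => ?_
  rw [slope_def_field, integral_div, integral_sub (hint t) (hint x)]

private lemma phi_left {Ω : Type*} [MeasurableSpace Ω] (P : Measure Ω) [IsProbabilityMeasure P]
    (Y : Ω → ℝ) (hYmeas : Measurable Y) (hYint : Integrable Y P) (x : ℝ) :
    HasDerivWithinAt (fun t => ∫ ω, max t (Y ω) ∂P) (P {ω | Y ω < x}).toReal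
      (Set.Iic x) x := by
  have hint := int_max P Y hYint
  have hset : MeasurableSet {ω | Y ω < x} := hYmeas measurableSet_Iio
  rw [hasDerivWithinAt_iff_tendsto_slope]
  have hL : (P {ω | Y ω < x}).toReal
      = ∫ ω, Set.indicator {ω | Y ω < x} (1 : Ω → ℝ) ω ∂P :=
    (integral_indicator_one hset).symm
  rw [hL]
  have key : Tendsto (fun t => ∫ ω, (max t (Y ω) - max x (Y ω)) / (t - x) ∂P)
      (𝓝[Set.Iic x \ {x}] x)
      (𝓝 (∫ ω, Set.indicator {ω | Y ω < x} (1 : Ω → ℝ) ω ∂P)) := by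
    apply tendsto_integral_filter_of_dominated_convergence (fun _ => (1:ℝ))
    · exact Eventually.of_forall fun t =>
        (((measurable_const.max hYmeas).sub (measurable_const.max hYmeas)).div_const
          _).aestronglyMeasurable
    · refine Eventually.of_forall fun t => Eventually.of_forall fun ω => ?_
      rw [Real.norm_eq_abs, abs_div]
      rcases eq_or_ne t x with rfl | htx
      · simp
      · rw [div_le_one (abs_pos.2 (sub_ne_zero.2 htx))]
        exact abs_max_sub_max_le_abs _ _ _
    · exact integrable_const 1
    · refine Eventually.of_forall fun ω => ?_
      by_cases hY : Y ω < x
      · have hfω : Set.indicator {ω | Y ω < x} (1 : Ω → ℝ) ω = 1 := by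
          simp [Set.indicator_apply, hY]
        rw [hfω]
        have hev : ∀ᶠ t in 𝓝[Set.Iic x \ {x}] x,
            (1:ℝ) = (max t (Y ω) - max x (Y ω)) / (t - x) := by
          filter_upwards [(lt_mem_nhds hY).filter_mono nhdsWithin_le_nhds,
            eventually_mem_nhdsWithin] with t ht hts
          have htx : t < x := lt_of_le_of_ne hts.1 hts.2
          rw [max_eq_left ht.le, max_eq_left (hY.le.trans le_rfl),
            div_self (sub_ne_zero.2 (ne_of_lt htx))]
        exact tendsto_const_nhds.congr' hev
      · have hfω : Set.indicator {ω | Y ω < x} (1 : Ω → ℝ) ω = 0 := by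
          simp [Set.indicator_apply, hY]
        rw [hfω]
        have hYx : x ≤ Y ω := le_of_not_gt hY
        have heq : ∀ t ∈ Set.Iic x \ {x}, (0:ℝ) = (max t (Y ω) - max x (Y ω)) / (t - x) := by
          intro t ht
          have htx : t < x := lt_of_le_of_ne ht.1 ht.2
          rw [max_eq_right (htx.le.trans hYx), max_eq_right hYx, sub_self, zero_div]
        exact tendsto_const_nhds.congr' (eventually_mem_nhdsWithin.mono heq)
  refine key.congr fun t => ?_
  rw [slope_def_field, integral_div, integral_sub (hint t) (hint x)]

theorem stmt_17 {Ω : Type*} [MeasurableSpace Ω] (P : Measure Ω) [IsProbabilityMeasure P]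
    (Y : Ω → ℝ) (hYmeas : Measurable Y) (hYnonneg : ∀ ω, 0 ≤ Y ω)
    (hYint : Integrable Y P)
    (h : ℝ → ℝ) (hh : Differentiable ℝ h) (u : ℝ) :
    (0 ≤ deriv h u →
        HasDerivWithinAt (fun t => ∫ ω, max (h t) (Y ω) ∂P)
          (deriv h u * (P {ω | Y ω ≤ h u}).toReal) (Set.Ici u) u) ∧
      (deriv h u < 0 →
        HasDerivWithinAt (fun t => ∫ ω, max (h t) (Y ω) ∂P)
          (deriv h u * (P {ω | Y ω < h u}).toReal) (Set.Ici u) u) := by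
  have hint := int_max P Y hYint
  have hdu : HasDerivAt h (deriv h u) u := (hh u).hasDerivAt
  have hslope : Tendsto (slope h u) (𝓝[≠] u) (𝓝 (deriv h u)) :=
    hasDerivAt_iff_tendsto_slope.1 hdu
  constructor
  · intro hpos
    rcases eq_or_lt_of_le hpos with heq | hlt
    · -- deriv h u = 0
      rw [← heq, zero_mul]
      rw [hasDerivWithinAt_iff_isLittleO]
      have hlittle : (fun t => h t - h u) =o[𝓝[Set.Ici u] u] fun t => t - u := by
        have := (hasDerivWithinAt_iff_isLittleO.1 (hdu.hasDerivWithinAt (s := Set.Ici u)))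
        rw [← heq] at this
        simpa using this
      have hbig : (fun t => (∫ ω, max (h t) (Y ω) ∂P) - ∫ ω, max (h u) (Y ω) ∂P)
          =O[𝓝[Set.Ici u] u] fun t => h t - h u := by
        refine IsBigO.of_bound 1 (Eventually.of_forall fun t => ?_)
        rw [one_mul, Real.norm_eq_abs, Real.norm_eq_abs,
          ← integral_sub (hint (h t)) (hint (h u))]
        calc |∫ ω, (max (h t) (Y ω) - max (h u) (Y ω)) ∂P|
            ≤ ∫ ω, |max (h t) (Y ω) - max (h u) (Y ω)| ∂P := by
              simpa [Real.norm_eq_abs] using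
                norm_integral_le_integral_norm (fun ω => max (h t) (Y ω) - max (h u) (Y ω))
          _ ≤ ∫ _ω, |h t - h u| ∂P := by
              refine integral_mono (((hint (h t)).sub (hint (h u))).abs)
                (integrable_const _) fun ω => abs_max_sub_max_le_abs _ _ _
          _ = |h t - h u| := by simp
      simpa using hbig.trans_isLittleO hlittle
    · -- deriv h u > 0
      have hev : ∀ᶠ t in 𝓝 u, t ∈ ({u}ᶜ : Set ℝ) → 0 < slope h u t := by
        have h1 : ∀ᶠ t in 𝓝[≠] u, 0 < slope h u t := hslope.eventually (eventually_gt_nhds hlt)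
        rwa [eventually_nhdsWithin_iff] at h1
      obtain ⟨s, hs, hsub⟩ := hev.exists_mem
      have hmaps : Set.MapsTo h (Set.Ici u ∩ s) (Set.Ici (h u)) := by
        rintro t ⟨ht1, ht2⟩
        rcases eq_or_lt_of_le (Set.mem_Ici.1 ht1) with rfl | hlt'
        · exact Set.self_mem_Ici
        · have h0 : 0 < (h t - h u) / (t - u) := by
            have := hsub t ht2 (Set.mem_compl_singleton_iff.2 (ne_of_gt hlt'))
            rwa [slope_def_field] at this
          have hpos' : 0 < t - u := sub_pos.2 hlt'
          have := mul_pos h0 hpos'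
          rw [div_mul_cancel₀ _ (ne_of_gt hpos')] at this
          exact (sub_pos.1 this).le
      have hcomp := (phi_right P Y hYmeas hYint (h u)).comp u
        (hdu.hasDerivWithinAt (s := Set.Ici u ∩ s)) hmaps
      have := (hasDerivWithinAt_inter hs).1 hcomp
      rw [mul_comm] at this
      exact this
  · intro hneg
    have hev : ∀ᶠ t in 𝓝 u, t ∈ ({u}ᶜ : Set ℝ) → slope h u t < 0 := by
      have h1 : ∀ᶠ t in 𝓝[≠] u, slope h u t < 0 := hslope.eventually (eventually_lt_nhds hneg)
      rwa [eventually_nhdsWithin_iff] at h1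
    obtain ⟨s, hs, hsub⟩ := hev.exists_mem
    have hmaps : Set.MapsTo h (Set.Ici u ∩ s) (Set.Iic (h u)) := by
      rintro t ⟨ht1, ht2⟩
      rcases eq_or_lt_of_le (Set.mem_Ici.1 ht1) with rfl | hlt'
      · exact Set.self_mem_Iic
      · have h0 : (h t - h u) / (t - u) < 0 := by
          have := hsub t ht2 (Set.mem_compl_singleton_iff.2 (ne_of_gt hlt'))
          rwa [slope_def_field] at this
        have hpos' : 0 < t - u := sub_pos.2 hlt'
        have := mul_neg_of_neg_of_pos h0 hpos'
        rw [div_mul_cancel₀ _ (ne_of_gt hpos')] at this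
        exact (sub_neg.1 this).le
    have hcomp := (phi_left P Y hYmeas hYint (h u)).comp u
      (hdu.hasDerivWithinAt (s := Set.Ici u ∩ s)) hmaps
    have := (hasDerivWithinAt_inter hs).1 hcomp
    rw [mul_comm] at this
    exact this
end

section
/- Let 0 ≤ M_i ≤ b for i = 1,...,n and define p_i = (1 − M_i/b)^{1/n}, and let Y_1,...,Y_n be independent with P(Y_i = 0) = p_i, P(Y_i = b) = 1 − p_i. Then E[max of n i.i.d. copies of Y_i] = M_i for each i, and E[max(Y_1,...,Y_n)] = b·(1 − ∏_{i=1}^n p_i) = b − ∏_{i=1}^n (b − M_i)^{1/n}. -/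
open MeasureTheory ProbabilityTheory
open scoped ENNReal

-- the two-point measure
noncomputable def tp (b q : ℝ) : Measure ℝ :=
  ENNReal.ofReal q • Measure.dirac 0 + ENNReal.ofReal (1 - q) • Measure.dirac b

lemma tp_prob (b : ℝ) {q : ℝ} (hq : q ∈ Set.Icc (0:ℝ) 1) :
    IsProbabilityMeasure (tp b q) := by
  constructor
  simp only [tp, Measure.add_apply, Measure.smul_apply, measure_univ, smul_eq_mul, mul_one]
  rw [← ENNReal.ofReal_add hq.1 (by linarith [hq.2]), add_sub_cancel, ENNReal.ofReal_one]

lemma tp_zero (b : ℝ) (hb : 0 < b) (q : ℝ) : tp b q {0} = ENNReal.ofReal q := by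
  simp only [tp, Measure.add_apply, Measure.smul_apply, smul_eq_mul]
  rw [Measure.dirac_apply' _ (measurableSet_singleton 0),
    Measure.dirac_apply' _ (measurableSet_singleton 0)]
  simp [hb.ne']

lemma key_s18 (n : ℕ) (hn : 0 < n) (b : ℝ) (hb : 0 < b) (q : Fin n → ℝ)
    (hq : ∀ i, q i ∈ Set.Icc (0:ℝ) 1) :
    ∫ v, (⨆ j, v j) ∂(Measure.pi fun i => tp b (q i)) = b * (1 - ∏ i, q i) := by
  haveI : ∀ i, IsProbabilityMeasure (tp b (q i)) := fun i => tp_prob b (hq i)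
  set π := Measure.pi fun i => tp b (q i) with hπ
  haveI : IsProbabilityMeasure π := by rw [hπ]; infer_instance
  have hFin : Nonempty (Fin n) := ⟨⟨0, hn⟩⟩
  have hob : MeasurableSet ({0, b} : Set ℝ) := (measurableSet_singleton b).insert 0
  set B : Set (Fin n → ℝ) := Set.pi Set.univ (fun _ => ({0} : Set ℝ)) with hB
  set S : Set (Fin n → ℝ) := Set.pi Set.univ (fun _ => ({0, b} : Set ℝ)) with hS
  have hBmeas : MeasurableSet B := MeasurableSet.univ_pi fun _ => measurableSet_singleton 0
  have hSmeas : MeasurableSet S := MeasurableSet.univ_pi fun _ =>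
    hob
  have hπB : π B = ENNReal.ofReal (∏ i, q i) := by
    rw [hπ, Measure.pi_pi]
    rw [ENNReal.ofReal_prod_of_nonneg (fun i _ => (hq i).1)]
    exact Finset.prod_congr rfl fun i _ => tp_zero b hb (q i)
  have hπS : π S = 1 := by
    rw [hπ, Measure.pi_pi]
    have : ∀ i, tp b (q i) ({0, b} : Set ℝ) = 1 := by
      intro i
      have h1 : tp b (q i) Set.univ = 1 := measure_univ
      refine le_antisymm (le_trans (measure_mono (Set.subset_univ _)) h1.le) ?_
      calc (1 : ℝ≥0∞) = tp b (q i) ({0, b} : Set ℝ) + tp b (q i) ({0, b}ᶜ : Set ℝ) := by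
            rw [measure_add_measure_compl hob]
            exact h1.symm
        _ ≤ tp b (q i) ({0, b} : Set ℝ) + 0 := by
            gcongr
            simp only [tp, Measure.add_apply, Measure.smul_apply, smul_eq_mul]
            rw [Measure.dirac_apply' _ hob.compl,
              Measure.dirac_apply' _ hob.compl]
            simp
        _ = tp b (q i) ({0, b} : Set ℝ) := add_zero _
    rw [Finset.prod_congr rfl fun i _ => this i]
    simp
  have hae : (fun v => ⨆ j, v j) =ᵐ[π] Set.indicator Bᶜ (fun _ => b) := by
    have hmem : ∀ᵐ v ∂π, v ∈ S := by
      rw [MeasureTheory.ae_iff]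
      have : {v : Fin n → ℝ | ¬ v ∈ S} = Sᶜ := rfl
      rw [this, measure_compl hSmeas (measure_ne_top _ _), hπS, measure_univ, tsub_self]
    filter_upwards [hmem] with v hv
    have hvj : ∀ j, v j = 0 ∨ v j = b := by
      intro j
      have := hv j (Set.mem_univ j)
      simpa using this
    by_cases hvB : v ∈ B
    · have : ∀ j, v j = 0 := fun j => hvB j (Set.mem_univ j)
      simp only [Set.indicator_of_notMem (by simpa using hvB : ¬ v ∈ Bᶜ)]
      simp only [this]
      exact ciSup_const
    · obtain ⟨j0, hj0⟩ : ∃ j0, v j0 = b := by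
        by_contra h
        push_neg at h
        exact hvB fun j _ => (hvj j).resolve_right (h j)
      rw [Set.indicator_of_mem (by simpa using hvB) (fun _ => b)]
      refine le_antisymm (ciSup_le fun j => ?_) ?_
      · rcases hvj j with h | h
        · rw [h]; exact hb.le
        · rw [h]
      · rw [← hj0]
        exact le_ciSup (Set.Finite.bddAbove (Set.finite_range v)) j0
  rw [integral_congr_ae hae, integral_indicator_const _ hBmeas.compl,
    measureReal_def, measure_compl hBmeas (measure_ne_top _ _), measure_univ, hπB]
  have hprod0 : 0 ≤ ∏ i, q i := Finset.prod_nonneg fun i _ => (hq i).1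
  have hprod1 : ∏ i, q i ≤ 1 := Finset.prod_le_one (fun i _ => (hq i).1) (fun i _ => (hq i).2)
  rw [ENNReal.toReal_sub_of_le (by simpa using hprod1) (by simp), ENNReal.toReal_one,
    ENNReal.toReal_ofReal hprod0, smul_eq_mul, mul_comm]

theorem stmt_18 {Ω : Type*} [MeasurableSpace Ω] (P : Measure Ω) [IsProbabilityMeasure P]
    (n : ℕ) (hn : 0 < n) (b : ℝ) (hb : 0 < b)
    (M : Fin n → ℝ) (hM : ∀ i, M i ∈ Set.Icc (0 : ℝ) b)
    (p : Fin n → ℝ) (hp : ∀ i, p i = (1 - M i / b) ^ ((n : ℝ)⁻¹))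
    (Y : Fin n → Ω → ℝ) (hmeas : ∀ i, Measurable (Y i))
    (hlaw : ∀ i, Measure.map (Y i) P =
      ENNReal.ofReal (p i) • Measure.dirac 0 +
        ENNReal.ofReal (1 - p i) • Measure.dirac b)
    (hindep : iIndepFun Y P) :
    (∀ i, ∫ v, (⨆ j, v j)
        ∂(Measure.pi fun _ : Fin n => Measure.map (Y i) P) = M i) ∧
      ∫ ω, ⨆ i, Y i ω ∂P = b * (1 - ∏ i, p i) ∧
      b * (1 - ∏ i, p i) = b - ∏ i, (b - M i) ^ ((n : ℝ)⁻¹) := by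
  have hlaw' : ∀ i, Measure.map (Y i) P = tp b (p i) := hlaw
  have hsub : ∀ i, 1 - M i / b ∈ Set.Icc (0:ℝ) 1 := by
    intro i
    obtain ⟨h0, h1⟩ := hM i
    constructor
    · have : M i / b ≤ 1 := (div_le_one hb).mpr h1
      linarith
    · have : 0 ≤ M i / b := div_nonneg h0 hb.le
      linarith
  have hpIcc : ∀ i, p i ∈ Set.Icc (0:ℝ) 1 := by
    intro i
    rw [hp i]
    exact ⟨Real.rpow_nonneg (hsub i).1 _,
      Real.rpow_le_one (hsub i).1 (hsub i).2 (by positivity)⟩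
  have hpn : ∀ i, p i ^ n = 1 - M i / b := by
    intro i
    rw [hp i]
    exact Real.rpow_inv_natCast_pow (hsub i).1 hn.ne'
  refine ⟨?_, ?_, ?_⟩
  · intro i
    simp only [hlaw' i]
    rw [key_s18 n hn b hb (fun _ => p i) (fun _ => hpIcc i)]
    rw [Finset.prod_const, Finset.card_univ, Fintype.card_fin, hpn i]
    field_simp
    ring
  · have hmapY : ∀ i, Measurable (fun ω => Y i ω) := hmeas
    haveI : ∀ i, IsProbabilityMeasure (Measure.map (Y i) P) := by
      intro i; rw [hlaw' i]; exact tp_prob b (hpIcc i)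
    have hvec : Measurable (fun ω => fun i => Y i ω) :=
      measurable_pi_lambda _ hmeas
    have hmap : Measure.pi (fun i => Measure.map (Y i) P) =
        Measure.map (fun ω => fun i => Y i ω) P := by
      refine Measure.pi_eq fun s hs => ?_
      rw [Measure.map_apply hvec (MeasurableSet.univ_pi hs)]
      have hpre : (fun ω => fun i => Y i ω) ⁻¹' Set.pi Set.univ s
          = ⋂ i ∈ Finset.univ, Y i ⁻¹' s i := by
        ext ω; simp [Set.mem_pi]
      rw [hpre, hindep.measure_inter_preimage_eq_mul Finset.univ (fun i _ => hs i)]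
      exact Finset.prod_congr rfl fun i _ =>
        (Measure.map_apply (hmeas i) (hs i)).symm
    have hf : Measurable (fun v : Fin n → ℝ => ⨆ j, v j) :=
      Measurable.iSup fun j => measurable_pi_apply j
    have := integral_map (μ := P) (f := fun v : Fin n → ℝ => ⨆ j, v j)
      hvec.aemeasurable hf.aestronglyMeasurable
    rw [← this, ← hmap]
    have : (Measure.pi fun i => Measure.map (Y i) P) =
        Measure.pi fun i => tp b (p i) := by
      congr 1; ext i : 1; exact hlaw' i
    rw [this, key_s18 n hn b hb p hpIcc]
  · have hbM : ∀ i, (0:ℝ) ≤ b - M i := fun i => by linarith [(hM i).2]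
    have hpeq : ∀ i, p i = (b - M i) ^ ((n:ℝ)⁻¹) / b ^ ((n:ℝ)⁻¹) := by
      intro i
      rw [hp i]
      have : 1 - M i / b = (b - M i) / b := by field_simp
      rw [this, Real.div_rpow (hbM i) hb.le]
    have hprod : b * ∏ i, p i = ∏ i, (b - M i) ^ ((n:ℝ)⁻¹) := by
      rw [Finset.prod_congr rfl fun i _ => hpeq i, Finset.prod_div_distrib,
        Finset.prod_const, Finset.card_univ, Fintype.card_fin,
        Real.rpow_inv_natCast_pow hb.le hn.ne']
      field_simp
    rw [mul_sub, mul_one, hprod]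
end
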